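/- arXiv:2106.03531 — 6 statements merged into one kernel-verified Lean document; each statement's English description precedes it below -/
import Mathlib

section
/- If a graph G is interval colorable, then its chromatic index equals its maximum degree, i.e., χ'(G) = Δ(G). -/
open SimpleGraph

variable {V : Type*}

/-- A proper edge coloring: distinct edges sharing a vertex get distinct colors. -/
def IsProperEdgeColoring (G : SimpleGraph V) (c : Sym2 V → ℕ) : Prop :=
  ∀ e₁ ∈ G.edgeSet, ∀ e₂ ∈ G.edgeSet, e₁ ≠ e₂ → (∃ v, v ∈ e₁ ∧ v ∈ e₂) → c e₁ ≠ c e₂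

/-- The set of colors appearing on edges incident to `v`. -/
def colorsAt (G : SimpleGraph V) (c : Sym2 V → ℕ) (v : V) : Set ℕ :=
  {n | ∃ e ∈ G.edgeSet, v ∈ e ∧ c e = n}

/-- An interval coloring: a proper edge coloring with positive integer colors such that
the set of colors at each vertex is an interval of integers. -/
def IsIntervalColoring (G : SimpleGraph V) (c : Sym2 V → ℕ) : Prop :=
  IsProperEdgeColoring G c ∧ (∀ e ∈ G.edgeSet, 1 ≤ c e) ∧
    ∀ v, ∀ a ∈ colorsAt G c v, ∀ b ∈ colorsAt G c v, ∀ k, a ≤ k → k ≤ b →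
      k ∈ colorsAt G c v

def IntervalColorable (G : SimpleGraph V) : Prop :=
  ∃ c, IsIntervalColoring G c

/-- The chromatic index: least `t` admitting a proper edge coloring with colors in `{1,…,t}`. -/
noncomputable def chromIndex (G : SimpleGraph V) : ℕ :=
  sInf {t | ∃ c, IsProperEdgeColoring G c ∧ ∀ e ∈ G.edgeSet, c e ∈ Finset.Icc 1 t}

/-- A decomposition of `G` into `k` edge-disjoint interval colorable subgraphs. -/
def IntervalDecomposition (G : SimpleGraph V) (k : ℕ) : Prop :=
  ∃ H : Fin k → SimpleGraph V, (∀ i, H i ≤ G) ∧ (∀ i, IntervalColorable (H i)) ∧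
    ∀ e ∈ G.edgeSet, ∃! i, e ∈ (H i).edgeSet

/-- The interval coloring thickness of `G`. -/
noncomputable def intervalThickness (G : SimpleGraph V) : ℕ :=
  sInf {k | IntervalDecomposition G k}

-- aux lemma A: any bounded proper coloring forces degree ≤ t
lemma degree_le_of_proper [Fintype V] [DecidableEq V] (G : SimpleGraph V) [DecidableRel G.Adj]
    {c : Sym2 V → ℕ} {t : ℕ} (hp : IsProperEdgeColoring G c)
    (hb : ∀ e ∈ G.edgeSet, c e ∈ Finset.Icc 1 t) (v : V) : G.degree v ≤ t := by
  have hinj : Set.InjOn c (G.incidenceFinset v) := by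
    intro e₁ he₁ e₂ he₂ hcc
    rw [Finset.mem_coe, G.mem_incidenceFinset (v := v)] at he₁ he₂
    by_contra hne
    exact hp e₁ he₁.1 e₂ he₂.1 hne ⟨v, he₁.2, he₂.2⟩ hcc
  have := Finset.card_le_card_of_injOn c
    (fun e he => hb e ((G.mem_incidenceFinset (v := v) e).mp he).1) hinj
  simpa using this

-- aux lemma B: in a proper coloring, colors of two edges at v that span an interval
lemma interval_card_le [Fintype V] [DecidableEq V] (G : SimpleGraph V) [DecidableRel G.Adj]
    {c : Sym2 V → ℕ} (hp : IsProperEdgeColoring G c)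
    {v : V} {a b : ℕ} (hint : ∀ k, a ≤ k → k ≤ b → k ∈ colorsAt G c v) :
    b + 1 - a ≤ G.degree v := by
  have key : ∀ k : ℕ, ∃ e, a ≤ k → k ≤ b → e ∈ G.incidenceFinset v ∧ c e = k := by
    intro k
    by_cases hk : a ≤ k ∧ k ≤ b
    · obtain ⟨e, he, hve, hce⟩ := hint k hk.1 hk.2
      exact ⟨e, fun _ _ => ⟨(G.mem_incidenceFinset (v := v) e).mpr ⟨he, hve⟩, hce⟩⟩
    · exact ⟨s(v, v), fun h1 h2 => absurd ⟨h1, h2⟩ hk⟩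
  choose f hf using key
  have hinj : Set.InjOn f (Finset.Icc a b : Set ℕ) := by
    intro k₁ h₁ k₂ h₂ hfk
    rw [Finset.mem_coe, Finset.mem_Icc] at h₁ h₂
    rw [← (hf k₁ h₁.1 h₁.2).2, ← (hf k₂ h₂.1 h₂.2).2, hfk]
  have := Finset.card_le_card_of_injOn f
    (fun k hk => by rw [Finset.mem_coe, Finset.mem_Icc] at hk; exact Finset.mem_coe.mpr (hf k hk.1 hk.2).1) hinj
  simpa [Nat.card_Icc] using this


theorem chromIndex_eq_maxDegree_of_intervalColorable [Fintype V] [DecidableEq V]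
    (G : SimpleGraph V) [DecidableRel G.Adj] (h : IntervalColorable G) :
    chromIndex G = G.maxDegree := by
  rw [chromIndex]
  obtain ⟨c, hp, hpos, hint⟩ := h
  set Δ := G.maxDegree with hΔ
  -- every edge has an endpoint of positive degree, hence Δ ≥ 1 if an edge exists
  have hΔpos : ∀ e ∈ G.edgeSet, ∀ v ∈ e, 1 ≤ Δ := by
    intro e he v hv
    obtain ⟨w, rfl⟩ := Sym2.mem_iff_exists.mp hv
    have hadj : G.Adj v w := he
    have : 0 < G.degree v := (G.degree_pos_iff_exists_adj v).mpr ⟨w, hadj⟩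
    exact this.trans_le (G.degree_le_maxDegree v)
  -- bound: two distinct edges at v have c-values within Δ
  have hdiff : ∀ e₁ ∈ G.edgeSet, ∀ e₂ ∈ G.edgeSet, ∀ a : V, a ∈ e₁ → a ∈ e₂ →
      c e₁ ≤ c e₂ → c e₂ - c e₁ < Δ := by
    intro e₁ he₁ e₂ he₂ a ha₁ ha₂ hle
    have h1 : c e₁ ∈ colorsAt G c a := ⟨e₁, he₁, ha₁, rfl⟩
    have h2 : c e₂ ∈ colorsAt G c a := ⟨e₂, he₂, ha₂, rfl⟩
    have := interval_card_le G hp (fun k hk1 hk2 => hint a _ h1 _ h2 k hk1 hk2)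
    have hd := this.trans (G.degree_le_maxDegree a)
    omega
  -- the coloring with colors reduced mod Δ
  set c' : Sym2 V → ℕ := fun e => (c e - 1) % Δ + 1 with hc'
  have hmem : Δ ∈ {t | ∃ c, IsProperEdgeColoring G c ∧ ∀ e ∈ G.edgeSet, c e ∈ Finset.Icc 1 t} := by
    refine ⟨c', ?_, ?_⟩
    · intro e₁ he₁ e₂ he₂ hne ⟨a, ha₁, ha₂⟩
      have hcc : c e₁ ≠ c e₂ := hp e₁ he₁ e₂ he₂ hne ⟨a, ha₁, ha₂⟩
      have h1 := hpos e₁ he₁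
      have h2 := hpos e₂ he₂
      simp only [hc']
      intro habs
      have habs' : (c e₁ - 1) % Δ = (c e₂ - 1) % Δ := by omega
      rcases le_or_gt (c e₁) (c e₂) with hle | hlt
      · have hlt' : c e₂ - c e₁ < Δ := hdiff e₁ he₁ e₂ he₂ a ha₁ ha₂ hle
        have : Δ ∣ (c e₂ - 1) - (c e₁ - 1) := (Nat.modEq_iff_dvd' (by omega)).mp habs'
        have := Nat.le_of_dvd (by omega) this
        omega
      · have hlt' : c e₁ - c e₂ < Δ := hdiff e₂ he₂ e₁ he₁ a ha₂ ha₁ hlt.le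
        have : Δ ∣ (c e₁ - 1) - (c e₂ - 1) := (Nat.modEq_iff_dvd' (by omega)).mp habs'.symm
        have := Nat.le_of_dvd (by omega) this
        omega
    · intro e he
      have hΔ1 : 1 ≤ Δ := by
        induction e with
        | _ a b => exact hΔpos _ he a (Sym2.mem_mk_left a b)
      have : (c e - 1) % Δ < Δ := Nat.mod_lt _ (by omega)
      simp only [hc', Finset.mem_Icc]
      omega
  apply le_antisymm (Nat.sInf_le hmem)
  refine le_csInf ⟨Δ, hmem⟩ ?_
  rintro t ⟨c₂, hp₂, hb₂⟩
  exact G.maxDegree_le_of_forall_degree_le t (fun v => degree_le_of_proper G hp₂ hb₂ v)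
end

section
/- Every bipartite graph with maximum degree at most 3 admits an interval edge coloring. -/
open SimpleGraph

variable {V : Type*}

private def withEdges (G : SimpleGraph V) (S : Set (Sym2 V)) : SimpleGraph V where
  Adj x y := G.Adj x y ∧ s(x, y) ∈ S
  symm := ⟨fun x y h => ⟨h.1.symm, by rw [Sym2.eq_swap]; exact h.2⟩⟩
  loopless := ⟨fun x h => G.loopless.irrefl x h.1⟩

private lemma walk_parity {H : SimpleGraph V} {f : V → Bool}
    (hf : ∀ x y, H.Adj x y → f x ≠ f y) {x y : V} (p : H.Walk x y) :
    (f x = f y) ↔ Even p.length := by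
  induction p with
  | nil => simp
  | @cons x x' y h q ih =>
      have h1 := hf _ _ h
      simp only [Walk.length_cons, Nat.even_add_one, ← ih]
      cases hx : f x <;> cases hx' : f x' <;> cases hy : f y <;> simp_all

private lemma alt_color {H : SimpleGraph V} (c : Sym2 V → ℕ) (a b : ℕ)
    (hS : ∀ x y, H.Adj x y → c s(x, y) = a ∨ c s(x, y) = b)
    (hprop : ∀ x y z, H.Adj x y → H.Adj y z → x ≠ z → c s(x, y) ≠ c s(y, z)) :
    ∀ {x1 y : V} (q : H.Walk x1 y), (∀ z, H.Adj y z → c s(y, z) = a) →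
      ∀ {x : V} (h : H.Adj x x1),
      (Walk.cons h q).IsPath → c s(x, x1) = if Even (q.length + 1) then b else a := by
  intro x1 y q
  induction q with
  | nil =>
      intro hv x h _
      have := hv x h.symm
      rw [Sym2.eq_swap] at this
      simpa using this
  | @cons x1 x2 y h2 q2 ih =>
      intro hv x h hp
      have hq : (Walk.cons h2 q2).IsPath := hp.of_cons
      have h12 := ih hv h2 hq
      have hxne : x ≠ x2 := by
        have hnd := hp.support_nodup
        rw [Walk.support_cons] at hnd
        have hx : x ∉ (Walk.cons h2 q2).support := (List.nodup_cons.mp hnd).1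
        have hx2 : x2 ∈ (Walk.cons h2 q2).support := by
          rw [Walk.support_cons]; exact List.mem_cons_of_mem _ q2.start_mem_support
        intro hEq; exact hx (hEq ▸ hx2)
      have hne := hprop x x1 x2 h h2 hxne
      have hc1 := hS x x1 h
      simp only [Walk.length_cons]
      by_cases hpar : Even (q2.length + 1)
      · rw [if_pos hpar] at h12
        have hval : c s(x, x1) = a := by
          rcases hc1 with h1 | h1
          · exact h1
          · exact absurd (h1.trans h12.symm) hne
        have hnp : ¬ Even (q2.length + 1 + 1) := by
          simpa [Nat.even_add_one] using hpar
        simp [hval, hnp]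
      · rw [if_neg hpar] at h12
        have hval : c s(x, x1) = b := by
          rcases hc1 with h1 | h1
          · exact absurd (h1.trans h12.symm) hne
          · exact h1
        have hnp : Even (q2.length + 1 + 1) := by
          simpa [Nat.even_add_one] using hpar
        simp [hval, hnp]

private lemma konig [Fintype V] [DecidableEq V] (G : SimpleGraph V) [DecidableRel G.Adj]
    {f : V → Bool} (hf : ∀ x y, G.Adj x y → f x ≠ f y) (k : ℕ) :
    ∀ (n : ℕ) (E' : Finset (Sym2 V)), E'.card ≤ n → E' ⊆ G.edgeFinset →
    (∀ v, (E'.filter (fun e => v ∈ e)).card ≤ k) →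
    ∃ c : Sym2 V → ℕ, (∀ e ∈ E', c e < k) ∧
      (∀ e1 ∈ E', ∀ e2 ∈ E', e1 ≠ e2 → (∃ w, w ∈ e1 ∧ w ∈ e2) → c e1 ≠ c e2) := by
  classical
  intro n
  induction n with
  | zero =>
      intro E' hcard _ _
      have : E' = ∅ := Finset.card_eq_zero.mp (Nat.le_zero.mp hcard)
      subst this
      exact ⟨fun _ => 0, by simp, by simp⟩
  | succ n ih =>
      intro E' hcard hsub hdeg
      rcases E'.eq_empty_or_nonempty with rfl | ⟨e, he⟩
      · exact ⟨fun _ => 0, by simp, by simp⟩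
      have hadj : ∃ u v, e = s(u, v) ∧ G.Adj u v := by
        have h1 : e ∈ G.edgeSet := by simpa [mem_edgeFinset] using hsub he
        induction e using Sym2.ind with
        | _ x y => exact ⟨x, y, rfl, h1⟩
      obtain ⟨u, v, rfl, huv⟩ := hadj
      set E'' := E'.erase s(u, v) with hE''
      have hsub'' : E'' ⊆ G.edgeFinset := fun e' h' => hsub (Finset.mem_of_mem_erase h')
      have hmemE'' : ∀ e' ∈ E'', e' ∈ E' := fun e' h' => Finset.mem_of_mem_erase h'
      obtain ⟨c, hck, hcp⟩ := ih E''
        (by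
          have h1 : E''.card < E'.card := Finset.card_lt_card (Finset.erase_ssubset he)
          omega)
        hsub''
        (fun w => le_trans (Finset.card_le_card (Finset.filter_subset_filter _
          (Finset.erase_subset _ _))) (hdeg w))
      -- missing colors at u and at v
      have hmiss : ∀ w ∈ (s(u, v) : Sym2 V), ∃ m, m < k ∧
          ∀ e' ∈ E'', w ∈ e' → c e' ≠ m := by
        intro w hw
        set Cw := (E''.filter (fun e' => w ∈ e')).image c with hCw
        have h1 : E''.filter (fun e' => w ∈ e') =
            (E'.filter (fun e' => w ∈ e')).erase s(u, v) := by
          rw [hE'', Finset.filter_erase]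
        have hmem : s(u, v) ∈ E'.filter (fun e' => w ∈ e') :=
          Finset.mem_filter.mpr ⟨he, hw⟩
        have h2 : (E''.filter (fun e' => w ∈ e')).card < k := by
          rw [h1, Finset.card_erase_of_mem hmem]
          have h3 := hdeg w
          have h4 : 0 < (E'.filter (fun e' => w ∈ e')).card :=
            Finset.card_pos.mpr ⟨_, hmem⟩
          omega
        have h5 : Cw.card < (Finset.range k).card := by
          rw [Finset.card_range]
          exact lt_of_le_of_lt Finset.card_image_le h2
        have h6 : ∃ m ∈ Finset.range k, m ∉ Cw := by
          by_contra hcon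
          push_neg at hcon
          exact absurd (Finset.card_le_card hcon) (not_le.mpr h5)
        obtain ⟨m, hm1, hm2⟩ := h6
        refine ⟨m, Finset.mem_range.mp hm1, fun e' h' hw' hEq => hm2 ?_⟩
        exact Finset.mem_image.mpr ⟨e', Finset.mem_filter.mpr ⟨h', hw'⟩, hEq⟩
      obtain ⟨a, hak, hau⟩ := hmiss u (Sym2.mem_mk_left u v)
      obtain ⟨b, hbk, hbv⟩ := hmiss v (Sym2.mem_mk_right u v)
      have hmemE''iff : ∀ e', e' ∈ E'' ↔ (e' ≠ s(u, v) ∧ e' ∈ E') := by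
        intro e'; rw [hE'', Finset.mem_erase]
      by_cases hab : a = b
      · -- colors agree: extend directly
        have hbv' : ∀ e' ∈ E'', v ∈ e' → c e' ≠ a := by
          intro e' h1 h2; rw [hab]; exact hbv e' h1 h2
        refine ⟨Function.update c s(u, v) a, ?_, ?_⟩
        · intro e' he'
          by_cases hEq : e' = s(u, v)
          · rw [hEq, Function.update_self]; exact hak
          · rw [Function.update_of_ne hEq]
            exact hck e' ((hmemE''iff e').mpr ⟨hEq, he'⟩)
        · rintro e1 h1 e2 h2 hne ⟨w, hw1, hw2⟩
          by_cases hq1 : e1 = s(u, v) <;> by_cases hq2 : e2 = s(u, v)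
          · exact absurd (hq1.trans hq2.symm) hne
          · subst hq1
            rw [Function.update_self, Function.update_of_ne hq2]
            have h2' : e2 ∈ E'' := (hmemE''iff e2).mpr ⟨hq2, h2⟩
            rcases Sym2.mem_iff.mp hw1 with rfl | rfl
            · exact fun hEq => hau e2 h2' hw2 hEq.symm
            · exact fun hEq => hbv' e2 h2' hw2 hEq.symm
          · subst hq2
            rw [Function.update_self, Function.update_of_ne hq1]
            have h1' : e1 ∈ E'' := (hmemE''iff e1).mpr ⟨hq1, h1⟩
            rcases Sym2.mem_iff.mp hw2 with rfl | rfl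
            · exact hau e1 h1' hw1
            · exact hbv' e1 h1' hw1
          · rw [Function.update_of_ne hq1, Function.update_of_ne hq2]
            exact hcp e1 ((hmemE''iff e1).mpr ⟨hq1, h1⟩) e2 ((hmemE''iff e2).mpr ⟨hq2, h2⟩)
              hne ⟨w, hw1, hw2⟩
      · -- Kempe chain case
        set S := E''.filter (fun e' => c e' = a ∨ c e' = b) with hSdef
        set H := withEdges G {e' | e' ∈ S} with hH
        have hSmem : ∀ e' ∈ S, e' ∈ E'' ∧ (c e' = a ∨ c e' = b) := by
          intro e' h'
          exact Finset.mem_filter.mp h'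
        have hSmem' : ∀ e', e' ∈ E'' → (c e' = a ∨ c e' = b) → e' ∈ S := by
          intro e' h1 h2; exact Finset.mem_filter.mpr ⟨h1, h2⟩
        have hedge : ∀ x y, H.Adj x y → s(x, y) ∈ E'' := fun x y h' => (hSmem _ h'.2).1
        have hu_b : ∀ z, H.Adj u z → c s(u, z) = b := by
          intro z hz
          have h1 := (hSmem _ hz.2).2
          have h2 := hau _ (hedge _ _ hz) (Sym2.mem_mk_left _ _)
          tauto
        have hv_a : ∀ z, H.Adj v z → c s(v, z) = a := by
          intro z hz
          have h1 := (hSmem _ hz.2).2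
          have h2 := hbv _ (hedge _ _ hz) (Sym2.mem_mk_left _ _)
          tauto
        have hSab : ∀ x y, H.Adj x y → c s(x, y) = a ∨ c s(x, y) = b :=
          fun x y h' => (hSmem _ h'.2).2
        have hprop' : ∀ x y z, H.Adj x y → H.Adj y z → x ≠ z → c s(x, y) ≠ c s(y, z) := by
          intro x y z h1 h2 hxz
          have hne12 : s(x, y) ≠ s(y, z) := by
            intro hEq
            rw [Sym2.eq_iff] at hEq
            rcases hEq with ⟨h3, _⟩ | ⟨h3, _⟩
            · exact h1.1.ne h3
            · exact hxz h3
          exact hcp _ (hedge _ _ h1) _ (hedge _ _ h2) hne12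
            ⟨y, Sym2.mem_mk_right _ _, Sym2.mem_mk_left _ _⟩
        have hfH : ∀ x y, H.Adj x y → f x ≠ f y := fun x y h' => hf x y h'.1
        have hreach : ¬ H.Reachable u v := by
          intro hre
          obtain ⟨pw0⟩ := hre
          obtain ⟨pw, hpath⟩ := pw0.toPath
          have hfa : f u ≠ f v := hf u v huv
          cases pw with
          | nil => exact hfa rfl
          | @cons _ x1 _ h q =>
              have h12 := alt_color c a b hSab hprop' q hv_a h hpath
              have hb' := hu_b x1 h
              have hEv : Even (q.length + 1) := by
                by_contra hodd
                rw [if_neg hodd] at h12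
                exact hab (hb'.symm.trans h12).symm
              have hpar := (walk_parity hfH (Walk.cons h q)).mpr
                (by simpa [Walk.length_cons] using hEv)
              exact hfa hpar
        have hclos : ∀ e' ∈ S, (∃ x, x ∈ e' ∧ H.Reachable u x) → ∀ y ∈ e', H.Reachable u y := by
          intro e' hSe hex y hy
          obtain ⟨x, hx, hrx⟩ := hex
          have hE : e' ∈ G.edgeSet := by
            simpa [mem_edgeFinset] using hsub (hmemE'' _ (hSmem _ hSe).1)
          have hrep : ∃ p q, e' = s(p, q) ∧ G.Adj p q := by
            induction e' using Sym2.ind with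
            | _ p q => exact ⟨p, q, rfl, hE⟩
          obtain ⟨p, q, rfl, hpq⟩ := hrep
          have hadjH : H.Adj p q := ⟨hpq, hSe⟩
          rw [Sym2.mem_iff] at hx hy
          rcases hx with rfl | rfl <;> rcases hy with rfl | rfl
          · exact hrx
          · exact hrx.trans hadjH.reachable
          · exact hrx.trans hadjH.symm.reachable
          · exact hrx
        set cond := fun e' => e' ∈ S ∧ (∃ x, x ∈ e' ∧ H.Reachable u x) with hconddef
        set c' := fun e' => if cond e' then (if c e' = a then b else a) else c e' with hc'
        have hc'val : ∀ e' ∈ E'', c' e' < k := by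
          intro e' h'
          simp only [hc']
          split
          · split
            · exact hbk
            · exact hak
          · exact hck e' h'
        have hub' : ∀ e' ∈ E'', u ∈ e' → c' e' ≠ b := by
          intro e' h' hu'
          simp only [hc']
          by_cases hcond : cond e'
          · rw [if_pos hcond]
            have h1 := (hSmem _ hcond.1).2
            have h2 := hau _ h' hu'
            have h3 : c e' = b := by tauto
            have h4 : c e' ≠ a := by rw [h3]; exact fun hEq => hab hEq.symm
            rw [if_neg h4]
            exact hab
          · rw [if_neg hcond]
            by_cases hmemS : e' ∈ S
            · exact absurd ⟨hmemS, ⟨u, hu', Reachable.refl u⟩⟩ hcond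
            · have : ¬ (c e' = a ∨ c e' = b) := fun hcc => hmemS (hSmem' _ h' hcc)
              tauto
        have hvb' : ∀ e' ∈ E'', v ∈ e' → c' e' ≠ b := by
          intro e' h' hv'
          have hcb := hbv _ h' hv'
          simp only [hc']
          by_cases hcond : cond e'
          · exact absurd (hclos _ hcond.1 hcond.2 v hv') hreach
          · rw [if_neg hcond]; exact hcb
        have hprop'' : ∀ e1 ∈ E'', ∀ e2 ∈ E'', e1 ≠ e2 →
            (∃ w, w ∈ e1 ∧ w ∈ e2) → c' e1 ≠ c' e2 := by
          rintro e1 h1 e2 h2 hne ⟨w, hw1, hw2⟩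
          have hbase := hcp e1 h1 e2 h2 hne ⟨w, hw1, hw2⟩
          have hmix : ∀ e3 ∈ E'', ∀ e4 ∈ E'', cond e3 → ¬ cond e4 → (∃ x, x ∈ e3 ∧ x ∈ e4) →
              c e4 ≠ (if c e3 = a then b else a) := by
            rintro e3 _ e4 h4 hq3 hq4 ⟨x, hx3, hx4⟩
            have hx_reach : H.Reachable u x := hclos _ hq3.1 hq3.2 x hx3
            by_cases hmemS : e4 ∈ S
            · exact absurd ⟨hmemS, ⟨x, hx4, hx_reach⟩⟩ hq4
            · have hnc : ¬ (c e4 = a ∨ c e4 = b) := fun hcc => hmemS (hSmem' _ h4 hcc)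
              split <;> tauto
          simp only [hc']
          by_cases hq1 : cond e1 <;> by_cases hq2 : cond e2
          · rw [if_pos hq1, if_pos hq2]
            rcases (hSmem _ hq1.1).2 with hA | hA <;> rcases (hSmem _ hq2.1).2 with hB | hB
            · exact absurd (hA.trans hB.symm) hbase
            · have h2a : c e2 ≠ a := by rw [hB]; exact fun h => hab h.symm
              rw [if_pos hA, if_neg h2a]
              exact fun h => hab h.symm
            · have h1a : c e1 ≠ a := by rw [hA]; exact fun h => hab h.symm
              rw [if_neg h1a, if_pos hB]
              exact hab
            · exact absurd (hA.trans hB.symm) hbase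
          · rw [if_pos hq1, if_neg hq2]
            exact (hmix e1 h1 e2 h2 hq1 hq2 ⟨w, hw1, hw2⟩).symm
          · rw [if_neg hq1, if_pos hq2]
            exact hmix e2 h2 e1 h1 hq2 hq1 ⟨w, hw2, hw1⟩
          · rw [if_neg hq1, if_neg hq2]; exact hbase
        refine ⟨Function.update c' s(u, v) b, ?_, ?_⟩
        · intro e' he'
          by_cases hEq : e' = s(u, v)
          · rw [hEq, Function.update_self]; exact hbk
          · rw [Function.update_of_ne hEq]
            exact hc'val e' ((hmemE''iff e').mpr ⟨hEq, he'⟩)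
        · rintro e1 h1 e2 h2 hne ⟨w, hw1, hw2⟩
          by_cases hq1 : e1 = s(u, v) <;> by_cases hq2 : e2 = s(u, v)
          · exact absurd (hq1.trans hq2.symm) hne
          · subst hq1
            rw [Function.update_self, Function.update_of_ne hq2]
            have h2' : e2 ∈ E'' := (hmemE''iff e2).mpr ⟨hq2, h2⟩
            rcases Sym2.mem_iff.mp hw1 with rfl | rfl
            · exact fun hEq => hub' e2 h2' hw2 hEq.symm
            · exact fun hEq => hvb' e2 h2' hw2 hEq.symm
          · subst hq2
            rw [Function.update_self, Function.update_of_ne hq1]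
            have h1' : e1 ∈ E'' := (hmemE''iff e1).mpr ⟨hq1, h1⟩
            rcases Sym2.mem_iff.mp hw2 with rfl | rfl
            · exact hub' e1 h1' hw1
            · exact hvb' e1 h1' hw1
          · rw [Function.update_of_ne hq1, Function.update_of_ne hq2]
            exact hprop'' e1 ((hmemE''iff e1).mpr ⟨hq1, h1⟩) e2 ((hmemE''iff e2).mpr ⟨hq2, h2⟩)
              hne ⟨w, hw1, hw2⟩

theorem bipartite_subcubic_intervalColorable [Fintype V] [DecidableEq V]
    (G : SimpleGraph V) [DecidableRel G.Adj]
    (hbip : G.Colorable 2) (hdelta : G.maxDegree ≤ 3) :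
    IntervalColorable G := by
  classical
  obtain ⟨C⟩ := hbip
  set f : V → Bool := fun v => decide (C v = 0) with hfdef
  have hf : ∀ x y, G.Adj x y → f x ≠ f y := by
    intro x y hxy h
    apply C.valid hxy
    have h' : (C x = 0) ↔ (C y = 0) := by
      simpa [hfdef, decide_eq_decide] using h
    have key : ∀ p q : Fin 2, ((p = 0) ↔ (q = 0)) → p = q := by decide
    exact key _ _ h'
  have hdeg : ∀ v, G.degree v ≤ 3 := fun v => (G.degree_le_maxDegree v).trans hdelta
  set Iv : V → Finset (Sym2 V) := fun v => G.edgeFinset.filter (fun e => v ∈ e) with hIvdef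
  have hIvcard : ∀ v, (Iv v).card = G.degree v := by
    intro v
    show (G.edgeFinset.filter (fun e => v ∈ e)).card = G.degree v
    rw [← incidenceFinset_eq_filter, card_incidenceFinset_eq_degree]
  obtain ⟨c3, hc3lt, hc3p⟩ := konig G hf 3 G.edgeFinset.card G.edgeFinset le_rfl
    (Finset.Subset.refl _) (fun v => by
      rw [show G.edgeFinset.filter (fun e => v ∈ e) = Iv v from rfl, hIvcard]; exact hdeg v)
  -- endpoints helper
  have hadj_of : ∀ e ∈ G.edgeFinset, ∀ v, v ∈ e → ∃ y, G.Adj v y ∧ e = s(v, y) := by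
    intro e he v hv
    obtain ⟨y, rfl⟩ := Sym2.mem_iff_exists.mp hv
    exact ⟨y, mem_edgeFinset.mp he, rfl⟩
  -- each degree-3 vertex has an edge of color 0
  have huniq0 : ∀ v, G.degree v = 3 → ∃ e0 ∈ Iv v, c3 e0 = 0 := by
    intro v hdv
    have hinj : Set.InjOn c3 (Iv v) := by
      intro e1 h1 e2 h2 hEq
      by_contra hne
      obtain ⟨hE1, hv1⟩ := Finset.mem_filter.mp h1
      obtain ⟨hE2, hv2⟩ := Finset.mem_filter.mp h2
      exact hc3p e1 hE1 e2 hE2 hne ⟨v, hv1, hv2⟩ hEq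
    have hcardim : ((Iv v).image c3).card = 3 := by
      rw [Finset.card_image_of_injOn hinj, hIvcard, hdv]
    have hsubim : (Iv v).image c3 ⊆ Finset.range 3 := by
      intro m hm
      obtain ⟨e, he, rfl⟩ := Finset.mem_image.mp hm
      exact Finset.mem_range.mpr (hc3lt e (Finset.mem_filter.mp he).1)
    have heqim : (Iv v).image c3 = Finset.range 3 :=
      Finset.eq_of_subset_of_card_le hsubim (by rw [hcardim, Finset.card_range])
    have h0 : (0 : ℕ) ∈ (Iv v).image c3 := by rw [heqim]; simp
    obtain ⟨e0, he0, hc0⟩ := Finset.mem_image.mp h0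
    exact ⟨e0, he0, hc0⟩
  set EC : Finset (Sym2 V) :=
    G.edgeFinset.filter (fun e => c3 e = 0 ∧ ∀ x ∈ e, G.degree x = 2) with hECdef
  set E2 : Finset (Sym2 V) := G.edgeFinset.filter (fun e => c3 e ≠ 0) ∪ EC with hE2def
  have hE2sub : E2 ⊆ G.edgeFinset := by
    intro e he
    rcases Finset.mem_union.mp he with h | h
    · exact (Finset.mem_filter.mp h).1
    · exact (Finset.mem_filter.mp h).1
  have hE1memE2 : ∀ e ∈ G.edgeFinset, c3 e ≠ 0 → e ∈ E2 := by
    intro e he hc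
    exact Finset.mem_union_left _ (Finset.mem_filter.mpr ⟨he, hc⟩)
  have hECmemE2 : ∀ e ∈ G.edgeFinset, c3 e = 0 → (∀ x ∈ e, G.degree x = 2) → e ∈ E2 := by
    intro e he hc hd
    exact Finset.mem_union_right _ (Finset.mem_filter.mpr ⟨he, hc, hd⟩)
  have hE2deg : ∀ v, (E2.filter (fun e => v ∈ e)).card ≤ 2 := by
    intro v
    by_cases hdv : G.degree v = 3
    · obtain ⟨e0, he0, hc0⟩ := huniq0 v hdv
      have hsub2 : E2.filter (fun e => v ∈ e) ⊆ (Iv v).erase e0 := by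
        intro e' h'
        obtain ⟨hmem, hv'⟩ := Finset.mem_filter.mp h'
        rcases Finset.mem_union.mp hmem with h1 | h1
        · obtain ⟨hE, hc⟩ := Finset.mem_filter.mp h1
          refine Finset.mem_erase.mpr ⟨?_, Finset.mem_filter.mpr ⟨hE, hv'⟩⟩
          intro hEq; exact hc (hEq ▸ hc0)
        · obtain ⟨hE, _, hdeg2⟩ := Finset.mem_filter.mp h1
          exact absurd (hdeg2 v hv') (by omega)
      calc (E2.filter (fun e => v ∈ e)).card ≤ ((Iv v).erase e0).card :=
              Finset.card_le_card hsub2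
        _ = (Iv v).card - 1 := Finset.card_erase_of_mem he0
        _ ≤ 2 := by rw [hIvcard, hdv]
    · have h2 : G.degree v ≤ 2 := by have := hdeg v; omega
      have hsub2 : E2.filter (fun e => v ∈ e) ⊆ Iv v :=
        Finset.filter_subset_filter _ hE2sub
      calc (E2.filter (fun e => v ∈ e)).card ≤ (Iv v).card := Finset.card_le_card hsub2
        _ ≤ 2 := by rw [hIvcard]; exact h2
  obtain ⟨c2, hc2lt, hc2p⟩ := konig G hf 2 E2.card E2 le_rfl hE2sub hE2deg
  set cc : Sym2 V → ℕ := fun e =>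
    if e ∈ G.edgeFinset then
      if c3 e ≠ 0 then (if c2 e = 1 then 2 else 3)
      else (if ∃ x, x ∈ e ∧ G.degree x = 2 ∧ ∃ y, G.Adj x y ∧ s(x, y) ≠ e ∧ c2 s(x, y) = 0
            then 4 else 1)
    else 0 with hccdef
  have hccE1 : ∀ e ∈ G.edgeFinset, c3 e ≠ 0 → cc e = (if c2 e = 1 then 2 else 3) := by
    intro e he hc
    rw [hccdef]
    simp only [if_pos he, if_pos hc]
  have hccM : ∀ e ∈ G.edgeFinset, c3 e = 0 → cc e = 1 ∨ cc e = 4 := by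
    intro e he hc
    rw [hccdef]
    simp only [if_pos he, hc]
    simp only [ne_eq, not_true_eq_false, if_false]
    split
    · exact Or.inr rfl
    · exact Or.inl rfl
  -- unique other edge at a degree-2 vertex
  have hdeg2other : ∀ (x : V) (e : Sym2 V), e ∈ G.edgeFinset → x ∈ e → G.degree x = 2 →
      ∃ y, G.Adj x y ∧ s(x, y) ≠ e ∧
        (∀ z, G.Adj x z → s(x, z) ≠ e → s(x, z) = s(x, y)) := by
    intro x e he hx hdx
    have hmem : e ∈ Iv x := Finset.mem_filter.mpr ⟨he, hx⟩
    have hcard : ((Iv x).erase e).card = 1 := by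
      rw [Finset.card_erase_of_mem hmem, hIvcard, hdx]
    obtain ⟨e', he'⟩ := Finset.card_eq_one.mp hcard
    have he'mem : e' ∈ (Iv x).erase e := by rw [he']; simp
    obtain ⟨he'ne, he'Iv⟩ := Finset.mem_erase.mp he'mem
    obtain ⟨hE', hx'⟩ := Finset.mem_filter.mp he'Iv
    obtain ⟨y, hadj, rfl⟩ := hadj_of e' hE' x hx'
    refine ⟨y, hadj, he'ne, ?_⟩
    intro z hz hzne
    have hzmem : s(x, z) ∈ (Iv x).erase e := by
      refine Finset.mem_erase.mpr ⟨hzne, Finset.mem_filter.mpr ⟨?_, Sym2.mem_mk_left _ _⟩⟩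
      exact mem_edgeFinset.mpr hz
    rw [he'] at hzmem
    simpa using hzmem
  -- the key determination of the color of a 0-edge at a degree-2 endpoint
  have hMvalAt : ∀ x y, G.Adj x y → c3 s(x, y) = 0 → G.degree x = 2 →
      ∀ p, G.Adj x p → s(x, p) ≠ s(x, y) → (cc s(x, y) = 4 ↔ c2 s(x, p) = 0) := by
    intro x y hxy h0 hdx p hp hpne
    have hexy : s(x, y) ∈ G.edgeFinset := mem_edgeFinset.mpr hxy
    have hexp : s(x, p) ∈ G.edgeFinset := mem_edgeFinset.mpr hp
    have hc3xp : c3 s(x, p) ≠ 0 := by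
      intro hcon
      exact hc3p _ hexp _ hexy hpne ⟨x, Sym2.mem_mk_left _ _, Sym2.mem_mk_left _ _⟩
        (hcon.trans h0.symm)
    have hxpE2 : s(x, p) ∈ E2 := hE1memE2 _ hexp hc3xp
    have hccval : cc s(x, y) =
        (if ∃ z, z ∈ s(x, y) ∧ G.degree z = 2 ∧
            ∃ w, G.Adj z w ∧ s(z, w) ≠ s(x, y) ∧ c2 s(z, w) = 0 then 4 else 1) := by
      rw [hccdef]
      simp only [if_pos hexy, h0]
      simp only [ne_eq, not_true_eq_false, if_false]
    rw [hccval]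
    constructor
    · intro h4
      have hex : ∃ z, z ∈ s(x, y) ∧ G.degree z = 2 ∧
          ∃ w, G.Adj z w ∧ s(z, w) ≠ s(x, y) ∧ c2 s(z, w) = 0 := by
        by_contra hcon
        rw [if_neg hcon] at h4
        omega
      obtain ⟨z, hz, hzdeg, w, hzw, hzne, hzc⟩ := hex
      rcases Sym2.mem_iff.mp hz with rfl | rfl
      · -- z = x : the other edge at x is unique
        obtain ⟨y0, hy0adj, hy0ne, hy0uniq⟩ := hdeg2other z s(z, y) hexy
          (Sym2.mem_mk_left _ _) hzdeg
        have h1 : s(z, w) = s(z, y0) := hy0uniq w hzw hzne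
        have h2 : s(z, p) = s(z, y0) := hy0uniq p hp hpne
        rw [h2, ← h1]
        exact hzc
      · -- z = y : use consistency through the 0-edge
        have hzy : s(x, z) ∈ EC := by
          refine Finset.mem_filter.mpr ⟨hexy, h0, ?_⟩
          intro t ht
          rcases Sym2.mem_iff.mp ht with rfl | rfl
          · exact hdx
          · exact hzdeg
        have hzyE2 : s(x, z) ∈ E2 := Finset.mem_union_right _ hzy
        have hzwE : s(z, w) ∈ G.edgeFinset := mem_edgeFinset.mpr hzw
        have hc3zw : c3 s(z, w) ≠ 0 := by
          intro hcon
          exact hc3p _ hzwE _ hexy hzne ⟨z, Sym2.mem_mk_left _ _, Sym2.mem_mk_right _ _⟩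
            (hcon.trans h0.symm)
        have hzwE2 : s(z, w) ∈ E2 := hE1memE2 _ hzwE hc3zw
        have hd1 : c2 s(x, p) ≠ c2 s(x, z) := by
          apply hc2p _ hxpE2 _ hzyE2 hpne
          exact ⟨x, Sym2.mem_mk_left _ _, Sym2.mem_mk_left _ _⟩
        have hd2 : c2 s(z, w) ≠ c2 s(x, z) := by
          apply hc2p _ hzwE2 _ hzyE2 hzne
          exact ⟨z, Sym2.mem_mk_left _ _, Sym2.mem_mk_right _ _⟩
        have hl1 := hc2lt _ hxpE2
        have hl2 := hc2lt _ hzwE2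
        have hl3 := hc2lt _ hzyE2
        omega
    · intro h0'
      rw [if_pos ⟨x, Sym2.mem_mk_left _ _, hdx, p, hp, hpne, h0'⟩]
  -- properness
  have hproper : IsProperEdgeColoring G cc := by
    rintro e1 h1 e2 h2 hne ⟨w, hw1, hw2⟩
    have he1 : e1 ∈ G.edgeFinset := mem_edgeFinset.mpr h1
    have he2 : e2 ∈ G.edgeFinset := mem_edgeFinset.mpr h2
    by_cases hz1 : c3 e1 = 0 <;> by_cases hz2 : c3 e2 = 0
    · exact absurd (hz1.trans hz2.symm) (hc3p e1 he1 e2 he2 hne ⟨w, hw1, hw2⟩)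
    · have hv1 := hccM e1 he1 hz1
      have hv2 := hccE1 e2 he2 hz2
      rcases hv1 with hv1 | hv1 <;> rw [hv1, hv2] <;> split <;> omega
    · have hv1 := hccE1 e1 he1 hz1
      have hv2 := hccM e2 he2 hz2
      rcases hv2 with hv2 | hv2 <;> rw [hv1, hv2] <;> split <;> omega
    · have hv1 := hccE1 e1 he1 hz1
      have hv2 := hccE1 e2 he2 hz2
      have hm1 : e1 ∈ E2 := hE1memE2 _ he1 hz1
      have hm2 : e2 ∈ E2 := hE1memE2 _ he2 hz2
      have hd := hc2p e1 hm1 e2 hm2 hne ⟨w, hw1, hw2⟩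
      have hl1 := hc2lt _ hm1
      have hl2 := hc2lt _ hm2
      rw [hv1, hv2]
      split <;> split <;> omega
  -- positivity
  have hpos : ∀ e ∈ G.edgeSet, 1 ≤ cc e := by
    intro e he
    have heF : e ∈ G.edgeFinset := mem_edgeFinset.mpr he
    rw [hccdef]
    simp only [if_pos heF]
    split
    · split <;> omega
    · split <;> omega
  refine ⟨cc, hproper, hpos, ?_⟩
  intro v a ha b hb k hak hkb
  have hcolorsAt : ∀ n, n ∈ colorsAt G cc v ↔ ∃ e ∈ Iv v, cc e = n := by
    intro n
    constructor
    · rintro ⟨e, heS, hve, rfl⟩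
      exact ⟨e, Finset.mem_filter.mpr ⟨mem_edgeFinset.mpr heS, hve⟩, rfl⟩
    · rintro ⟨e, he, rfl⟩
      obtain ⟨hE, hve⟩ := Finset.mem_filter.mp he
      exact ⟨e, mem_edgeFinset.mp hE, hve, rfl⟩
  have hdv4 : G.degree v = 0 ∨ G.degree v = 1 ∨ G.degree v = 2 ∨ G.degree v = 3 := by
    have := hdeg v; omega
  rcases hdv4 with hdv | hdv | hdv | hdv
  · -- degree 0
    exfalso
    obtain ⟨e, he, _⟩ := (hcolorsAt a).mp ha
    have hc0 : (Iv v).card = 0 := by rw [hIvcard, hdv]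
    rw [Finset.card_eq_zero] at hc0
    rw [hc0] at he
    exact absurd he (Finset.notMem_empty _)
  · -- degree 1
    obtain ⟨e0, hIveq⟩ := Finset.card_eq_one.mp (by rw [hIvcard, hdv])
    have hmem : ∀ n, n ∈ colorsAt G cc v ↔ n = cc e0 := by
      intro n
      rw [hcolorsAt n, hIveq]
      constructor
      · rintro ⟨e, he, rfl⟩
        rw [Finset.mem_singleton] at he
        rw [he]
      · rintro rfl
        exact ⟨e0, Finset.mem_singleton_self _, rfl⟩
    rw [hmem] at ha hb ⊢
    omega
  · -- degree 2
    obtain ⟨ea, eb, hneab, hIveq⟩ := Finset.card_eq_two.mp (by rw [hIvcard, hdv])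
    have hamem : ea ∈ Iv v := by rw [hIveq]; simp
    have hbmem : eb ∈ Iv v := by rw [hIveq]; simp
    obtain ⟨hEa, hva⟩ := Finset.mem_filter.mp hamem
    obtain ⟨hEb, hvb⟩ := Finset.mem_filter.mp hbmem
    obtain ⟨p, hpadj, hpa⟩ := hadj_of ea hEa v hva
    obtain ⟨q, hqadj, hqb⟩ := hadj_of eb hEb v hvb
    subst hpa
    subst hqb
    have hmem : ∀ n, n ∈ colorsAt G cc v ↔ (n = cc s(v, p) ∨ n = cc s(v, q)) := by
      intro n
      rw [hcolorsAt n, hIveq]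
      constructor
      · rintro ⟨e, he, rfl⟩
        rw [Finset.mem_insert, Finset.mem_singleton] at he
        rcases he with rfl | rfl
        · exact Or.inl rfl
        · exact Or.inr rfl
      · rintro (rfl | rfl)
        · exact ⟨s(v, p), by simp, rfl⟩
        · exact ⟨s(v, q), by simp, rfl⟩
    have hconsec : (cc s(v, p) + 1 = cc s(v, q)) ∨ (cc s(v, q) + 1 = cc s(v, p)) := by
      by_cases hz1 : c3 s(v, p) = 0 <;> by_cases hz2 : c3 s(v, q) = 0
      · exact absurd (hz1.trans hz2.symm)
          (hc3p _ hEa _ hEb hneab ⟨v, Sym2.mem_mk_left _ _, Sym2.mem_mk_left _ _⟩)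
      · -- s(v,p) is a 0-edge, s(v,q) is not
        have hiff : cc s(v, p) = 4 ↔ c2 s(v, q) = 0 :=
          hMvalAt v p hpadj hz1 hdv q hqadj hneab.symm
        have hvalb : cc s(v, q) = (if c2 s(v, q) = 1 then 2 else 3) := hccE1 _ hEb hz2
        have hlb : c2 s(v, q) < 2 := hc2lt _ (hE1memE2 _ hEb hz2)
        have hvala : cc s(v, p) = 1 ∨ cc s(v, p) = 4 := hccM _ hEa hz1
        by_cases hq1 : c2 s(v, q) = 1
        · have h2 : cc s(v, q) = 2 := by rw [hvalb, if_pos hq1]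
          have h4 : cc s(v, p) ≠ 4 := fun hcon => by
            have := hiff.mp hcon; omega
          omega
        · have hq0 : c2 s(v, q) = 0 := by omega
          have h4 : cc s(v, p) = 4 := hiff.mpr hq0
          have h3 : cc s(v, q) = 3 := by rw [hvalb, if_neg hq1]
          omega
      · -- s(v,q) is a 0-edge, s(v,p) is not
        have hiff : cc s(v, q) = 4 ↔ c2 s(v, p) = 0 :=
          hMvalAt v q hqadj hz2 hdv p hpadj hneab
        have hvalb : cc s(v, p) = (if c2 s(v, p) = 1 then 2 else 3) := hccE1 _ hEa hz1
        have hlb : c2 s(v, p) < 2 := hc2lt _ (hE1memE2 _ hEa hz1)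
        have hvala : cc s(v, q) = 1 ∨ cc s(v, q) = 4 := hccM _ hEb hz2
        by_cases hq1 : c2 s(v, p) = 1
        · have h2 : cc s(v, p) = 2 := by rw [hvalb, if_pos hq1]
          have h4 : cc s(v, q) ≠ 4 := fun hcon => by
            have := hiff.mp hcon; omega
          omega
        · have hq0 : c2 s(v, p) = 0 := by omega
          have h4 : cc s(v, q) = 4 := hiff.mpr hq0
          have h3 : cc s(v, p) = 3 := by rw [hvalb, if_neg hq1]
          omega
      · -- both nonzero
        have hma : s(v, p) ∈ E2 := hE1memE2 _ hEa hz1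
        have hmb : s(v, q) ∈ E2 := hE1memE2 _ hEb hz2
        have hd := hc2p _ hma _ hmb hneab ⟨v, Sym2.mem_mk_left _ _, Sym2.mem_mk_left _ _⟩
        have hla := hc2lt _ hma
        have hlb := hc2lt _ hmb
        have hvala := hccE1 _ hEa hz1
        have hvalb := hccE1 _ hEb hz2
        rw [hvala, hvalb]
        split <;> split <;> omega
    rw [hmem] at ha hb ⊢
    omega
  · -- degree 3
    obtain ⟨e0, he0, hc0⟩ := huniq0 v hdv
    obtain ⟨hE0, hv0⟩ := Finset.mem_filter.mp he0
    have hcard2 : ((Iv v).erase e0).card = 2 := by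
      rw [Finset.card_erase_of_mem he0, hIvcard, hdv]
    obtain ⟨ea, eb, hneab, herase⟩ := Finset.card_eq_two.mp hcard2
    have hamem' : ea ∈ (Iv v).erase e0 := by rw [herase]; simp
    have hbmem' : eb ∈ (Iv v).erase e0 := by rw [herase]; simp
    obtain ⟨hane, hamem⟩ := Finset.mem_erase.mp hamem'
    obtain ⟨hbne, hbmem⟩ := Finset.mem_erase.mp hbmem'
    obtain ⟨hEa, hva⟩ := Finset.mem_filter.mp hamem
    obtain ⟨hEb, hvb⟩ := Finset.mem_filter.mp hbmem
    have hIveq : Iv v = insert e0 {ea, eb} := by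
      rw [← Finset.insert_erase he0, herase]
    have hmem : ∀ n, n ∈ colorsAt G cc v ↔ (n = cc e0 ∨ n = cc ea ∨ n = cc eb) := by
      intro n
      rw [hcolorsAt n, hIveq]
      constructor
      · rintro ⟨e, he, rfl⟩
        rw [Finset.mem_insert, Finset.mem_insert, Finset.mem_singleton] at he
        rcases he with rfl | rfl | rfl
        · exact Or.inl rfl
        · exact Or.inr (Or.inl rfl)
        · exact Or.inr (Or.inr rfl)
      · rintro (rfl | rfl | rfl)
        · exact ⟨e0, by simp, rfl⟩
        · exact ⟨ea, by simp, rfl⟩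
        · exact ⟨eb, by simp, rfl⟩
    have hz_a : c3 ea ≠ 0 := fun hcon =>
      hc3p ea hEa e0 hE0 hane ⟨v, hva, hv0⟩ (hcon.trans hc0.symm)
    have hz_b : c3 eb ≠ 0 := fun hcon =>
      hc3p eb hEb e0 hE0 hbne ⟨v, hvb, hv0⟩ (hcon.trans hc0.symm)
    have hma : ea ∈ E2 := hE1memE2 _ hEa hz_a
    have hmb : eb ∈ E2 := hE1memE2 _ hEb hz_b
    have hd := hc2p ea hma eb hmb hneab ⟨v, hva, hvb⟩
    have hla := hc2lt _ hma
    have hlb := hc2lt _ hmb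
    have hvala := hccE1 ea hEa hz_a
    have hvalb := hccE1 eb hEb hz_b
    have hv0' := hccM e0 hE0 hc0
    have hab23 : (cc ea = 2 ∧ cc eb = 3) ∨ (cc ea = 3 ∧ cc eb = 2) := by
      rw [hvala, hvalb]
      split <;> split <;> omega
    rw [hmem] at ha hb ⊢
    omega
end

section
/- If H is an interval colorable graph with a vertex v of degree 1 in H, and G is obtained from H by adding a cycle C that intersects H exactly in the vertex v, then G is interval colorable. -/
open SimpleGraph

variable {V : Type*}

/-- The graph obtained from `H` by attaching a cycle of length `n + 3` which meets `H`
exactly in the vertex `u` (the cycle is `u, c₀, c₁, …, c_{n+1}, u` on `n + 2` new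
vertices). -/
def attachCycle (H : SimpleGraph V) (u : V) (n : ℕ) : SimpleGraph (V ⊕ Fin (n + 2)) :=
  SimpleGraph.fromEdgeSet
    ((Sym2.map Sum.inl '' H.edgeSet) ∪
      {s(Sum.inl u, Sum.inr 0), s(Sum.inl u, Sum.inr (Fin.last (n + 1)))} ∪
      {e | ∃ i : Fin (n + 1), e = s(Sum.inr i.castSucc, Sum.inr i.succ)})

/-- The extended coloring used in the proof. -/
def ccAux (c : Sym2 V → ℕ) (t y : ℕ) (n : ℕ) : Sym2 (V ⊕ Fin (n + 2)) → ℕ :=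
  Sym2.lift ⟨fun a b =>
    match a, b with
    | Sum.inl a, Sum.inl b => c s(a, b) + 1
    | Sum.inl _, Sum.inr j => if j.val = 0 then t + 1 else y
    | Sum.inr j, Sum.inl _ => if j.val = 0 then t + 1 else y
    | Sum.inr i, Sum.inr j => t + (min i.val j.val) % 2,
    by rintro (a | i) (b | j) <;> simp [Sym2.eq_swap, Nat.min_comm]⟩

lemma ccAux_inl_inl {c : Sym2 V → ℕ} {t y n : ℕ} (a b : V) :
    ccAux c t y n s(Sum.inl a, Sum.inl b) = c s(a, b) + 1 := rfl

lemma ccAux_A {c : Sym2 V → ℕ} {t y n : ℕ} (a : V) :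
    ccAux c t y n s(Sum.inl a, Sum.inr (0 : Fin (n + 2))) = t + 1 := by
  show (if (0 : Fin (n + 2)).val = 0 then t + 1 else y) = t + 1
  simp

lemma ccAux_B {c : Sym2 V → ℕ} {t y n : ℕ} (a : V) :
    ccAux c t y n s(Sum.inl a, Sum.inr (Fin.last (n + 1))) = y := by
  show (if (Fin.last (n + 1)).val = 0 then t + 1 else y) = y
  simp [Fin.val_last]

lemma ccAux_P {c : Sym2 V → ℕ} {t y n : ℕ} (i : Fin (n + 1)) :
    ccAux c t y n s(Sum.inr i.castSucc, Sum.inr i.succ) = t + i.val % 2 := by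
  show t + (min i.castSucc.val i.succ.val) % 2 = t + i.val % 2
  rw [Fin.coe_castSucc, Fin.val_succ]
  congr 2
  omega

lemma exists_pair_sym2 (e : Sym2 V) : ∃ a b, e = s(a, b) :=
  Sym2.ind (fun a b => ⟨a, b, rfl⟩) e

lemma mem_attachCycle_edgeSet {H : SimpleGraph V} {u : V} {n : ℕ} {e : Sym2 (V ⊕ Fin (n + 2))} :
    e ∈ (attachCycle H u n).edgeSet ↔
      ((∃ a b, H.Adj a b ∧ e = s(Sum.inl a, Sum.inl b)) ∨
        e = s(Sum.inl u, Sum.inr (0 : Fin (n + 2))) ∨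
        e = s(Sum.inl u, Sum.inr (Fin.last (n + 1))) ∨
        ∃ i : Fin (n + 1), e = s(Sum.inr i.castSucc, Sum.inr i.succ)) := by
  rw [attachCycle, edgeSet_fromEdgeSet]
  constructor
  · rintro ⟨h1, -⟩
    rcases h1 with ((⟨e', he', rfl⟩ | h) | ⟨i, rfl⟩)
    · left
      induction e' using Sym2.ind with
      | _ a b =>
        rw [SimpleGraph.mem_edgeSet] at he'
        exact ⟨a, b, he', by rw [Sym2.map_pair_eq]⟩
    · rcases h with h | h
      · exact Or.inr (Or.inl h)
      · exact Or.inr (Or.inr (Or.inl h))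
    · exact Or.inr (Or.inr (Or.inr ⟨i, rfl⟩))
  · intro h1
    constructor
    · rcases h1 with (⟨a, b, hab, rfl⟩ | rfl | rfl | ⟨i, rfl⟩)
      · exact Or.inl (Or.inl ⟨s(a, b), by rwa [SimpleGraph.mem_edgeSet], Sym2.map_pair_eq ..⟩)
      · exact Or.inl (Or.inr (Or.inl rfl))
      · exact Or.inl (Or.inr (Or.inr rfl))
      · exact Or.inr ⟨i, rfl⟩
    · rcases h1 with (⟨a, b, hab, rfl⟩ | rfl | rfl | ⟨i, rfl⟩) <;>
        simp only [Sym2.diagSet, Set.mem_setOf_eq, Sym2.isDiag_iff_proj_eq]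
      · simp only [Sum.inl.injEq]; exact hab.ne
      · simp
      · simp
      · simp only [Sum.inr.injEq]
        intro hh
        have := congrArg Fin.val hh
        simp at this

theorem intervalColorable_attachCycle [Fintype V] [DecidableEq V]
    (H : SimpleGraph V) [DecidableRel H.Adj] (u : V) (hu : H.degree u = 1) (n : ℕ)
    (h : IntervalColorable H) : IntervalColorable (attachCycle H u n) := by
  obtain ⟨c, hp, hpos, hint⟩ := h
  obtain ⟨w, hw⟩ := Finset.card_eq_one.mp hu
  have hadj_w : H.Adj u w := by
    rw [← SimpleGraph.mem_neighborFinset, hw]; exact Finset.mem_singleton_self w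
  have huniq : ∀ x, H.Adj u x → x = w := by
    intro x hx
    have := (SimpleGraph.mem_neighborFinset H u x).mpr hx
    rw [hw] at this
    exact Finset.mem_singleton.mp this
  set t := c s(u, w) + 1 with ht
  have ht2 : 2 ≤ t := by
    have := hpos s(u, w) ((SimpleGraph.mem_edgeSet H).mpr hadj_w)
    omega
  set y := if n % 2 = 0 then t - 1 else t + 2 with hy
  have hy12 : (n % 2 = 0 ∧ y = t - 1) ∨ (n % 2 = 1 ∧ y = t + 2) := by
    rw [hy]; split_ifs with hh
    · exact Or.inl ⟨hh, rfl⟩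
    · exact Or.inr ⟨by omega, rfl⟩
  -- the color of an H-edge incident to u is t
  have hcolu : ∀ a b, H.Adj a b →
      Sum.inl u ∈ (s(Sum.inl a, Sum.inl b) : Sym2 (V ⊕ Fin (n + 2))) →
      ccAux c t y n s(Sum.inl a, Sum.inl b) = t := by
    intro a b hab hm
    rw [Sym2.mem_iff] at hm
    rcases hm with hm | hm
    · obtain rfl : u = a := by injection hm
      obtain rfl : b = w := huniq b hab
      rw [ccAux_inl_inl]
    · obtain rfl : u = b := by injection hm
      obtain rfl : a = w := huniq a hab.symm
      rw [ccAux_inl_inl, Sym2.eq_swap]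
  refine ⟨ccAux c t y n, ?_, ?_, ?_⟩
  · -- properness
    intro e₁ he₁ e₂ he₂ hne hshare
    rw [mem_attachCycle_edgeSet] at he₁ he₂
    obtain ⟨v, hv1, hv2⟩ := hshare
    rcases he₁ with (⟨a, b, hab, rfl⟩ | rfl | rfl | ⟨i, rfl⟩) <;>
      rcases he₂ with (⟨a', b', hab', rfl⟩ | rfl | rfl | ⟨j, rfl⟩)
    -- (H,H)
    · have hne' : s(a, b) ≠ s(a', b') := by
        rintro hh
        apply hne
        have := congrArg (Sym2.map (Sum.inl : V → V ⊕ Fin (n + 2))) hh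
        simpa [Sym2.map_pair_eq] using this
      have hsh : ∃ x, x ∈ s(a, b) ∧ x ∈ s(a', b') := by
        rw [Sym2.mem_iff] at hv1 hv2
        rcases hv1 with rfl | rfl <;> rcases hv2 with hh | hh
        · obtain rfl : a = a' := by injection hh
          exact ⟨a, Sym2.mem_iff.mpr (Or.inl rfl), Sym2.mem_iff.mpr (Or.inl rfl)⟩
        · obtain rfl : a = b' := by injection hh
          exact ⟨a, Sym2.mem_iff.mpr (Or.inl rfl), Sym2.mem_iff.mpr (Or.inr rfl)⟩
        · obtain rfl : b = a' := by injection hh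
          exact ⟨b, Sym2.mem_iff.mpr (Or.inr rfl), Sym2.mem_iff.mpr (Or.inl rfl)⟩
        · obtain rfl : b = b' := by injection hh
          exact ⟨b, Sym2.mem_iff.mpr (Or.inr rfl), Sym2.mem_iff.mpr (Or.inr rfl)⟩
      have := hp _ ((SimpleGraph.mem_edgeSet H).mpr hab) _
        ((SimpleGraph.mem_edgeSet H).mpr hab') hne' hsh
      rw [ccAux_inl_inl, ccAux_inl_inl]
      omega
    -- (H,A)
    · rw [Sym2.mem_iff] at hv2
      rcases hv2 with rfl | rfl
      · rw [hcolu a b hab hv1, ccAux_A]; omega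
      · rw [Sym2.mem_iff] at hv1; rcases hv1 with hh | hh <;> simp at hh
    -- (H,B)
    · rw [Sym2.mem_iff] at hv2
      rcases hv2 with rfl | rfl
      · rw [hcolu a b hab hv1, ccAux_B]
        rcases hy12 with ⟨_, hy'⟩ | ⟨_, hy'⟩ <;> omega
      · rw [Sym2.mem_iff] at hv1; rcases hv1 with hh | hh <;> simp at hh
    -- (H,P)
    · rw [Sym2.mem_iff] at hv1 hv2
      rcases hv1 with rfl | rfl <;> rcases hv2 with hh | hh <;> simp at hh
    -- (A,H)
    · rw [Sym2.mem_iff] at hv1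
      rcases hv1 with rfl | rfl
      · rw [hcolu a' b' hab' hv2, ccAux_A]; omega
      · rw [Sym2.mem_iff] at hv2; rcases hv2 with hh | hh <;> simp at hh
    -- (A,A)
    · exact absurd rfl hne
    -- (A,B)
    · rw [ccAux_A, ccAux_B]
      rcases hy12 with ⟨_, hy'⟩ | ⟨_, hy'⟩ <;> omega
    -- (A,P)
    · rw [Sym2.mem_iff] at hv1 hv2
      have hj0 : j.val = 0 := by
        rcases hv1 with rfl | rfl <;> rcases hv2 with hh | hh
        · simp at hh
        · simp at hh
        · obtain hh' : (0 : Fin (n + 2)) = j.castSucc := by injection hh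
          have := congrArg Fin.val hh'
          simpa using this.symm
        · obtain hh' : (0 : Fin (n + 2)) = j.succ := by injection hh
          exact absurd hh'.symm (Fin.succ_ne_zero j)
      rw [ccAux_A, ccAux_P, hj0]
      omega
    -- (B,H)
    · rw [Sym2.mem_iff] at hv1
      rcases hv1 with rfl | rfl
      · rw [hcolu a' b' hab' hv2, ccAux_B]
        rcases hy12 with ⟨_, hy'⟩ | ⟨_, hy'⟩ <;> omega
      · rw [Sym2.mem_iff] at hv2; rcases hv2 with hh | hh <;> simp at hh
    -- (B,A)
    · rw [ccAux_A, ccAux_B]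
      rcases hy12 with ⟨_, hy'⟩ | ⟨_, hy'⟩ <;> omega
    -- (B,B)
    · exact absurd rfl hne
    -- (B,P)
    · rw [Sym2.mem_iff] at hv1 hv2
      have hjn : j.val = n := by
        rcases hv1 with rfl | rfl <;> rcases hv2 with hh | hh
        · simp at hh
        · simp at hh
        · obtain hh' : Fin.last (n + 1) = j.castSucc := by injection hh
          have := congrArg Fin.val hh'
          rw [Fin.val_last, Fin.coe_castSucc] at this
          have := j.isLt; omega
        · obtain hh' : Fin.last (n + 1) = j.succ := by injection hh
          have := congrArg Fin.val hh'
          rw [Fin.val_last, Fin.val_succ] at this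
          omega
      rw [ccAux_B, ccAux_P, hjn]
      rcases hy12 with ⟨hp1, hy'⟩ | ⟨hp1, hy'⟩ <;> omega
    -- (P,H)
    · rw [Sym2.mem_iff] at hv1 hv2
      rcases hv2 with rfl | rfl <;> rcases hv1 with hh | hh <;> simp at hh
    -- (P,A)
    · rw [Sym2.mem_iff] at hv1 hv2
      have hi0 : i.val = 0 := by
        rcases hv2 with rfl | rfl <;> rcases hv1 with hh | hh
        · simp at hh
        · simp at hh
        · obtain hh' : (0 : Fin (n + 2)) = i.castSucc := by injection hh
          have := congrArg Fin.val hh'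
          simpa using this.symm
        · obtain hh' : (0 : Fin (n + 2)) = i.succ := by injection hh
          exact absurd hh'.symm (Fin.succ_ne_zero i)
      rw [ccAux_A, ccAux_P, hi0]
      omega
    -- (P,B)
    · rw [Sym2.mem_iff] at hv1 hv2
      have hin : i.val = n := by
        rcases hv2 with rfl | rfl <;> rcases hv1 with hh | hh
        · simp at hh
        · simp at hh
        · obtain hh' : Fin.last (n + 1) = i.castSucc := by injection hh
          have := congrArg Fin.val hh'
          rw [Fin.val_last, Fin.coe_castSucc] at this
          have := i.isLt; omega
        · obtain hh' : Fin.last (n + 1) = i.succ := by injection hh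
          have := congrArg Fin.val hh'
          rw [Fin.val_last, Fin.val_succ] at this
          omega
      rw [ccAux_B, ccAux_P, hin]
      rcases hy12 with ⟨hp1, hy'⟩ | ⟨hp1, hy'⟩ <;> omega
    -- (P,P)
    · rw [Sym2.mem_iff] at hv1 hv2
      have hrel : i.val = j.val ∨ i.val = j.val + 1 ∨ i.val + 1 = j.val := by
        rcases hv1 with rfl | rfl <;> rcases hv2 with hh | hh
        · obtain hh' : i.castSucc = j.castSucc := by injection hh
          have := congrArg Fin.val hh'; simp at this; omega
        · obtain hh' : i.castSucc = j.succ := by injection hh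
          have := congrArg Fin.val hh'; simp at this; omega
        · obtain hh' : i.succ = j.castSucc := by injection hh
          have := congrArg Fin.val hh'; simp at this; omega
        · obtain hh' : i.succ = j.succ := by injection hh
          have := congrArg Fin.val hh'; simp at this; omega
      rw [ccAux_P, ccAux_P]
      intro hcol
      have hij : i.val = j.val := by omega
      exact hne (by rw [Fin.val_injective hij])
  · -- positivity
    intro e he
    rw [mem_attachCycle_edgeSet] at he
    rcases he with (⟨a, b, hab, rfl⟩ | rfl | rfl | ⟨i, rfl⟩)
    · rw [ccAux_inl_inl]; omega
    · rw [ccAux_A]; omega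
    · rw [ccAux_B]; rcases hy12 with ⟨_, hy'⟩ | ⟨_, hy'⟩ <;> omega
    · rw [ccAux_P]; omega
  · -- interval condition
    rintro (x | j)
    · by_cases hx : x = u
      · subst hx
        have hmem : ∀ m ∈ colorsAt (attachCycle H x n) (ccAux c t y n) (Sum.inl x),
            m = t ∨ m = t + 1 ∨ m = y := by
          rintro m ⟨e, he, hve, rfl⟩
          rw [mem_attachCycle_edgeSet] at he
          rcases he with (⟨a, b, hab, rfl⟩ | rfl | rfl | ⟨i, rfl⟩)
          · exact Or.inl (hcolu a b hab hve)
          · exact Or.inr (Or.inl (ccAux_A x))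
          · exact Or.inr (Or.inr (ccAux_B x))
          · rw [Sym2.mem_iff] at hve; rcases hve with hh | hh <;> simp at hh
        have hT : t ∈ colorsAt (attachCycle H x n) (ccAux c t y n) (Sum.inl x) :=
          ⟨s(Sum.inl x, Sum.inl w),
            mem_attachCycle_edgeSet.mpr (Or.inl ⟨x, w, hadj_w, rfl⟩),
            Sym2.mem_iff.mpr (Or.inl rfl), ccAux_inl_inl x w⟩
        have hT1 : t + 1 ∈ colorsAt (attachCycle H x n) (ccAux c t y n) (Sum.inl x) :=
          ⟨s(Sum.inl x, Sum.inr (0 : Fin (n + 2))),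
            mem_attachCycle_edgeSet.mpr (Or.inr (Or.inl rfl)),
            Sym2.mem_iff.mpr (Or.inl rfl), ccAux_A x⟩
        have hY : y ∈ colorsAt (attachCycle H x n) (ccAux c t y n) (Sum.inl x) :=
          ⟨s(Sum.inl x, Sum.inr (Fin.last (n + 1))),
            mem_attachCycle_edgeSet.mpr (Or.inr (Or.inr (Or.inl rfl))),
            Sym2.mem_iff.mpr (Or.inl rfl), ccAux_B x⟩
        intro a ha b hb k hak hkb
        have ha' := hmem a ha
        have hb' := hmem b hb
        have hk : k = t ∨ k = t + 1 ∨ k = y := by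
          rcases hy12 with ⟨_, hy'⟩ | ⟨_, hy'⟩ <;> omega
        rcases hk with rfl | rfl | rfl
        exacts [hT, hT1, hY]
      · have key : ∀ m, m ∈ colorsAt (attachCycle H u n) (ccAux c t y n) (Sum.inl x) ↔
            ∃ p ∈ colorsAt H c x, m = p + 1 := by
          intro m
          constructor
          · rintro ⟨e, he, hve, rfl⟩
            rw [mem_attachCycle_edgeSet] at he
            rcases he with (⟨a, b, hab, rfl⟩ | rfl | rfl | ⟨i, rfl⟩)
            · rw [Sym2.mem_iff] at hve
              have hxab : x ∈ s(a, b) := by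
                rcases hve with hh | hh
                · obtain rfl : x = a := by injection hh
                  exact Sym2.mem_iff.mpr (Or.inl rfl)
                · obtain rfl : x = b := by injection hh
                  exact Sym2.mem_iff.mpr (Or.inr rfl)
              exact ⟨c s(a, b), ⟨s(a, b), (SimpleGraph.mem_edgeSet H).mpr hab, hxab, rfl⟩,
                (ccAux_inl_inl a b).symm ▸ rfl⟩
            · rw [Sym2.mem_iff] at hve
              rcases hve with hh | hh
              · exact absurd (by injection hh) hx
              · simp at hh
            · rw [Sym2.mem_iff] at hve
              rcases hve with hh | hh
              · exact absurd (by injection hh) hx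
              · simp at hh
            · rw [Sym2.mem_iff] at hve; rcases hve with hh | hh <;> simp at hh
          · rintro ⟨p, ⟨e', he', hxe', rfl⟩, rfl⟩
            obtain ⟨a, b, rfl⟩ := exists_pair_sym2 e'
            refine ⟨s(Sum.inl a, Sum.inl b),
              mem_attachCycle_edgeSet.mpr
                (Or.inl ⟨a, b, (SimpleGraph.mem_edgeSet H).mp he', rfl⟩), ?_, ccAux_inl_inl a b⟩
            rw [Sym2.mem_iff] at hxe' ⊢
            rcases hxe' with rfl | rfl
            · exact Or.inl rfl
            · exact Or.inr rfl
        intro a ha b hb k hak hkb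
        obtain ⟨p, hpm, rfl⟩ := (key a).mp ha
        obtain ⟨q, hqm, rfl⟩ := (key b).mp hb
        have hk1 : 1 ≤ k := by omega
        have hk' : k - 1 ∈ colorsAt H c x :=
          hint x p hpm q hqm (k - 1) (by omega) (by omega)
        exact (key k).mpr ⟨k - 1, hk', by omega⟩
    · have hmem : ∀ m ∈ colorsAt (attachCycle H u n) (ccAux c t y n) (Sum.inr j),
          (j.val = 0 ∧ m = t + 1) ∨ (j.val = n + 1 ∧ m = y) ∨
            ∃ iv : ℕ, (iv = j.val ∨ iv + 1 = j.val) ∧ iv ≤ n ∧ m = t + iv % 2 := by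
        rintro m ⟨e, he, hve, rfl⟩
        rw [mem_attachCycle_edgeSet] at he
        rcases he with (⟨a, b, hab, rfl⟩ | rfl | rfl | ⟨i, rfl⟩)
        · rw [Sym2.mem_iff] at hve; rcases hve with hh | hh <;> simp at hh
        · left
          rw [Sym2.mem_iff] at hve
          rcases hve with hh | hh
          · simp at hh
          · obtain hh' : j = (0 : Fin (n + 2)) := by injection hh
            exact ⟨by simp [hh'], ccAux_A u⟩
        · right; left
          rw [Sym2.mem_iff] at hve
          rcases hve with hh | hh
          · simp at hh
          · obtain hh' : j = Fin.last (n + 1) := by injection hh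
            exact ⟨by rw [hh', Fin.val_last], ccAux_B u⟩
        · right; right
          refine ⟨i.val, ?_, by omega, ccAux_P i⟩
          rw [Sym2.mem_iff] at hve
          rcases hve with hh | hh
          · obtain hh' : j = i.castSucc := by injection hh
            exact Or.inl (by rw [hh', Fin.coe_castSucc])
          · obtain hh' : j = i.succ := by injection hh
            exact Or.inr (by rw [hh', Fin.val_succ])
      intro a ha b hb k hak hkb
      have ha' := hmem a ha
      have hb' := hmem b hb
      have hk : k = a ∨ k = b := by
        rcases ha' with ⟨hja, rfl⟩ | ⟨hja, rfl⟩ | ⟨iv, hiv, hivn, rfl⟩ <;>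
          rcases hb' with ⟨hjb, rfl⟩ | ⟨hjb, rfl⟩ | ⟨iw, hiw, hiwn, rfl⟩ <;>
          rcases hy12 with ⟨hp1, hy'⟩ | ⟨hp1, hy'⟩ <;> omega
      rcases hk with rfl | rfl
      exacts [ha, hb]
end

section
/- For any graph G, θ_int(G) ≤ 2·⌈3Δ(G)/10⌉. -/
open SimpleGraph

variable {V : Type*}

open Finset

namespace VizingAux

set_option linter.unusedSectionVars false

variable {V : Type*} [Fintype V] [DecidableEq V] (G : SimpleGraph V) [DecidableRel G.Adj]

/-- Valid partial coloring with colors in `[1, D+1]`, `0` = uncolored. -/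
structure Valid (D : ℕ) (c : Sym2 V → ℕ) : Prop where
  le : ∀ ⦃x y : V⦄, G.Adj x y → c s(x, y) ≤ D + 1
  proper : ∀ ⦃x a b : V⦄, G.Adj x a → G.Adj x b → a ≠ b → c s(x, a) ≠ 0 →
      c s(x, a) ≠ c s(x, b)

/-- Colors in `[1, D+1]` not present at `x`. -/
def free (D : ℕ) (c : Sym2 V → ℕ) (x : V) : Finset ℕ :=
  (Finset.Icc 1 (D + 1)) \ (G.neighborFinset x).image fun y => c s(x, y)

lemma mem_free {D : ℕ} {c : Sym2 V → ℕ} {x : V} {n : ℕ} :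
    n ∈ free G D c x ↔ (1 ≤ n ∧ n ≤ D + 1) ∧ ∀ y, G.Adj x y → c s(x, y) ≠ n := by
  simp only [free, mem_sdiff, Finset.mem_Icc, mem_image, mem_neighborFinset, not_exists]
  constructor
  · rintro ⟨⟨h1, h2⟩, h3⟩
    exact ⟨⟨h1, h2⟩, fun y hy hc => h3 y ⟨hy, hc⟩⟩
  · rintro ⟨⟨h1, h2⟩, h3⟩
    exact ⟨⟨h1, h2⟩, fun y hyc => h3 y hyc.1 hyc.2⟩

lemma free_nonempty {D : ℕ} {c : Sym2 V → ℕ} (x : V) (hdeg : G.degree x ≤ D) :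
    (free G D c x).Nonempty := by
  have h1 : ((G.neighborFinset x).image fun y => c s(x, y)).card ≤ D := by
    calc ((G.neighborFinset x).image fun y => c s(x, y)).card
        ≤ (G.neighborFinset x).card := Finset.card_image_le
      _ ≤ D := by rwa [G.card_neighborFinset_eq_degree]
  have h3 := Finset.le_card_sdiff ((G.neighborFinset x).image fun y => c s(x, y))
    (Finset.Icc 1 (D + 1))
  rw [← Finset.card_pos]
  refine lt_of_lt_of_le ?_ h3
  rw [Nat.card_Icc]
  omega

lemma not_mem_free_iff {D : ℕ} {c : Sym2 V → ℕ} {x : V} {n : ℕ}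
    (h1 : 1 ≤ n) (h2 : n ≤ D + 1) :
    n ∉ free G D c x ↔ ∃ y, G.Adj x y ∧ c s(x, y) = n := by
  rw [mem_free]
  constructor
  · intro h
    by_contra hne
    push_neg at hne
    exact h ⟨⟨h1, h2⟩, fun y hy => hne y hy⟩
  · rintro ⟨y, hy, hc⟩ ⟨-, h⟩
    exact h y hy hc

end VizingAux

namespace VizingAux

set_option linter.unusedSectionVars false

variable {V : Type*} [Fintype V] [DecidableEq V] (G : SimpleGraph V) [DecidableRel G.Adj]

/-- Recolor the single edge `e₀` with color `γ`. -/
def upd (c : Sym2 V → ℕ) (e₀ : Sym2 V) (γ : ℕ) : Sym2 V → ℕ := fun e =>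
  if e = e₀ then γ else c e

lemma upd_self (c : Sym2 V → ℕ) (e₀ : Sym2 V) (γ : ℕ) : upd c e₀ γ e₀ = γ := by
  simp [upd]

lemma upd_ne (c : Sym2 V → ℕ) {e e₀ : Sym2 V} (γ : ℕ) (h : e ≠ e₀) : upd c e₀ γ e = c e := by
  simp [upd, h]

lemma sym2_eq_cases {u w x a : V} (h : s(x, a) = s(u, w)) : (x = u ∧ a = w) ∨ (x = w ∧ a = u) := by
  rw [Sym2.eq_iff] at h
  tauto

lemma valid_upd {D : ℕ} {c : Sym2 V → ℕ} (hv : Valid G D c) {u w : V} {γ : ℕ}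
    (huw : G.Adj u w) (hγu : γ ∈ free G D c u) (hγw : γ ∈ free G D c w) :
    Valid G D (upd c s(u, w) γ) := by
  obtain ⟨⟨hγ1, hγ2⟩, hfu⟩ := (mem_free G).mp hγu
  obtain ⟨-, hfw⟩ := (mem_free G).mp hγw
  constructor
  · intro x y hxy
    by_cases h : s(x, y) = s(u, w)
    · rw [h, upd_self]; exact hγ2
    · rw [upd_ne _ _ h]; exact hv.le hxy
  · intro x a b hxa hxb hab h0
    by_cases h1 : s(x, a) = s(u, w) <;> by_cases h2 : s(x, b) = s(u, w)
    · exact absurd (Sym2.congr_right.mp (h1.trans h2.symm)) hab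
    · rw [h1, upd_self, upd_ne _ _ h2]
      rcases sym2_eq_cases h1 with ⟨hx, -⟩ | ⟨hx, -⟩
      · subst hx; exact fun h => (hfu b hxb) h.symm
      · subst hx; exact fun h => (hfw b hxb) h.symm
    · rw [upd_ne _ _ h1] at h0 ⊢
      rw [h2, upd_self]
      rcases sym2_eq_cases h2 with ⟨hx, -⟩ | ⟨hx, -⟩
      · subst hx; exact hfu a hxa
      · subst hx; exact hfw a hxa
    · rw [upd_ne _ _ h1] at h0 ⊢
      rw [upd_ne _ _ h2]
      exact hv.proper hxa hxb hab h0

lemma free_upd_of_ne {D : ℕ} {c : Sym2 V → ℕ} {u w x : V} {γ : ℕ}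
    (hx : x ≠ u) (hx' : x ≠ w) : free G D (upd c s(u, w) γ) x = free G D c x := by
  ext n
  rw [mem_free G, mem_free G]
  have key : ∀ y, G.Adj x y → upd c s(u, w) γ s(x, y) = c s(x, y) := by
    intro y hy
    refine upd_ne _ _ fun h => ?_
    rcases sym2_eq_cases h with ⟨h1, -⟩ | ⟨h1, -⟩
    · exact hx h1
    · exact hx' h1
  constructor
  · rintro ⟨hb, h⟩
    exact ⟨hb, fun y hy => by rw [← key y hy]; exact h y hy⟩
  · rintro ⟨hb, h⟩
    exact ⟨hb, fun y hy => by rw [key y hy]; exact h y hy⟩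

lemma old_color_free_upd {D : ℕ} {c : Sym2 V → ℕ} (hv : Valid G D c) {u w : V} {γ : ℕ}
    (huw : G.Adj u w) (h0 : c s(u, w) ≠ 0) (hγ : γ ≠ c s(u, w)) :
    c s(u, w) ∈ free G D (upd c s(u, w) γ) u := by
  rw [mem_free G]
  refine ⟨⟨Nat.one_le_iff_ne_zero.mpr h0, hv.le huw⟩, fun y hy => ?_⟩
  by_cases h : s(u, y) = s(u, w)
  · rw [h, upd_self]
    exact fun hh => hγ hh
  · rw [upd_ne _ _ h]
    have hyw : y ≠ w := fun hyw => h (by rw [hyw])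
    exact fun hh => (hv.proper huw hy (fun hh' => hyw hh'.symm) h0) hh.symm

lemma upd_preserve {c : Sym2 V → ℕ} {e₀ : Sym2 V} {γ : ℕ} (hγ : γ ≠ 0) :
    ∀ e, c e ≠ 0 → upd c e₀ γ e ≠ 0 := by
  intro e h
  by_cases he : e = e₀
  · rw [he, upd_self]; exact hγ
  · rwa [upd_ne _ _ he]

end VizingAux

namespace VizingAux

set_option linter.unusedSectionVars false

variable {V : Type*} [Fintype V] [DecidableEq V] (G : SimpleGraph V) [DecidableRel G.Adj]

/-- The subgraph of edges colored `α` or `β`. -/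
def kg (c : Sym2 V → ℕ) (α β : ℕ) : SimpleGraph V where
  Adj x y := G.Adj x y ∧ (c s(x, y) = α ∨ c s(x, y) = β)
  symm := ⟨fun x y ⟨h, h2⟩ => ⟨h.symm, by rwa [Sym2.eq_swap]⟩⟩
  loopless := ⟨fun x ⟨h, _⟩ => G.loopless.irrefl x h⟩

open Classical in
/-- Swap colors `α`, `β` on the Kempe component of `r`. -/
noncomputable def flip (c : Sym2 V → ℕ) (α β : ℕ) (r : V) : Sym2 V → ℕ := fun e =>
  if (∃ x ∈ e, (kg G c α β).Reachable r x) ∧ (c e = α ∨ c e = β) then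
    (if c e = α then β else α) else c e

lemma reach_closure {c : Sym2 V → ℕ} {α β : ℕ} {r x y : V} (hxy : G.Adj x y)
    (hc : c s(x, y) = α ∨ c s(x, y) = β) (hx : (kg G c α β).Reachable r x) :
    (kg G c α β).Reachable r y :=
  hx.trans (SimpleGraph.Adj.reachable ⟨hxy, hc⟩)

lemma flip_of_not_color {c : Sym2 V → ℕ} {α β : ℕ} {r : V} {e : Sym2 V}
    (h : c e ≠ α) (h' : c e ≠ β) : flip G c α β r e = c e := by
  rw [flip, if_neg]
  rintro ⟨-, h1 | h1⟩ <;> tauto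

lemma flip_eq_iff_of_notin {c : Sym2 V → ℕ} {α β γ : ℕ} {r : V} {e : Sym2 V}
    (h : γ ≠ α) (h' : γ ≠ β) : (flip G c α β r e = γ ↔ c e = γ) := by
  rw [flip]
  split_ifs with h1 h2
  · omega
  · rcases h1.2 with h3 | h3 <;> omega
  · exact Iff.rfl

lemma flip_of_not_reach {c : Sym2 V → ℕ} {α β : ℕ} {r x y : V} (hxy : G.Adj x y)
    (hx : ¬ (kg G c α β).Reachable r x) : flip G c α β r s(x, y) = c s(x, y) := by
  rw [flip, if_neg]
  rintro ⟨⟨z, hz, hrz⟩, hc⟩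
  rw [Sym2.mem_iff] at hz
  rcases hz with rfl | rfl
  · exact hx hrz
  · exact hx (reach_closure G (hxy.symm) (by rwa [Sym2.eq_swap]) hrz)

lemma flip_of_reach {c : Sym2 V → ℕ} {α β : ℕ} {r x y : V} (hx : (kg G c α β).Reachable r x)
    (hc : c s(x, y) = α ∨ c s(x, y) = β) :
    flip G c α β r s(x, y) = (if c s(x, y) = α then β else α) := by
  rw [flip, if_pos]
  exact ⟨⟨x, Sym2.mem_mk_left x y, hx⟩, hc⟩

lemma flip_zero_iff {c : Sym2 V → ℕ} {α β : ℕ} {r : V} {e : Sym2 V}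
    (hα : 1 ≤ α) (hβ : 1 ≤ β) : flip G c α β r e = 0 ↔ c e = 0 := by
  rw [flip]
  split_ifs with h1 h2
  · omega
  · rcases h1.2 with h3 | h3 <;> omega
  · exact Iff.rfl

lemma valid_flip {D : ℕ} {c : Sym2 V → ℕ} (hv : Valid G D c) {α β : ℕ} {r : V}
    (hαβ : α ≠ β) (hα1 : 1 ≤ α) (hα2 : α ≤ D + 1) (hβ1 : 1 ≤ β) (hβ2 : β ≤ D + 1) :
    Valid G D (flip G c α β r) := by
  constructor
  · intro x y hxy
    rw [flip]
    split_ifs with h1 h2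
    · exact hβ2
    · exact hα2
    · exact hv.le hxy
  · intro x a b hxa hxb hab h0
    by_cases hx : (kg G c α β).Reachable r x
    · -- all α/β edges at x are flipped
      have key : ∀ y, G.Adj x y →
          flip G c α β r s(x, y) = (if c s(x, y) = α then β else if c s(x, y) = β then α
            else c s(x, y)) := by
        intro y hy
        by_cases hca : c s(x, y) = α
        · rw [flip_of_reach G hx (Or.inl hca), if_pos hca, if_pos hca]
        · by_cases hcb : c s(x, y) = β
          · rw [flip_of_reach G hx (Or.inr hcb), if_neg hca, if_neg hca, if_pos hcb]
          · rw [flip_of_not_color G hca hcb, if_neg hca, if_neg hcb]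
      rw [key a hxa, key b hxb]
      rw [key a hxa] at h0
      have hprop : c s(x, a) ≠ 0 → c s(x, a) ≠ c s(x, b) := hv.proper hxa hxb hab
      split_ifs at * <;> omega
    · have key : ∀ y, G.Adj x y → flip G c α β r s(x, y) = c s(x, y) :=
        fun y hy => flip_of_not_reach G hy hx
      rw [key a hxa, key b hxb]
      rw [key a hxa] at h0
      exact hv.proper hxa hxb hab h0

lemma free_flip_of_not_reach {D : ℕ} {c : Sym2 V → ℕ} {α β : ℕ} {r x : V}
    (hx : ¬ (kg G c α β).Reachable r x) :
    free G D (flip G c α β r) x = free G D c x := by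
  ext n
  rw [mem_free G, mem_free G]
  have key : ∀ y, G.Adj x y → flip G c α β r s(x, y) = c s(x, y) :=
    fun y hy => flip_of_not_reach G hy hx
  constructor
  · rintro ⟨hb, h⟩
    exact ⟨hb, fun y hy => by rw [← key y hy]; exact h y hy⟩
  · rintro ⟨hb, h⟩
    exact ⟨hb, fun y hy => by rw [key y hy]; exact h y hy⟩

lemma free_flip_of_notin {D : ℕ} {c : Sym2 V → ℕ} {α β γ : ℕ} {r x : V}
    (h : γ ≠ α) (h' : γ ≠ β) :
    (γ ∈ free G D (flip G c α β r) x ↔ γ ∈ free G D c x) := by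
  rw [mem_free G, mem_free G]
  constructor
  · rintro ⟨hb, hh⟩
    refine ⟨hb, fun y hy hc => hh y hy ?_⟩
    exact (flip_eq_iff_of_notin G h h').mpr hc
  · rintro ⟨hb, hh⟩
    refine ⟨hb, fun y hy hc => hh y hy ?_⟩
    exact (flip_eq_iff_of_notin G h h').mp hc

lemma alpha_free_flip {D : ℕ} {c : Sym2 V → ℕ} {α β : ℕ} {r x : V}
    (hx : (kg G c α β).Reachable r x) (hβ : β ∈ free G D c x)
    (hα1 : 1 ≤ α) (hα2 : α ≤ D + 1) (hαβ : α ≠ β) :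
    α ∈ free G D (flip G c α β r) x := by
  rw [mem_free G]
  obtain ⟨-, hβf⟩ := (mem_free G).mp hβ
  refine ⟨⟨hα1, hα2⟩, fun y hy => ?_⟩
  by_cases hca : c s(x, y) = α
  · rw [flip_of_reach G hx (Or.inl hca), if_pos hca]
    exact fun hh => hαβ hh.symm
  · by_cases hcb : c s(x, y) = β
    · exact absurd hcb (hβf y hy)
    · rw [flip_of_not_color G hca hcb]
      exact hca

lemma flip_preserve {c : Sym2 V → ℕ} {α β : ℕ} {r : V} (hα : 1 ≤ α) (hβ : 1 ≤ β) :
    ∀ e, c e ≠ 0 → flip G c α β r e ≠ 0 := by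
  intro e h hh
  exact h ((flip_zero_iff G hα hβ).mp hh)

end VizingAux

namespace VizingAux

set_option linter.unusedSectionVars false
set_option linter.unusedVariables false

variable {V : Type*} [Fintype V] [DecidableEq V] (G : SimpleGraph V) [DecidableRel G.Adj]

lemma path_unique {K : SimpleGraph V}
    (hdeg2 : ∀ x y₁ y₂ y₃, K.Adj x y₁ → K.Adj x y₂ → K.Adj x y₃ →
      (y₁ = y₂ ∨ y₁ = y₃ ∨ y₂ = y₃)) :
    ∀ {w a b : V} (p : K.Walk w a) {t : V} (q : K.Walk w b), p.IsPath → q.IsPath →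
      K.Adj t w → t ∉ p.support → t ∉ q.support →
      (∀ y y', K.Adj a y → K.Adj a y' → y = y') →
      (∀ y y', K.Adj b y → K.Adj b y' → y = y') → a = b := by
  intro w a b p
  induction p with
  | nil =>
    intro t q hp hq htw htp htq ha hb
    cases q with
    | nil => rfl
    | @cons _ y _ hadj q' =>
      exfalso
      have hyt : y = t := ha y t hadj htw.symm
      apply htq
      rw [SimpleGraph.Walk.support_cons]
      right
      rw [← hyt]
      exact SimpleGraph.Walk.start_mem_support q'
  | @cons w1 y a1 hadj p' ih =>
    intro t q hp hq htw htp htq ha hb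
    cases q with
    | nil =>
      exfalso
      have hyt : y = t := hb y t hadj htw.symm
      apply htp
      rw [SimpleGraph.Walk.support_cons]
      right
      rw [← hyt]
      exact SimpleGraph.Walk.start_mem_support p'
    | @cons _ z _ hadj2 q' =>
      have hyz : y = z := by
        rcases hdeg2 w1 t y z htw.symm hadj hadj2 with h | h | h
        · exfalso; subst h; apply htp
          rw [SimpleGraph.Walk.support_cons]
          right; exact SimpleGraph.Walk.start_mem_support p'
        · exfalso; subst h; apply htq
          rw [SimpleGraph.Walk.support_cons]
          right; exact SimpleGraph.Walk.start_mem_support q'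
        · exact h
      subst hyz
      have hp' := (SimpleGraph.Walk.cons_isPath_iff _ _).mp hp
      have hq' := (SimpleGraph.Walk.cons_isPath_iff _ _).mp hq
      exact ih q' hp'.1 hq'.1 hadj hp'.2 hq'.2 ha hb

end VizingAux

namespace VizingAux

set_option linter.unusedSectionVars false
set_option linter.unusedVariables false

variable {V : Type*} [Fintype V] [DecidableEq V] (G : SimpleGraph V) [DecidableRel G.Adj]

lemma kg_unique_color {D : ℕ} {c : Sym2 V → ℕ} (hv : Valid G D c) {α β : ℕ}
    (hα : 1 ≤ α) (hβ : 1 ≤ β) :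
    ∀ x y y', (kg G c α β).Adj x y → (kg G c α β).Adj x y' →
      c s(x, y) = c s(x, y') → y = y' := by
  intro x y y' h1 h2 hc
  by_contra hne
  have h0 : c s(x, y) ≠ 0 := by rcases h1.2 with e | e <;> omega
  exact hv.proper h1.1 h2.1 hne h0 hc

lemma not_both_reachable {D : ℕ} {c : Sym2 V → ℕ} (hv : Valid G D c) {α β : ℕ}
    (hαβ : α ≠ β) (hα : 1 ≤ α) (hβ : 1 ≤ β) {u a b : V}
    (hau : a ≠ u) (hbu : b ≠ u) (hab : a ≠ b)
    (hu : ∀ y, G.Adj u y → c s(u, y) ≠ α)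
    (haf : ∀ y, G.Adj a y → c s(a, y) ≠ β)
    (hbf : ∀ y, G.Adj b y → c s(b, y) ≠ β)
    (ra : (kg G c α β).Reachable u a) (rb : (kg G c α β).Reachable u b) : False := by
  set K := kg G c α β with hK
  have hcol := kg_unique_color G hv (α := α) (β := β) hα hβ
  have hdeg2 : ∀ x y₁ y₂ y₃, K.Adj x y₁ → K.Adj x y₂ → K.Adj x y₃ →
      (y₁ = y₂ ∨ y₁ = y₃ ∨ y₂ = y₃) := by
    intro x y1 y2 y3 h1 h2 h3
    rcases h1.2 with e1 | e1 <;> rcases h2.2 with e2 | e2 <;> rcases h3.2 with e3 | e3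
    · exact Or.inl (hcol x y1 y2 h1 h2 (e1.trans e2.symm))
    · exact Or.inl (hcol x y1 y2 h1 h2 (e1.trans e2.symm))
    · exact Or.inr (Or.inl (hcol x y1 y3 h1 h3 (e1.trans e3.symm)))
    · exact Or.inr (Or.inr (hcol x y2 y3 h2 h3 (e2.trans e3.symm)))
    · exact Or.inr (Or.inr (hcol x y2 y3 h2 h3 (e2.trans e3.symm)))
    · exact Or.inr (Or.inl (hcol x y1 y3 h1 h3 (e1.trans e3.symm)))
    · exact Or.inl (hcol x y1 y2 h1 h2 (e1.trans e2.symm))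
    · exact Or.inl (hcol x y1 y2 h1 h2 (e1.trans e2.symm))
  have hua : ∀ y y', K.Adj u y → K.Adj u y' → y = y' := by
    intro y y' h1 h2
    have e1 : c s(u, y) = β := (h1.2).resolve_left (hu y h1.1)
    have e2 : c s(u, y') = β := (h2.2).resolve_left (hu y' h2.1)
    exact hcol u y y' h1 h2 (e1.trans e2.symm)
  have hauniq : ∀ y y', K.Adj a y → K.Adj a y' → y = y' := by
    intro y y' h1 h2
    have e1 : c s(a, y) = α := (h1.2).resolve_right (haf y h1.1)
    have e2 : c s(a, y') = α := (h2.2).resolve_right (haf y' h2.1)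
    exact hcol a y y' h1 h2 (e1.trans e2.symm)
  have hbuniq : ∀ y y', K.Adj b y → K.Adj b y' → y = y' := by
    intro y y' h1 h2
    have e1 : c s(b, y) = α := (h1.2).resolve_right (hbf y h1.1)
    have e2 : c s(b, y') = α := (h2.2).resolve_right (hbf y' h2.1)
    exact hcol b y y' h1 h2 (e1.trans e2.symm)
  obtain ⟨wa⟩ := ra
  obtain ⟨wb⟩ := rb
  obtain ⟨p, hp⟩ := wa.toPath
  obtain ⟨q, hq⟩ := wb.toPath
  cases p with
  | nil => exact hau rfl
  | @cons _ y _ hadj p' =>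
    cases q with
    | nil => exact hbu rfl
    | @cons _ z _ hadj2 q' =>
      have hyz : y = z := hua y z hadj hadj2
      subst hyz
      have hp' := (SimpleGraph.Walk.cons_isPath_iff _ _).mp hp
      have hq' := (SimpleGraph.Walk.cons_isPath_iff _ _).mp hq
      exact hab (path_unique hdeg2 p' q' hp'.1 hq'.1 hadj hp'.2 hq'.2 hauniq hbuniq)

end VizingAux

namespace VizingAux

set_option linter.unusedSectionVars false
set_option linter.unusedVariables false

variable {V : Type*} [Fintype V] [DecidableEq V] (G : SimpleGraph V) [DecidableRel G.Adj]

lemma sym2_congr_right {u x y : V} : s(u, x) = s(u, y) ↔ x = y := Sym2.congr_right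

/-- Rotating a fan whose top vertex has a color free at `u` too. -/
lemma finish {D : ℕ} {u : V} :
    ∀ (m : ℕ) (c : Sym2 V → ℕ) (fan : ℕ → V) (βf : ℕ → ℕ), Valid G D c →
    (∀ i ≤ m, G.Adj u (fan i)) →
    (∀ i ≤ m, ∀ j ≤ m, fan i = fan j → i = j) →
    c s(u, fan 0) = 0 →
    (∀ i < m, c s(u, fan (i + 1)) = βf i) →
    (∀ i < m, βf i ∈ free G D c (fan i)) →
    ∀ γ, γ ∈ free G D c u → γ ∈ free G D c (fan m) →
    ∃ c', Valid G D c' ∧ (∀ e, c e ≠ 0 → c' e ≠ 0) ∧ c' s(u, fan 0) ≠ 0 := by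
  intro m
  induction m with
  | zero =>
    intro c fan βf hv hadj hinj h0 hcol hfree γ hγu hγ0
    have hγ1 : 1 ≤ γ := ((mem_free G).mp hγu).1.1
    refine ⟨upd c s(u, fan 0) γ, valid_upd G hv (hadj 0 le_rfl) hγu hγ0,
      upd_preserve (by omega), ?_⟩
    rw [upd_self]
    omega
  | succ m ih =>
    intro c fan βf hv hadj hinj h0 hcol hfree γ hγu hγm
    have hadjm1 : G.Adj u (fan (m + 1)) := hadj _ le_rfl
    have hγ1 : 1 ≤ γ := ((mem_free G).mp hγu).1.1
    have hβm_col : c s(u, fan (m + 1)) = βf m := hcol m (Nat.lt_succ_self m)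
    have hβm_pos : 1 ≤ βf m := ((mem_free G).mp (hfree m (Nat.lt_succ_self m))).1.1
    have hγne : γ ≠ βf m := by
      have := ((mem_free G).mp hγu).2 (fan (m + 1)) hadjm1
      rw [hβm_col] at this
      exact fun h => this h.symm
    set c₁ := upd c s(u, fan (m + 1)) γ with hc₁
    have hv₁ : Valid G D c₁ := valid_upd G hv hadjm1 hγu hγm
    have hne_top : ∀ i, i ≤ m → fan i ≠ fan (m + 1) := by
      intro i hi h
      have := hinj i (by omega) (m + 1) le_rfl h
      omega
    have hne_u : ∀ i, i ≤ m + 1 → fan i ≠ u := fun i hi => (hadj i hi).ne'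
    obtain ⟨c', hv', hpres', h0'⟩ :=
      ih c₁ fan βf hv₁ (fun i hi => hadj i (by omega))
        (fun i hi j hj h => hinj i (by omega) j (by omega) h)
        (by
          rw [hc₁, upd_ne]
          · exact h0
          · rw [Ne, sym2_congr_right]
            exact hne_top 0 (by omega))
        (fun i hi => by
          rw [hc₁, upd_ne]
          · exact hcol i (by omega)
          · rw [Ne, sym2_congr_right]
            intro h
            have := hinj (i + 1) (by omega) (m + 1) le_rfl h
            omega)
        (fun i hi => by
          rw [hc₁, free_upd_of_ne G (hne_u i (by omega)) (hne_top i (by omega))]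
          exact hfree i (by omega))
        (βf m)
        (by
          have := old_color_free_upd G hv hadjm1 (by omega) (by rw [hβm_col]; exact hγne)
          rwa [hβm_col] at this)
        (by
          rw [hc₁, free_upd_of_ne G (hne_u m (by omega)) (hne_top m le_rfl)]
          exact hfree m (Nat.lt_succ_self m))
    exact ⟨c', hv', fun e he => hpres' e (upd_preserve (by omega) e he), h0'⟩

end VizingAux

namespace VizingAux

set_option linter.unusedSectionVars false
set_option linter.unusedVariables false

variable {V : Type*} [Fintype V] [DecidableEq V] (G : SimpleGraph V) [DecidableRel G.Adj]

lemma step {D : ℕ} (hdeg : ∀ x, G.degree x ≤ D) {u : V} :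
    ∀ (M n : ℕ) (c : Sym2 V → ℕ) (fan : ℕ → V) (βf : ℕ → ℕ),
    Fintype.card V ≤ n + M → Valid G D c →
    (∀ i ≤ n, G.Adj u (fan i)) →
    (∀ i ≤ n, ∀ j ≤ n, fan i = fan j → i = j) →
    c s(u, fan 0) = 0 →
    (∀ i < n, c s(u, fan (i + 1)) = βf i) →
    (∀ i < n, βf i ∈ free G D c (fan i)) →
    (∀ i < n, βf i ∉ free G D c u) →
    ∃ c', Valid G D c' ∧ (∀ e, c e ≠ 0 → c' e ≠ 0) ∧ c' s(u, fan 0) ≠ 0 := by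
  intro M
  induction M with
  | zero =>
    intro n c fan βf hcard hv hadj hinj h0 hcol hfree hnfree
    exfalso
    have : Function.Injective (fun i : Fin (n + 1) => fan i.val) := by
      intro i j h
      exact Fin.ext (hinj i.val (by omega) j.val (by omega) h)
    have := Fintype.card_le_of_injective _ this
    rw [Fintype.card_fin] at this
    omega
  | succ M ih =>
    intro n c fan βf hcard hv hadj hinj h0 hcol hfree hnfree
    -- the colors βf are injective below n
    have hβinj : ∀ i < n, ∀ j < n, βf i = βf j → i = j := by
      intro i hi j hj h
      by_contra hne
      have h1 : c s(u, fan (i + 1)) = βf i := hcol i hi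
      have h2 : c s(u, fan (j + 1)) = βf j := hcol j hj
      have hfne : fan (i + 1) ≠ fan (j + 1) := by
        intro hf
        have := hinj (i + 1) (by omega) (j + 1) (by omega) hf
        omega
      have hpos : 1 ≤ βf i := ((mem_free G).mp (hfree i hi)).1.1
      exact hv.proper (hadj (i + 1) (by omega)) (hadj (j + 1) (by omega)) hfne
        (by omega) (by rw [h1, h2, h])
    obtain ⟨β, hβ⟩ := free_nonempty G (fan n) (hdeg _)
    have hβb := ((mem_free G).mp hβ).1
    by_cases hcase : β ∈ free G D c u
    · exact finish G n c fan βf hv hadj hinj h0 hcol hfree β hcase hβ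
    · obtain ⟨w, hw_adj, hw_c⟩ := (not_mem_free_iff G hβb.1 hβb.2).mp hcase
      by_cases hwfan : ∃ j, j ≤ n ∧ fan j = w
      · -- Kempe chain case
        obtain ⟨j, hj, hfj⟩ := hwfan
        have hj0 : j ≠ 0 := by
          intro h
          subst h
          rw [hfj, hw_c] at h0
          omega
        obtain ⟨j', rfl⟩ : ∃ j', j = j' + 1 := ⟨j - 1, by omega⟩
        have hj'n : j' < n := by omega
        have hβj : βf j' = β := by
          have := hcol j' hj'n
          rw [hfj, hw_c] at this
          exact this.symm
        obtain ⟨α, hα⟩ := free_nonempty G u (hdeg _)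
        have hαb := ((mem_free G).mp hα).1
        have hαβ : α ≠ β := fun h => hcase (h ▸ hα)
        have hufree_α : ∀ y, G.Adj u y → c s(u, y) ≠ α := ((mem_free G).mp hα).2
        have hafreeβ : ∀ y, G.Adj (fan j') y → c s(fan j', y) ≠ β := by
          have := ((mem_free G).mp (hfree j' hj'n)).2
          rwa [hβj] at this
        have haβmem : β ∈ free G D c (fan j') := hβj ▸ hfree j' hj'n
        have hbfreeβ : ∀ y, G.Adj (fan n) y → c s(fan n, y) ≠ β := ((mem_free G).mp hβ).2
        have hane : fan j' ≠ u := (hadj j' (by omega)).ne'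
        have hbne : fan n ≠ u := (hadj n le_rfl).ne'
        have hab : fan j' ≠ fan n := by
          intro h
          have := hinj j' (by omega) n le_rfl h
          omega
        by_cases hreach : (kg G c α β).Reachable (fan j') u
        · -- flip the component of `fan n`
          have hreachb : ¬ (kg G c α β).Reachable (fan n) u := by
            intro hr
            exact not_both_reachable G hv hαβ hαb.1 hβb.1 hane hbne hab hufree_α
              hafreeβ hbfreeβ hreach.symm hr.symm
          have hreacha : ¬ (kg G c α β).Reachable (fan n) (fan j') := by
            intro hr
            exact hreachb (hr.trans hreach)
          set c₁ := flip G c α β (fan n) with hc₁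
          have hv₁ : Valid G D c₁ :=
            valid_flip G hv hαβ hαb.1 hαb.2 hβb.1 hβb.2
          obtain ⟨c', hv', hpres', h0'⟩ :=
            finish G n c₁ fan βf hv₁ hadj hinj
              (by rw [hc₁, flip_zero_iff G hαb.1 hβb.1]; exact h0)
              (fun i hi => by
                rw [hc₁, flip_of_not_reach G (hadj (i + 1) (by omega)) hreachb]
                exact hcol i hi)
              (fun i hi => by
                by_cases hij : i = j'
                · subst hij
                  rw [hc₁, free_flip_of_not_reach G hreacha, hβj]
                  exact haβmem
                · have h1 : βf i ≠ α := fun h => (hnfree i hi) (h ▸ hα)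
                  have h2 : βf i ≠ β := by
                    rw [← hβj]
                    intro h
                    exact hij (hβinj i hi j' hj'n h)
                  rw [hc₁]
                  exact (free_flip_of_notin G h1 h2).mpr (hfree i hi))
              α
              (by rw [hc₁, free_flip_of_not_reach G hreachb]; exact hα)
              (by
                rw [hc₁]
                exact alpha_free_flip G (SimpleGraph.Reachable.refl _) hβ hαb.1 hαb.2 hαβ)
          exact ⟨c', hv', fun e he => hpres' e (flip_preserve G hαb.1 hβb.1 e he), h0'⟩
        · -- flip the component of `fan j'`
          set c₁ := flip G c α β (fan j') with hc₁
          have hv₁ : Valid G D c₁ :=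
            valid_flip G hv hαβ hαb.1 hαb.2 hβb.1 hβb.2
          obtain ⟨c', hv', hpres', h0'⟩ :=
            finish G j' c₁ fan βf hv₁ (fun i hi => hadj i (by omega))
              (fun i hi j hj h => hinj i (by omega) j (by omega) h)
              (by rw [hc₁, flip_zero_iff G hαb.1 hβb.1]; exact h0)
              (fun i hi => by
                rw [hc₁, flip_of_not_reach G (hadj (i + 1) (by omega)) hreach]
                exact hcol i (by omega))
              (fun i hi => by
                have h1 : βf i ≠ α := fun h => (hnfree i (by omega)) (h ▸ hα)
                have h2 : βf i ≠ β := by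
                  rw [← hβj]
                  intro h
                  have := hβinj i (by omega) j' hj'n h
                  omega
                rw [hc₁]
                exact (free_flip_of_notin G h1 h2).mpr (hfree i (by omega)))
              α
              (by rw [hc₁, free_flip_of_not_reach G hreach]; exact hα)
              (by
                rw [hc₁]
                exact alpha_free_flip G (SimpleGraph.Reachable.refl _) haβmem hαb.1 hαb.2 hαβ)
          exact ⟨c', hv', fun e he => hpres' e (flip_preserve G hαb.1 hβb.1 e he), h0'⟩
      · -- extend the fan
        push_neg at hwfan
        set fan' := Function.update fan (n + 1) w with hfan'
        set βf' := Function.update βf n β with hβf'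
        have hfan'_lt : ∀ i, i ≤ n → fan' i = fan i := by
          intro i hi
          rw [hfan', Function.update_of_ne (by omega) _ _]
        have hβf'_lt : ∀ i, i < n → βf' i = βf i := by
          intro i hi
          rw [hβf', Function.update_of_ne (by omega) _ _]
        have htop : fan' (n + 1) = w := by
          rw [hfan']; exact Function.update_self _ _ _
        have htopβ : βf' n = β := by
          rw [hβf']; exact Function.update_self _ _ _
        obtain ⟨c', hv', hpres', h0'⟩ :=
          ih (n + 1) c fan' βf' (by omega) hv
            (fun i hi => by
              by_cases h : i = n + 1
              · rw [h, htop]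
                exact hw_adj
              · rw [hfan'_lt i (by omega)]
                exact hadj i (by omega))
            (fun i hi j hj h => by
              by_cases h1 : i = n + 1 <;> by_cases h2 : j = n + 1
              · omega
              · exfalso
                rw [h1, htop, hfan'_lt j (by omega)] at h
                exact hwfan j (by omega) h.symm
              · exfalso
                rw [h2, htop, hfan'_lt i (by omega)] at h
                exact hwfan i (by omega) h
              · rw [hfan'_lt i (by omega), hfan'_lt j (by omega)] at h
                exact hinj i (by omega) j (by omega) h)
            (by rw [hfan'_lt 0 (by omega)]; exact h0)
            (fun i hi => by
              by_cases h : i = n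
              · rw [h, htop, htopβ]
                exact hw_c
              · rw [hfan'_lt (i + 1) (by omega), hβf'_lt i (by omega)]
                exact hcol i (by omega))
            (fun i hi => by
              by_cases h : i = n
              · rw [h, htopβ, hfan'_lt n le_rfl]
                exact hβ
              · rw [hfan'_lt i (by omega), hβf'_lt i (by omega)]
                exact hfree i (by omega))
            (fun i hi => by
              by_cases h : i = n
              · rw [h, htopβ]
                exact hcase
              · rw [hβf'_lt i (by omega)]
                exact hnfree i (by omega))
        refine ⟨c', hv', hpres', ?_⟩
        rwa [hfan'_lt 0 (by omega)] at h0'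

end VizingAux

namespace VizingAux

set_option linter.unusedSectionVars false
set_option linter.unusedVariables false

variable {V : Type*} [Fintype V] [DecidableEq V] (G : SimpleGraph V) [DecidableRel G.Adj]

lemma extend_one {D : ℕ} (hdeg : ∀ x, G.degree x ≤ D) {u v : V} {c : Sym2 V → ℕ}
    (hv : Valid G D c) (huv : G.Adj u v) (h0 : c s(u, v) = 0) :
    ∃ c', Valid G D c' ∧ (∀ e, c e ≠ 0 → c' e ≠ 0) ∧ c' s(u, v) ≠ 0 := by
  have := step G hdeg (u := u) (Fintype.card V) 0 c (fun _ => v) (fun _ => 0)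
    (by omega) hv (fun i hi => huv) (fun i hi j hj h => by omega) h0
    (by omega) (by omega) (by omega)
  exact this

lemma exists_full {D : ℕ} (hdeg : ∀ x, G.degree x ≤ D) :
    ∃ c : Sym2 V → ℕ, Valid G D c ∧ ∀ ⦃x y : V⦄, G.Adj x y → c s(x, y) ≠ 0 := by
  suffices h : ∀ (N : ℕ) (c : Sym2 V → ℕ), Valid G D c →
      (G.edgeFinset.filter fun e => c e = 0).card ≤ N →
      ∃ c' : Sym2 V → ℕ, Valid G D c' ∧ ∀ ⦃x y : V⦄, G.Adj x y → c' s(x, y) ≠ 0 by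
    refine h (G.edgeFinset.filter fun e => (fun _ => 0) e = 0).card (fun _ => 0)
      ⟨fun x y h => by omega, fun x a b h1 h2 h3 h4 => absurd rfl h4⟩ le_rfl
  intro N
  induction N with
  | zero =>
    intro c hv hcard
    refine ⟨c, hv, fun x y hxy h0 => ?_⟩
    have hmem : s(x, y) ∈ G.edgeFinset.filter fun e => c e = 0 := by
      rw [Finset.mem_filter, mem_edgeFinset, mem_edgeSet]
      exact ⟨hxy, h0⟩
    rw [Nat.le_zero, Finset.card_eq_zero] at hcard
    rw [hcard] at hmem
    exact absurd hmem (Finset.notMem_empty _)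
  | succ N ihN =>
    intro c hv hcard
    by_cases hall : (G.edgeFinset.filter fun e => c e = 0).card = 0
    · refine ⟨c, hv, fun x y hxy h0 => ?_⟩
      have hmem : s(x, y) ∈ G.edgeFinset.filter fun e => c e = 0 := by
        rw [Finset.mem_filter, mem_edgeFinset, mem_edgeSet]
        exact ⟨hxy, h0⟩
      rw [Finset.card_eq_zero] at hall
      rw [hall] at hmem
      exact absurd hmem (Finset.notMem_empty _)
    · obtain ⟨e, he⟩ := (Finset.card_pos.mp (Nat.pos_of_ne_zero hall)).exists_mem
      obtain ⟨hee, he0⟩ := Finset.mem_filter.mp he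
      obtain ⟨u, v, rfl⟩ : ∃ u v, e = s(u, v) := Sym2.ind (fun x y => ⟨x, y, rfl⟩) e
      have huv : G.Adj u v := (mem_edgeSet G).mp (mem_edgeFinset.mp hee)
      obtain ⟨c₁, hv₁, hpres, hnz⟩ := extend_one G hdeg hv huv he0
      refine ihN c₁ hv₁ ?_
      have hsub : (G.edgeFinset.filter fun e => c₁ e = 0) ⊆
          (G.edgeFinset.filter fun e => c e = 0).erase s(u, v) := by
        intro e' he'
        obtain ⟨he'1, he'2⟩ := Finset.mem_filter.mp he'
        rw [Finset.mem_erase]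
        refine ⟨fun h => hnz (h ▸ he'2), Finset.mem_filter.mpr ⟨he'1, ?_⟩⟩
        by_contra h
        exact hpres e' h he'2
      calc (G.edgeFinset.filter fun e => c₁ e = 0).card
          ≤ ((G.edgeFinset.filter fun e => c e = 0).erase s(u, v)).card :=
            Finset.card_le_card hsub
        _ ≤ N := by
            rw [Finset.card_erase_of_mem he]
            omega

lemma vizing {D : ℕ} (hdeg : ∀ x, G.degree x ≤ D) :
    ∃ c : Sym2 V → ℕ, (∀ e ∈ G.edgeSet, 1 ≤ c e ∧ c e ≤ D + 1) ∧
      ∀ e₁ ∈ G.edgeSet, ∀ e₂ ∈ G.edgeSet, e₁ ≠ e₂ → (∃ x, x ∈ e₁ ∧ x ∈ e₂) →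
        c e₁ ≠ c e₂ := by
  obtain ⟨c, hv, hnz⟩ := exists_full G hdeg
  refine ⟨c, fun e he => ?_, ?_⟩
  · obtain ⟨u, v, rfl⟩ : ∃ u v, e = s(u, v) := Sym2.ind (fun x y => ⟨x, y, rfl⟩) e
    have huv : G.Adj u v := (mem_edgeSet G).mp he
    have := hnz huv
    exact ⟨by omega, hv.le huv⟩
  · rintro e₁ he₁ e₂ he₂ hne ⟨x, hx₁, hx₂⟩
    obtain ⟨a, rfl⟩ := Sym2.mem_iff_exists.mp hx₁
    obtain ⟨b, rfl⟩ := Sym2.mem_iff_exists.mp hx₂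
    have hxa : G.Adj x a := (mem_edgeSet G).mp he₁
    have hxb : G.Adj x b := (mem_edgeSet G).mp he₂
    have hab : a ≠ b := fun h => hne (by rw [h])
    exact hv.proper hxa hxb hab (hnz hxa)

end VizingAux

theorem intervalThickness_le_of_maxDegree [Fintype V] [DecidableEq V]
    (G : SimpleGraph V) [DecidableRel G.Adj] :
    intervalThickness G ≤ 2 * ((3 * G.maxDegree + 9) / 10) := by
  by_cases hΔ : G.maxDegree = 0
  · -- no edges at all
    have hempty : ∀ e ∈ G.edgeSet, False := by
      intro e he
      obtain ⟨x, y, rfl⟩ : ∃ u v, e = s(u, v) := Sym2.ind (fun a b => ⟨a, b, rfl⟩) e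
      have hxy : G.Adj x y := (SimpleGraph.mem_edgeSet G).mp he
      have h1 : 0 < G.degree x := (G.degree_pos_iff_exists_adj x).mpr ⟨y, hxy⟩
      have h2 := G.degree_le_maxDegree x
      omega
    have h0 : IntervalDecomposition G 0 :=
      ⟨Fin.elim0, fun i => i.elim0, fun i => i.elim0, fun e he => absurd (hempty e he) not_false⟩
    exact le_trans (Nat.sInf_le h0) (Nat.zero_le _)
  · set Δ := G.maxDegree with hΔdef
    set k := 2 * ((3 * Δ + 9) / 10) with hk
    have hkb : Δ + 1 ≤ 2 * k := by omega
    obtain ⟨c, hcb, hcp⟩ := VizingAux.vizing G (D := Δ) G.degree_le_maxDegree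
    set H : Fin k → SimpleGraph V := fun i =>
      { Adj := fun x y => G.Adj x y ∧ (c s(x, y) = 2 * i.val + 1 ∨ c s(x, y) = 2 * i.val + 2)
        symm := ⟨fun x y h => ⟨h.1.symm, by rw [Sym2.eq_swap]; exact h.2⟩⟩
        loopless := ⟨fun x h => G.loopless.irrefl x h.1⟩ } with hH
    have hHadj : ∀ (i : Fin k) (x y : V), (H i).Adj x y ↔
        G.Adj x y ∧ (c s(x, y) = 2 * i.val + 1 ∨ c s(x, y) = 2 * i.val + 2) := by
      intro i x y
      rw [hH]
    have hHedge : ∀ (i : Fin k) (e : Sym2 V), e ∈ (H i).edgeSet ↔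
        e ∈ G.edgeSet ∧ (c e = 2 * i.val + 1 ∨ c e = 2 * i.val + 2) := by
      intro i e
      obtain ⟨x, y, rfl⟩ : ∃ u v, e = s(u, v) := Sym2.ind (fun a b => ⟨a, b, rfl⟩) e
      rw [SimpleGraph.mem_edgeSet, SimpleGraph.mem_edgeSet, hHadj]
    have hle : ∀ i, H i ≤ G := by
      intro i x y h
      exact ((hHadj i x y).mp h).1
    have hcolorable : ∀ i, IntervalColorable (H i) := by
      intro i
      refine ⟨fun e => c e - 2 * i.val, ?_, ?_, ?_⟩
      · -- proper
        rintro e₁ he₁ e₂ he₂ hne ⟨x, hx₁, hx₂⟩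
        obtain ⟨hg₁, hc₁⟩ := (hHedge i e₁).mp he₁
        obtain ⟨hg₂, hc₂⟩ := (hHedge i e₂).mp he₂
        have := hcp e₁ hg₁ e₂ hg₂ hne ⟨x, hx₁, hx₂⟩
        show c e₁ - 2 * i.val ≠ c e₂ - 2 * i.val
        omega
      · intro e he
        obtain ⟨-, hc₁⟩ := (hHedge i e).mp he
        show 1 ≤ c e - 2 * i.val
        omega
      · intro v
        have hsub : ∀ n ∈ colorsAt (H i) (fun e => c e - 2 * i.val) v, n = 1 ∨ n = 2 := by
          rintro n ⟨e, he, hv, hc⟩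
          obtain ⟨-, hc₁⟩ := (hHedge i e).mp he
          have hc' : c e - 2 * i.val = n := hc
          omega
        intro a ha b hb m ham hmb
        rcases hsub a ha with rfl | rfl <;> rcases hsub b hb with rfl | rfl <;>
          [skip; skip; skip; skip] <;>
          · interval_cases m <;> first | exact ha | exact hb
    have hcover : ∀ e ∈ G.edgeSet, ∃! i, e ∈ (H i).edgeSet := by
      intro e he
      have hbound := hcb e he
      have hik : (c e - 1) / 2 < k := by omega
      refine ⟨⟨(c e - 1) / 2, hik⟩, ?_, ?_⟩
      · show e ∈ (H ⟨(c e - 1) / 2, hik⟩).edgeSet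
        rw [hHedge]
        refine ⟨he, ?_⟩
        show c e = 2 * ((c e - 1) / 2) + 1 ∨ c e = 2 * ((c e - 1) / 2) + 2
        omega
      · intro j hj
        obtain ⟨-, hcj⟩ := (hHedge j e).mp hj
        apply Fin.ext
        show j.val = (c e - 1) / 2
        omega
    have hmem : IntervalDecomposition G k := ⟨H, hle, hcolorable, hcover⟩
    exact Nat.sInf_le hmem
end

section
/- Every bipartite graph G with Δ(G) ≥ 4 satisfies θ_int(G) ≤ ⌈Δ(G)/3⌉; moreover G can be decomposed into ⌈Δ(G)/3⌉ interval colorable subgraphs such that at each vertex the numbers of incident edges in any two subgraphs differ by at most one. -/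
open SimpleGraph

variable {V : Type*}

lemma walk_parity_s11 {K : SimpleGraph V} (χ : V → Fin 2) (hχ : ∀ ⦃x y⦄, K.Adj x y → χ x ≠ χ y) :
    ∀ {x y : V} (w : K.Walk x y), (χ x = χ y ↔ Even w.length) := by
  intro x y w
  induction w with
  | nil => simp
  | @cons x z y h w ih =>
    have hxz := hχ h
    simp only [Walk.length_cons, Nat.even_add_one, ← ih]
    revert hxz
    generalize χ x = p; generalize χ z = q; generalize χ y = r
    fin_cases p <;> fin_cases q <;> fin_cases r <;> simp

lemma exists_missing {k : ℕ} (c : Sym2 V → ℕ) (s : Set (Sym2 V)) (hfin : s.Finite)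
    (h : s.ncard < k) (hc : ∀ e ∈ s, c e ∈ Finset.Icc 1 k) :
    ∃ a ∈ Finset.Icc 1 k, ∀ e ∈ s, c e ≠ a := by
  classical
  have himg : (hfin.toFinset.image c) ⊆ Finset.Icc 1 k := by
    intro a ha
    obtain ⟨e, he, rfl⟩ := Finset.mem_image.mp ha
    exact hc e (hfin.mem_toFinset.mp he)
  have hcard : (hfin.toFinset.image c).card < (Finset.Icc 1 k).card := by
    calc (hfin.toFinset.image c).card ≤ hfin.toFinset.card := Finset.card_image_le
    _ = s.ncard := (Set.ncard_eq_toFinset_card s hfin).symm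
    _ < k := h
    _ = (Finset.Icc 1 k).card := by simp
  have hns : ¬ (Finset.Icc 1 k ⊆ hfin.toFinset.image c) := fun hsub =>
    absurd (Finset.card_le_card hsub) (by omega)
  obtain ⟨a, ha, hna⟩ := Finset.not_subset.mp hns
  exact ⟨a, ha, fun e he hce => hna (Finset.mem_image.mpr ⟨e, hfin.mem_toFinset.mpr he, hce⟩)⟩

lemma konig_s11 [Fintype V] [DecidableEq V] (k : ℕ) (n : ℕ) :
    ∀ (G : SimpleGraph V) (χ : V → Fin 2), G.edgeSet.ncard ≤ n →
      (∀ ⦃x y⦄, G.Adj x y → χ x ≠ χ y) →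
      (∀ v, (G.incidenceSet v).ncard ≤ k) →
      ∃ c : Sym2 V → ℕ, IsProperEdgeColoring G c ∧ ∀ e ∈ G.edgeSet, c e ∈ Finset.Icc 1 k := by
  classical
  induction n with
  | zero =>
    intro G χ hn _ _
    have hemp : G.edgeSet = ∅ := by
      rw [← Set.ncard_eq_zero (Set.toFinite _)]; omega
    exact ⟨fun _ => 1, fun e he => by simp [hemp] at he, fun e he => by simp [hemp] at he⟩
  | succ n ih =>
    intro G χ hn hχ hdeg
    by_cases hemp : G.edgeSet = ∅
    · exact ⟨fun _ => 1, fun e he => by simp [hemp] at he, fun e he => by simp [hemp] at he⟩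
    obtain ⟨e₀, he₀⟩ := Set.nonempty_iff_ne_empty.mpr hemp
    revert he₀
    induction e₀ using Sym2.ind with | _ u v => ?_
    intro he₀
    have huv : G.Adj u v := G.mem_edgeSet.mp he₀
    set G' := G.deleteEdges {s(u, v)} with hG'def
    have hG'le : G' ≤ G := deleteEdges_le _
    have hG'e : G'.edgeSet = G.edgeSet \ {s(u, v)} := edgeSet_deleteEdges _
    have hincid' : ∀ w, G'.incidenceSet w = G.incidenceSet w \ {s(u, v)} := by
      intro w
      ext e
      simp only [incidenceSet, Set.mem_sep_iff, Set.mem_setOf_eq, hG'e, Set.mem_diff, Set.mem_singleton_iff]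
      tauto
    have huin : s(u, v) ∈ G.incidenceSet u := ⟨he₀, by simp⟩
    have hvin : s(u, v) ∈ G.incidenceSet v := ⟨he₀, by simp⟩
    have hk1 : 1 ≤ k := by
      have := hdeg u
      have h1 : 0 < (G.incidenceSet u).ncard :=
        (Set.ncard_pos (Set.toFinite _)).mpr ⟨_, huin⟩
      omega
    have hn' : G'.edgeSet.ncard ≤ n := by
      rw [hG'e, Set.ncard_diff_singleton_of_mem he₀]
      have h1 : 0 < G.edgeSet.ncard := (Set.ncard_pos (Set.toFinite _)).mpr ⟨_, he₀⟩
      omega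
    have hχ' : ∀ ⦃x y⦄, G'.Adj x y → χ x ≠ χ y := fun x y h => hχ (hG'le h)
    have hdeg' : ∀ w, (G'.incidenceSet w).ncard ≤ k := fun w => by
      rw [hincid' w]
      exact le_trans (Set.ncard_le_ncard Set.diff_subset (Set.toFinite _)) (hdeg w)
    obtain ⟨c', hc'prop, hc'range⟩ := ih G' χ hn' hχ' hdeg'
    have hinci_lt : ∀ w, s(u, v) ∈ G.incidenceSet w → (G'.incidenceSet w).ncard < k := by
      intro w hw
      rw [hincid' w, Set.ncard_diff_singleton_of_mem hw]
      have h1 : 0 < (G.incidenceSet w).ncard := (Set.ncard_pos (Set.toFinite _)).mpr ⟨_, hw⟩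
      have := hdeg w
      omega
    have hrange_at : ∀ w, ∀ e ∈ G'.incidenceSet w, c' e ∈ Finset.Icc 1 k :=
      fun w e he => hc'range e he.1
    obtain ⟨a, haIcc, ha⟩ := exists_missing c' (G'.incidenceSet u) (Set.toFinite _)
      (hinci_lt u huin) (hrange_at u)
    obtain ⟨b, hbIcc, hb⟩ := exists_missing c' (G'.incidenceSet v) (Set.toFinite _)
      (hinci_lt v hvin) (hrange_at v)
    have hmemG' : ∀ {e : Sym2 V}, e ∈ G.edgeSet → e ≠ s(u, v) → e ∈ G'.edgeSet := by
      intro e he hne; rw [hG'e]; exact ⟨he, hne⟩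
    by_cases hab : a = b
    · subst hab
      refine ⟨fun f => if f = s(u, v) then a else c' f, ?_, ?_⟩
      · intro e₁ he₁ e₂ he₂ hne ⟨x, hx1, hx2⟩
        by_cases h1 : e₁ = s(u, v) <;> by_cases h2 : e₂ = s(u, v)
        · exact absurd (h1.trans h2.symm) hne
        · subst h1
          simp only [if_pos rfl, if_neg h2]
          have he₂' : e₂ ∈ G'.incidenceSet x := ⟨hmemG' he₂ h2, hx2⟩
          rcases Sym2.mem_iff.mp hx1 with rfl | rfl
          · exact fun hh => ha e₂ he₂' hh.symm
          · exact fun hh => hb e₂ he₂' hh.symm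
        · subst h2
          simp only [if_pos rfl, if_neg h1]
          have he₁' : e₁ ∈ G'.incidenceSet x := ⟨hmemG' he₁ h1, hx1⟩
          rcases Sym2.mem_iff.mp hx2 with rfl | rfl
          · exact ha e₁ he₁'
          · exact hb e₁ he₁'
        · simp only [if_neg h1, if_neg h2]
          exact hc'prop e₁ (hmemG' he₁ h1) e₂ (hmemG' he₂ h2) hne ⟨x, hx1, hx2⟩
      · intro e he
        by_cases h1 : e = s(u, v)
        · simp [h1, haIcc]
        · simp only [if_neg h1]
          exact hc'range e (hmemG' he h1)
    · -- a ≠ b : swap argument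
      set K : SimpleGraph V := {
        Adj := fun x y => G'.Adj x y ∧ (c' s(x, y) = a ∨ c' s(x, y) = b)
        symm := by
          constructor
          intro x y ⟨h1, h2⟩
          refine ⟨h1.symm, ?_⟩
          rwa [Sym2.eq_swap]
        loopless := ⟨fun x ⟨h1, _⟩ => G'.loopless.irrefl x h1⟩ } with hKdef
      have hKadj : ∀ {x y}, K.Adj x y ↔ G'.Adj x y ∧ (c' s(x, y) = a ∨ c' s(x, y) = b) :=
        Iff.rfl
      have hKG' : ∀ {x y}, K.Adj x y → G'.Adj x y := fun h => h.1
      set S : Set V := {x | K.Reachable u x} with hSdef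
      have hS_cl : ∀ {x y}, K.Adj x y → x ∈ S → y ∈ S :=
        fun h hx => Reachable.trans hx h.reachable
      have L1 : ∀ f ∈ G'.edgeSet, (c' f = a ∨ c' f = b) → (∃ z ∈ f, z ∈ S) →
          ∀ z ∈ f, z ∈ S := by
        intro f
        induction f using Sym2.ind with | _ p q => ?_
        intro hfe hcol ⟨z, hz, hzS⟩ w hw
        have hpq : K.Adj p q := ⟨G'.mem_edgeSet.mp hfe, hcol⟩
        rcases Sym2.mem_iff.mp hz with rfl | rfl <;> rcases Sym2.mem_iff.mp hw with rfl | rfl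
        · exact hzS
        · exact hS_cl hpq hzS
        · exact hS_cl hpq.symm hzS
        · exact hzS
      have hKu : ∀ x, K.Adj x u → c' s(x, u) = b := by
        intro x hx
        exact hx.2.resolve_left fun hha =>
          ha s(x, u) ⟨G'.mem_edgeSet.mpr hx.1, by simp⟩ hha
      have hKv : ∀ x, K.Adj x v → c' s(x, v) = a := by
        intro x hx
        exact hx.2.resolve_right fun hhb =>
          hb s(x, v) ⟨G'.mem_edgeSet.mpr hx.1, by simp⟩ hhb
      have alt : ∀ (y w : V) (q : K.Walk y w) (x : V) (h : K.Adj x y), w = u →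
          (Walk.cons h q).IsPath → (c' s(x, y) = b ↔ Odd (q.length + 1)) := by
        intro y w q
        induction q with
        | nil =>
          intro x h hwu _
          subst hwu
          simp only [Walk.length_nil]
          exact ⟨fun _ => odd_one, fun _ => hKu x h⟩
        | @cons y1 z u1 h2 q' ih =>
          intro x h hwu hp
          subst hwu
          have hp' := hp.of_cons
          have ihz := ih y1 h2 rfl hp'
          have hnodup := hp.edges_nodup
          have hne : s(x, y1) ≠ s(y1, z) := by
            simp only [Walk.edges_cons, List.nodup_cons, List.mem_cons] at hnodup
            exact fun hh => hnodup.1 (Or.inl hh)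
          have h1e : s(x, y1) ∈ G'.edgeSet := G'.mem_edgeSet.mpr h.1
          have h2e : s(y1, z) ∈ G'.edgeSet := G'.mem_edgeSet.mpr h2.1
          have hcc : c' s(x, y1) ≠ c' s(y1, z) :=
            hc'prop _ h1e _ h2e hne ⟨y1, by simp, by simp⟩
          have hgoal : c' s(x, y1) = b ↔ ¬ (c' s(y1, z) = b) := by
            rcases h.2 with h3 | h3 <;> rcases h2.2 with h4 | h4 <;>
              simp [h3, h4, hab, Ne.symm hab] <;> exact absurd (h3.trans h4.symm) hcc
          rw [hgoal, ihz]
          simp only [Walk.length_cons, Nat.odd_iff, Nat.even_iff]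
          omega
      have not_reach : ¬ K.Reachable u v := by
        intro hr
        obtain ⟨w⟩ := hr
        have hp := (w.toPath : K.Walk u v).reverse
        have hpp : (w.toPath : K.Walk u v).reverse.IsPath := (w.toPath.2).reverse
        set pp := (w.toPath : K.Walk u v).reverse with hppdef
        clear_value pp
        cases pp with
        | nil => exact huv.ne rfl
        | @cons v z u' h q =>
          have hfirst : c' s(v, z) = a := by
            have := hKv z h.symm
            rwa [Sym2.eq_swap] at this
          have hodd := alt z u q v h rfl hpp
          have hnb : ¬ (c' s(v, z) = b) := by rw [hfirst]; exact hab
          have heven : Even ((Walk.cons h q).length) := by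
            rw [Walk.length_cons]
            rcases Nat.even_or_odd (q.length + 1) with he | ho
            · exact he
            · exact absurd (hodd.mpr ho) hnb
          have hKχ : ∀ ⦃x y⦄, K.Adj x y → χ x ≠ χ y := fun x y hh => hχ (hG'le (hKG' hh))
          have := (walk_parity_s11 χ hKχ (Walk.cons h q)).mpr heven
          exact hχ huv this.symm
      set SW : Sym2 V → Prop :=
        fun f => f ∈ G'.edgeSet ∧ (c' f = a ∨ c' f = b) ∧ ∃ z ∈ f, z ∈ S with hSWdef
      set c'' : Sym2 V → ℕ :=
        fun f => if SW f then (if c' f = a then b else a) else c' f with hc''def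
      have hc''swap : ∀ f, SW f → c'' f = if c' f = a then b else a := by
        intro f hf; simp only [hc''def, if_pos hf]
      have hc''id : ∀ f, ¬ SW f → c'' f = c' f := by
        intro f hf; simp only [hc''def, if_neg hf]
      have R2 : ∀ e₁ ∈ G'.edgeSet, ∀ e₂ ∈ G'.edgeSet, e₁ ≠ e₂ →
          (∃ x, x ∈ e₁ ∧ x ∈ e₂) → c'' e₁ ≠ c'' e₂ := by
        intro e₁ he₁ e₂ he₂ hne ⟨x, hx1, hx2⟩
        have hcc := hc'prop e₁ he₁ e₂ he₂ hne ⟨x, hx1, hx2⟩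
        by_cases h1 : SW e₁ <;> by_cases h2 : SW e₂
        · rw [hc''swap _ h1, hc''swap _ h2]
          rcases h1.2.1 with h3 | h3 <;> rcases h2.2.1 with h4 | h4 <;>
            simp [h3, h4, hab, Ne.symm hab] <;> exact hcc (h3.trans h4.symm)
        · rw [hc''swap _ h1, hc''id _ h2]
          intro hcontra
          apply h2
          refine ⟨he₂, ?_, ⟨x, hx2, L1 e₁ he₁ h1.2.1 h1.2.2 x hx1⟩⟩
          by_cases h3 : c' e₁ = a
          · rw [if_pos h3] at hcontra; exact Or.inr hcontra.symm
          · rw [if_neg h3] at hcontra; exact Or.inl hcontra.symm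
        · rw [hc''id _ h1, hc''swap _ h2]
          intro hcontra
          apply h1
          refine ⟨he₁, ?_, ⟨x, hx1, L1 e₂ he₂ h2.2.1 h2.2.2 x hx2⟩⟩
          by_cases h3 : c' e₂ = a
          · rw [if_pos h3] at hcontra; exact Or.inr hcontra
          · rw [if_neg h3] at hcontra; exact Or.inl hcontra
        · rw [hc''id _ h1, hc''id _ h2]; exact hcc
      have R1 : ∀ f ∈ G'.edgeSet, c'' f ∈ Finset.Icc 1 k := by
        intro f hf
        by_cases h1 : SW f
        · rw [hc''swap _ h1]
          split <;> [exact hbIcc; exact haIcc]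
        · rw [hc''id _ h1]; exact hc'range f hf
      have R3 : ∀ f ∈ G'.incidenceSet u, c'' f ≠ b := by
        intro f hf
        by_cases h1 : SW f
        · rw [hc''swap _ h1]
          by_cases h2 : c' f = a
          · exact absurd h2 (ha f hf)
          · rw [if_neg h2]; exact hab
        · rw [hc''id _ h1]
          intro hcb
          exact h1 ⟨hf.1, Or.inr hcb, ⟨u, hf.2, Reachable.refl u⟩⟩
      have R4 : ∀ f ∈ G'.incidenceSet v, c'' f ≠ b := by
        intro f hf
        by_cases h1 : SW f
        · exfalso
          exact not_reach (L1 f h1.1 h1.2.1 h1.2.2 v hf.2)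
        · rw [hc''id _ h1]; exact hb f hf
      refine ⟨fun f => if f = s(u, v) then b else c'' f, ?_, ?_⟩
      · intro e₁ he₁ e₂ he₂ hne ⟨x, hx1, hx2⟩
        by_cases h1 : e₁ = s(u, v) <;> by_cases h2 : e₂ = s(u, v)
        · exact absurd (h1.trans h2.symm) hne
        · subst h1
          simp only [if_pos rfl, if_neg h2]
          have he₂' : e₂ ∈ G'.incidenceSet x := ⟨hmemG' he₂ h2, hx2⟩
          rcases Sym2.mem_iff.mp hx1 with rfl | rfl
          · exact fun hh => R3 e₂ he₂' hh.symm
          · exact fun hh => R4 e₂ he₂' hh.symm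
        · subst h2
          simp only [if_pos rfl, if_neg h1]
          have he₁' : e₁ ∈ G'.incidenceSet x := ⟨hmemG' he₁ h1, hx1⟩
          rcases Sym2.mem_iff.mp hx2 with rfl | rfl
          · exact R3 e₁ he₁'
          · exact R4 e₁ he₁'
        · simp only [if_neg h1, if_neg h2]
          exact R2 e₁ (hmemG' he₁ h1) e₂ (hmemG' he₂ h2) hne ⟨x, hx1, hx2⟩
      · intro e he
        by_cases h1 : e = s(u, v)
        · simp [h1, hbIcc]
        · simp only [if_neg h1]
          exact R1 e (hmemG' he h1)


lemma konig' {W : Type*} [Fintype W] [DecidableEq W] (k : ℕ) (H : SimpleGraph W)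
    (ξ : W → Fin 2) (hξ : ∀ ⦃x y⦄, H.Adj x y → ξ x ≠ ξ y)
    (hdeg : ∀ w, (H.incidenceSet w).ncard ≤ k) :
    ∃ c : Sym2 W → ℕ, IsProperEdgeColoring H c ∧ ∀ e ∈ H.edgeSet, c e ∈ Finset.Icc 1 k :=
  konig_s11 k H.edgeSet.ncard H ξ le_rfl hξ hdeg

lemma lt_div_succ_mul (a : ℕ) {k : ℕ} (hk : 0 < k) : a < (a / k + 1) * k :=
  (Nat.div_lt_iff_lt_mul hk).mp (Nat.lt_succ_self _)

lemma le_ceil_mul {k : ℕ} (hk : 0 < k) (d : ℕ) : d ≤ ((d + k - 1) / k) * k := by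
  rcases Nat.eq_zero_or_pos d with rfl | hd
  · simp
  · have h1 : d + k - 1 = (d - 1) + k := by omega
    rw [h1, Nat.add_div_right _ hk]
    exact Nat.le_of_pred_lt (lt_div_succ_mul (d - 1) hk)

section Bal
variable [Fintype V] [DecidableEq V]

lemma balanced (G : SimpleGraph V) (χ : V → Fin 2)
    (hχ : ∀ ⦃x y⦄, G.Adj x y → χ x ≠ χ y) (k : ℕ) (hk : 1 ≤ k) :
    ∃ col : Sym2 V → ℕ, (∀ e ∈ G.edgeSet, col e ∈ Finset.Icc 1 k) ∧
      ∀ v, ∀ t ∈ Finset.Icc 1 k,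
        (G.incidenceSet v).ncard / k ≤ {e ∈ G.incidenceSet v | col e = t}.ncard ∧
        {e ∈ G.incidenceSet v | col e = t}.ncard ≤ ((G.incidenceSet v).ncard + k - 1) / k := by
  classical
  set I : V → Finset (Sym2 V) := fun v => (Set.toFinite (G.incidenceSet v)).toFinset with hI
  have hImem : ∀ {v e}, e ∈ I v ↔ e ∈ G.incidenceSet v := fun {v e} =>
    (Set.toFinite (G.incidenceSet v)).mem_toFinset
  set d : V → ℕ := fun v => (I v).card with hd
  set idx : V → Sym2 V → ℕ := fun v e => (I v).toList.idxOf e with hidx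
  set m : ℕ := Fintype.card (Sym2 V) + 1 with hm
  have hm0 : 0 < m := Nat.succ_pos _
  have hd_lt : ∀ v, d v < m := fun v => Nat.lt_succ_of_le (Finset.card_le_univ _)
  have hidx_lt : ∀ {v e}, e ∈ I v → idx v e < d v := by
    intro v e he
    have : e ∈ (I v).toList := Finset.mem_toList.mpr he
    simpa [hidx, Finset.length_toList] using List.idxOf_lt_length_iff.mpr this
  have hidx_inj : ∀ {v e f}, e ∈ I v → f ∈ I v → idx v e = idx v f → e = f := by
    intro v e f he hf hef
    exact (List.idxOf_inj (Finset.mem_toList.mpr he)).mp hef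
  have hidx_surj : ∀ {v i}, i < d v → ∃ e ∈ I v, idx v e = i := by
    intro v i hi
    have hi' : i < (I v).toList.length := by rwa [Finset.length_toList]
    refine ⟨(I v).toList.get ⟨i, hi'⟩, ?_, ?_⟩
    · exact Finset.mem_toList.mp (List.get_mem _ ⟨i, hi'⟩)
    · simpa [hidx] using (Finset.nodup_toList (I v)).idxOf_getElem i hi'
  set blk : V → Sym2 V → ℕ := fun v e => idx v e / k with hblk
  have hblk_lt : ∀ {v e}, e ∈ I v → blk v e < m :=
    fun {v e} he => lt_of_le_of_lt (Nat.div_le_self _ _) (lt_trans (hidx_lt he) (hd_lt v))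
  set fblk : V → Sym2 V → Fin m := fun v e => ⟨blk v e % m, Nat.mod_lt _ hm0⟩ with hfblk
  have hfblk_eq : ∀ {v e}, e ∈ I v → (fblk v e : ℕ) = blk v e := by
    intro v e he
    simp [hfblk, Nat.mod_eq_of_lt (hblk_lt he)]
  set H : SimpleGraph (V × Fin m) :=
    { Adj := fun p q => G.Adj p.1 q.1 ∧ (p.2 : ℕ) = blk p.1 s(p.1, q.1) ∧
        (q.2 : ℕ) = blk q.1 s(p.1, q.1)
      symm := by
        constructor
        intro p q ⟨h1, h2, h3⟩
        have hsw : s(q.1, p.1) = s(p.1, q.1) := Sym2.eq_swap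
        exact ⟨h1.symm, by rwa [hsw], by rwa [hsw]⟩
      loopless := ⟨fun p h => G.loopless.irrefl p.1 h.1⟩ } with hH
  set lift : Sym2 V → Sym2 (V × Fin m) := Sym2.lift
    ⟨fun x y => s((x, fblk x s(x, y)), (y, fblk y s(x, y))), by
      intro x y
      show s((x, fblk x s(x, y)), (y, fblk y s(x, y)))
          = s((y, fblk y s(y, x)), (x, fblk x s(y, x)))
      have h1 : s(y, x) = s(x, y) := Sym2.eq_swap
      rw [h1]
      exact Sym2.eq_swap⟩ with hlift
  have hlift_mk : ∀ x y, lift s(x, y) = s((x, fblk x s(x, y)), (y, fblk y s(x, y))) :=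
    fun x y => Sym2.lift_mk _ x y
  have hlift_fst : ∀ e, Sym2.map Prod.fst (lift e) = e := by
    intro e
    induction e using Sym2.ind with | _ x y => ?_
    rw [hlift_mk, Sym2.map_pair_eq]
  have hlift_inj : ∀ {e f}, lift e = lift f → e = f := by
    intro e f hef
    rw [← hlift_fst e, ← hlift_fst f, hef]
  have hHadj : ∀ {p q}, H.Adj p q ↔ G.Adj p.1 q.1 ∧ (p.2 : ℕ) = blk p.1 s(p.1, q.1) ∧
      (q.2 : ℕ) = blk q.1 s(p.1, q.1) := Iff.rfl
  have hlift_edge : ∀ {e}, e ∈ G.edgeSet → lift e ∈ H.edgeSet := by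
    intro e
    induction e using Sym2.ind with | _ x y => ?_
    intro he
    rw [hlift_mk]
    have hadj : G.Adj x y := G.mem_edgeSet.mp he
    have hx : s(x, y) ∈ I x := hImem.mpr ⟨he, by simp⟩
    have hy : s(x, y) ∈ I y := hImem.mpr ⟨he, by simp⟩
    exact H.mem_edgeSet.mpr ⟨hadj, hfblk_eq hx, hfblk_eq hy⟩
  have hlift_at : ∀ {v e}, e ∈ G.incidenceSet v → (v, fblk v e) ∈ lift e := by
    intro v e
    induction e using Sym2.ind with | _ x y => ?_
    intro he
    rw [hlift_mk]
    rcases Sym2.mem_iff.mp he.2 with rfl | rfl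
    · exact Sym2.mem_mk_left _ _
    · exact Sym2.mem_mk_right _ _
  -- degree bound for H
  have hdegH : ∀ p : V × Fin m, (H.incidenceSet p).ncard ≤ k := by
    rintro ⟨v, i⟩
    have hsub : H.incidenceSet (v, i) ⊆ lift '' {e ∈ G.incidenceSet v | blk v e = (i : ℕ)} := by
      intro f hf
      obtain ⟨hfE, hvf⟩ := hf
      revert hfE hvf
      induction f using Sym2.ind with | _ p q => ?_
      intro hfE hvf
      have hadj : H.Adj p q := H.mem_edgeSet.mp hfE
      have hGe : s(p.1, q.1) ∈ G.edgeSet := G.mem_edgeSet.mpr hadj.1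
      have hp1 : s(p.1, q.1) ∈ I p.1 := hImem.mpr ⟨hGe, by simp⟩
      have hq1 : s(p.1, q.1) ∈ I q.1 := hImem.mpr ⟨hGe, by simp⟩
      have hpeq : (p.1, fblk p.1 s(p.1, q.1)) = p :=
        Prod.ext rfl (Fin.ext (by rw [hfblk_eq hp1]; exact hadj.2.1.symm))
      have hqeq : (q.1, fblk q.1 s(p.1, q.1)) = q :=
        Prod.ext rfl (Fin.ext (by rw [hfblk_eq hq1]; exact hadj.2.2.symm))
      rcases Sym2.mem_iff.mp hvf with hvp | hvq
      · subst hvp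
        refine ⟨s((v, i).1, q.1), ⟨⟨hGe, by simp⟩, hadj.2.1.symm⟩, ?_⟩
        rw [hlift_mk, hpeq, hqeq]
      · subst hvq
        refine ⟨s(p.1, (v, i).1), ⟨⟨hGe, by simp⟩, hadj.2.2.symm⟩, ?_⟩
        rw [hlift_mk, hpeq, hqeq]
    have hBcard : {e ∈ G.incidenceSet v | blk v e = (i : ℕ)}.ncard ≤ k := by
      have hinj : Set.InjOn (idx v) {e ∈ G.incidenceSet v | blk v e = (i : ℕ)} := by
        rintro e ⟨he, _⟩ f ⟨hf, _⟩ hef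
        exact hidx_inj (hImem.mpr he) (hImem.mpr hf) hef
      have himgsub : (idx v) '' {e ∈ G.incidenceSet v | blk v e = (i : ℕ)} ⊆
          Set.Ico ((i : ℕ) * k) ((i : ℕ) * k + k) := by
        rintro j ⟨e, ⟨he, hbe⟩, rfl⟩
        constructor
        · rw [← hbe]; exact Nat.div_mul_le_self _ _
        · have h2 : idx v e < (idx v e / k + 1) * k := lt_div_succ_mul _ (by omega)
          rw [Nat.succ_mul] at h2
          rw [← hbe]
          exact h2
      calc {e ∈ G.incidenceSet v | blk v e = (i : ℕ)}.ncard
          = ((idx v) '' {e ∈ G.incidenceSet v | blk v e = (i : ℕ)}).ncard :=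
            (Set.ncard_image_of_injOn hinj).symm
        _ ≤ (Set.Ico ((i : ℕ) * k) ((i : ℕ) * k + k)).ncard :=
            Set.ncard_le_ncard himgsub (Set.finite_Ico _ _)
        _ = k := by
            rw [← Finset.coe_Ico, Set.ncard_coe_finset, Nat.card_Ico]
            omega
    calc (H.incidenceSet (v, i)).ncard
        ≤ (lift '' {e ∈ G.incidenceSet v | blk v e = (i : ℕ)}).ncard :=
          Set.ncard_le_ncard hsub (Set.Finite.image _ (Set.toFinite _))
      _ ≤ {e ∈ G.incidenceSet v | blk v e = (i : ℕ)}.ncard :=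
          Set.ncard_image_le (Set.toFinite _)
      _ ≤ k := hBcard
  obtain ⟨cH, hcHprop, hcHrange⟩ := konig' k H (fun p => χ p.1)
    (fun x y h => hχ h.1) hdegH
  refine ⟨fun e => cH (lift e), fun e he => hcHrange _ (hlift_edge he), ?_⟩
  intro v t ht
  set col : Sym2 V → ℕ := fun e => cH (lift e) with hcol
  have hcol_inj : ∀ {e f}, e ∈ G.incidenceSet v → f ∈ G.incidenceSet v →
      blk v e = blk v f → col e = col f → e = f := by
    intro e f he hf hbl hcolef
    by_contra hne
    have hlne : lift e ≠ lift f := fun hh => hne (hlift_inj hh)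
    have hfb : fblk v e = fblk v f := Fin.ext (by
      rw [hfblk_eq (hImem.mpr he), hfblk_eq (hImem.mpr hf), hbl])
    exact hcHprop _ (hlift_edge he.1) _ (hlift_edge hf.1) hlne
      ⟨(v, fblk v e), hlift_at he, hfb ▸ hlift_at hf⟩ hcolef
  have hdv : (G.incidenceSet v).ncard = d v := Set.ncard_eq_toFinset_card _ _
  set Ctf : Finset (Sym2 V) := (I v).filter (fun e => col e = t) with hCtf
  have hCt_eq : {e ∈ G.incidenceSet v | col e = t} = ↑Ctf := by
    ext e
    simp only [hCtf, Finset.coe_filter, Set.mem_setOf_eq, Finset.mem_filter]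
    constructor
    · rintro ⟨h1, h2⟩; exact ⟨hImem.mpr h1, h2⟩
    · rintro ⟨h1, h2⟩; exact ⟨hImem.mp h1, h2⟩
  set nb : ℕ := (d v + k - 1) / k with hnb
  have hnbk : d v ≤ nb * k := le_ceil_mul (by omega) (d v)
  have hfib : ∀ e ∈ Ctf, blk v e ∈ Finset.range nb := by
    intro e he
    have heI : e ∈ I v := (Finset.mem_filter.mp he).1
    rw [Finset.mem_range]
    rw [Nat.div_lt_iff_lt_mul (by omega : 0 < k)]
    exact lt_of_lt_of_le (hidx_lt heI) hnbk
  have hcard_fib : Ctf.card =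
      ∑ i ∈ Finset.range nb, ((Ctf.filter (fun e => blk v e = i)).card) :=
    Finset.card_eq_sum_card_fiberwise hfib
  have hfib_le : ∀ i : ℕ, (Ctf.filter (fun e => blk v e = i)).card ≤ 1 := by
    intro i
    rw [Finset.card_le_one]
    intro e he f hf
    obtain ⟨he1, he2⟩ := Finset.mem_filter.mp he
    obtain ⟨hf1, hf2⟩ := Finset.mem_filter.mp hf
    obtain ⟨he3, he4⟩ := Finset.mem_filter.mp he1
    obtain ⟨hf3, hf4⟩ := Finset.mem_filter.mp hf1
    exact hcol_inj (hImem.mp he3) (hImem.mp hf3) (he2.trans hf2.symm) (he4.trans hf4.symm)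
  have hfull : ∀ i, i < d v / k → 1 ≤ (Ctf.filter (fun e => blk v e = i)).card := by
    intro i hi
    set Bf : Finset (Sym2 V) := (I v).filter (fun e => blk v e = i) with hBf
    have hBfcard : Bf.card = k := by
      have himg : Bf.image (idx v) = Finset.Ico (i * k) (i * k + k) := by
        ext j
        simp only [Finset.mem_image, Finset.mem_Ico, hBf, Finset.mem_filter]
        constructor
        · rintro ⟨e, ⟨heI, hbe⟩, rfl⟩
          constructor
          · rw [← hbe]; exact Nat.div_mul_le_self _ _
          · have h2 : idx v e < (idx v e / k + 1) * k := lt_div_succ_mul _ (by omega)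
            rw [Nat.succ_mul] at h2
            rw [← hbe]
            exact h2
        · rintro ⟨h1, h2⟩
          have h3 : i * k + k ≤ (d v / k) * k := by
            have h5 : i + 1 ≤ d v / k := hi
            calc i * k + k = (i + 1) * k := (Nat.succ_mul i k).symm
              _ ≤ (d v / k) * k := Nat.mul_le_mul_right _ h5
          have hjd : j < d v := lt_of_lt_of_le h2 (le_trans h3 (Nat.div_mul_le_self _ _))
          obtain ⟨e, heI, hidxe⟩ := hidx_surj hjd
          refine ⟨e, ⟨heI, ?_⟩, hidxe⟩
          have hge : i ≤ blk v e := by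
            rw [Nat.le_div_iff_mul_le (by omega : 0 < k)]
            exact hidxe ▸ h1
          have hlt : blk v e < i + 1 := by
            rw [Nat.div_lt_iff_lt_mul (by omega : 0 < k)]
            rw [hidxe]
            calc j < i * k + k := h2
              _ = (i + 1) * k := (Nat.succ_mul i k).symm
          omega
      have hinj : ∀ e ∈ Bf, ∀ f ∈ Bf, idx v e = idx v f → e = f := by
        intro e he f hf hef
        exact hidx_inj (Finset.mem_filter.mp he).1 (Finset.mem_filter.mp hf).1 hef
      calc Bf.card = (Bf.image (idx v)).card := (Finset.card_image_of_injOn hinj).symm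
        _ = k := by rw [himg, Nat.card_Ico]; omega
    have hinjcol : ∀ e ∈ Bf, ∀ f ∈ Bf, col e = col f → e = f := by
      intro e he f hf hef
      obtain ⟨he1, he2⟩ := Finset.mem_filter.mp he
      obtain ⟨hf1, hf2⟩ := Finset.mem_filter.mp hf
      exact hcol_inj (hImem.mp he1) (hImem.mp hf1) (he2.trans hf2.symm) hef
    have himgcol : Bf.image col = Finset.Icc 1 k := by
      apply Finset.eq_of_subset_of_card_le
      · intro n hn
        obtain ⟨e, he, rfl⟩ := Finset.mem_image.mp hn
        exact hcHrange _ (hlift_edge (hImem.mp (Finset.mem_filter.mp he).1).1)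
      · rw [Finset.card_image_of_injOn (fun e he f hf => hinjcol e he f hf), hBfcard]
        simp
    have ht' : t ∈ Bf.image col := by rw [himgcol]; exact ht
    obtain ⟨e, he, hce⟩ := Finset.mem_image.mp ht'
    obtain ⟨he1, he2⟩ := Finset.mem_filter.mp he
    exact Finset.card_pos.mpr ⟨e, Finset.mem_filter.mpr ⟨Finset.mem_filter.mpr ⟨he1, hce⟩, he2⟩⟩
  constructor
  · rw [hCt_eq, Set.ncard_coe_finset, hdv]
    calc d v / k = ∑ _i ∈ Finset.range (d v / k), 1 := by simp
      _ ≤ ∑ i ∈ Finset.range (d v / k), (Ctf.filter (fun e => blk v e = i)).card :=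
          Finset.sum_le_sum (fun i hi => hfull i (Finset.mem_range.mp hi))
      _ ≤ ∑ i ∈ Finset.range nb, (Ctf.filter (fun e => blk v e = i)).card := by
          refine Finset.sum_le_sum_of_subset ?_
          refine Finset.range_subset_range.mpr ?_
          exact Nat.div_le_div_right (by omega)
      _ = Ctf.card := hcard_fib.symm
  · rw [hCt_eq, Set.ncard_coe_finset, hdv, ← hnb]
    calc Ctf.card = ∑ i ∈ Finset.range nb, (Ctf.filter (fun e => blk v e = i)).card :=
          hcard_fib
      _ ≤ ∑ _i ∈ Finset.range nb, 1 := Finset.sum_le_sum (fun i _ => hfib_le i)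
      _ = nb := by simp

end Bal

lemma hansen [Fintype V] [DecidableEq V] (P : SimpleGraph V) (χ : V → Fin 2)
    (hχ : ∀ ⦃x y⦄, P.Adj x y → χ x ≠ χ y)
    (hdeg : ∀ v, (P.incidenceSet v).ncard ≤ 3) :
    IntervalColorable P := by
  classical
  obtain ⟨c3, hc3prop, hc3range⟩ := konig' 3 P χ hχ hdeg
  -- the degree ≤ 2 subgraph D (colors 1,2) and the matching (color 3)
  set D : SimpleGraph V :=
    { Adj := fun x y => P.Adj x y ∧ c3 s(x, y) ≠ 3
      symm := by
        constructor
        intro x y ⟨h1, h2⟩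
        have hsw : s(y, x) = s(x, y) := Sym2.eq_swap
        exact ⟨h1.symm, by rwa [hsw]⟩
      loopless := ⟨fun x h => P.loopless.irrefl x h.1⟩ } with hD
  have hDP : ∀ {x y}, D.Adj x y → P.Adj x y := fun h => h.1
  have hDedge : ∀ {e}, e ∈ D.edgeSet ↔ e ∈ P.edgeSet ∧ c3 e ≠ 3 := by
    intro e
    induction e using Sym2.ind with | _ x y => ?_
    exact Iff.rfl
  have hDincid : ∀ {v e}, e ∈ D.incidenceSet v ↔ e ∈ P.incidenceSet v ∧ c3 e ≠ 3 := by
    intro v e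
    constructor
    · rintro ⟨he, hv⟩; exact ⟨⟨(hDedge.mp he).1, hv⟩, (hDedge.mp he).2⟩
    · rintro ⟨⟨he, hv⟩, h3⟩; exact ⟨hDedge.mpr ⟨he, h3⟩, hv⟩
  -- matching property of color 3
  have hM : ∀ {v e f}, e ∈ P.incidenceSet v → f ∈ P.incidenceSet v →
      c3 e = 3 → c3 f = 3 → e = f := by
    intro v e f he hf h3e h3f
    by_contra hne
    exact hc3prop e he.1 f hf.1 hne ⟨v, he.2, hf.2⟩ (h3e.trans h3f.symm)
  set degD : V → ℕ := fun v => (D.incidenceSet v).ncard with hdegDdef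
  have hD_mem_P : ∀ {v e}, e ∈ D.incidenceSet v → e ∈ P.incidenceSet v :=
    fun h => (hDincid.mp h).1
  have hinjD : ∀ v, Set.InjOn c3 (D.incidenceSet v) := by
    intro v e he f hf hef
    by_contra hne
    exact hc3prop e (hD_mem_P he).1 f (hD_mem_P hf).1 hne
      ⟨v, (hD_mem_P he).2, (hD_mem_P hf).2⟩ hef
  have hdegD2 : ∀ v, degD v ≤ 2 := by
    intro v
    have himg : c3 '' (D.incidenceSet v) ⊆ (↑({1, 2} : Finset ℕ) : Set ℕ) := by
      rintro n ⟨e, he, rfl⟩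
      have heP := hD_mem_P he
      have h1 := hc3range e heP.1
      have h2 := (hDincid.mp he).2
      simp only [Finset.coe_insert, Finset.coe_singleton, Set.mem_insert_iff,
        Set.mem_singleton_iff]
      rw [Finset.mem_Icc] at h1
      omega
    calc degD v = (c3 '' (D.incidenceSet v)).ncard := (Set.ncard_image_of_injOn (hinjD v)).symm
      _ ≤ (↑({1, 2} : Finset ℕ) : Set ℕ).ncard :=
          Set.ncard_le_ncard himg (Finset.finite_toSet _)
      _ ≤ 2 := by rw [Set.ncard_coe_finset]; decide
  set D'' : SimpleGraph V :=
    { Adj := fun x y => D.Adj x y ∨ (P.Adj x y ∧ c3 s(x, y) = 3 ∧ degD x = 1 ∧ degD y = 1)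
      symm := by
        constructor
        intro x y h
        have hsw : s(y, x) = s(x, y) := Sym2.eq_swap
        rcases h with h | ⟨h1, h2, h3, h4⟩
        · exact Or.inl h.symm
        · exact Or.inr ⟨h1.symm, by rwa [hsw], h4, h3⟩
      loopless := by
        constructor
        intro x h
        rcases h with h | ⟨h1, _⟩
        · exact D.loopless.irrefl x h
        · exact P.loopless.irrefl x h1 } with hD''def
  have hD''P : ∀ {x y}, D''.Adj x y → P.Adj x y := fun h => h.elim hDP (·.1)
  have hDeD'' : ∀ {e}, e ∈ D.edgeSet → e ∈ D''.edgeSet := by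
    intro e
    induction e using Sym2.ind with | _ x y => ?_
    intro h
    exact D''.mem_edgeSet.mpr (Or.inl (D.mem_edgeSet.mp h))
  have hD''Pe : ∀ {e}, e ∈ D''.edgeSet → e ∈ P.edgeSet := by
    intro e
    induction e using Sym2.ind with | _ x y => ?_
    intro h
    exact P.mem_edgeSet.mpr (hD''P (D''.mem_edgeSet.mp h))
  have hdegD''2 : ∀ v, (D''.incidenceSet v).ncard ≤ 2 := by
    intro v
    by_cases hex : ∃ e ∈ D''.incidenceSet v, c3 e = 3
    · obtain ⟨e0, he0, h3e0⟩ := hex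
      have hdv : degD v = 1 := by
        obtain ⟨w, hw⟩ := Sym2.mem_iff_exists.mp he0.2
        rw [hw] at he0 h3e0
        rcases D''.mem_edgeSet.mp he0.1 with hDadj | hextra
        · exact absurd h3e0 hDadj.2
        · exact hextra.2.2.1
      have hsub : D''.incidenceSet v ⊆ D.incidenceSet v ∪ {e0} := by
        rintro f ⟨hf, hvf⟩
        obtain ⟨w, hw⟩ := Sym2.mem_iff_exists.mp hvf
        subst hw
        rcases D''.mem_edgeSet.mp hf with hDadj | hextra
        · exact Or.inl ⟨D.mem_edgeSet.mpr hDadj, by simp⟩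
        · exact Or.inr (hM ⟨P.mem_edgeSet.mpr hextra.1, by simp⟩
            ⟨hD''Pe he0.1, he0.2⟩ hextra.2.1 h3e0)
      calc (D''.incidenceSet v).ncard
          ≤ (D.incidenceSet v ∪ {e0}).ncard := Set.ncard_le_ncard hsub (Set.toFinite _)
        _ ≤ (D.incidenceSet v).ncard + ({e0} : Set (Sym2 V)).ncard :=
            Set.ncard_union_le _ _
        _ = degD v + 1 := by rw [Set.ncard_singleton]
        _ ≤ 2 := by omega
    · have hsub : D''.incidenceSet v ⊆ D.incidenceSet v := by
        rintro f ⟨hf, hvf⟩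
        obtain ⟨w, hw⟩ := Sym2.mem_iff_exists.mp hvf
        subst hw
        rcases D''.mem_edgeSet.mp hf with hDadj | hextra
        · exact ⟨D.mem_edgeSet.mpr hDadj, by simp⟩
        · exact absurd ⟨s(v, w), ⟨hf, by simp⟩, hextra.2.1⟩ hex
      exact le_trans (Set.ncard_le_ncard hsub (Set.toFinite _)) (hdegD2 v)
  obtain ⟨c2, hc2prop, hc2range⟩ := konig' 2 D'' χ (fun x y h => hχ (hD''P h)) hdegD''2
  have hc2val : ∀ {e}, e ∈ D''.edgeSet → c2 e = 1 ∨ c2 e = 2 := by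
    intro e he
    have := hc2range e he
    rw [Finset.mem_Icc] at this
    omega
  set t3 : V → Prop :=
    fun v => (D.incidenceSet v).Nonempty ∧ ∀ e ∈ D.incidenceSet v, c2 e = 2 with ht3def
  set cc : Sym2 V → ℕ :=
    fun e => if c3 e = 3 then (if (∃ x ∈ e, t3 x) then 4 else 1) else c2 e + 1 with hccdef
  have hccM4 : ∀ {e}, c3 e = 3 → (∃ x ∈ e, t3 x) → cc e = 4 := by
    intro e h1 h2; simp only [hccdef, if_pos h1, if_pos h2]
  have hccM1 : ∀ {e}, c3 e = 3 → ¬(∃ x ∈ e, t3 x) → cc e = 1 := by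
    intro e h1 h2; simp only [hccdef, if_pos h1, if_neg h2]
  have hccD : ∀ {e}, c3 e ≠ 3 → cc e = c2 e + 1 := by
    intro e h1; simp only [hccdef, if_neg h1]
  have hccDval : ∀ {e}, e ∈ P.edgeSet → c3 e ≠ 3 → cc e = 2 ∨ cc e = 3 := by
    intro e he h3
    have heD : e ∈ D.edgeSet := hDedge.mpr ⟨he, h3⟩
    rcases hc2val (hDeD'' heD) with h | h <;> rw [hccD h3, h] <;> simp
  -- properness
  have hproper : IsProperEdgeColoring P cc := by
    intro e1 h1 e2 h2 hne hsh
    obtain ⟨x, hx1, hx2⟩ := hsh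
    by_cases a1 : c3 e1 = 3 <;> by_cases a2 : c3 e2 = 3
    · exact absurd (hM ⟨h1, hx1⟩ ⟨h2, hx2⟩ a1 a2) hne
    · have hv2 := hccDval h2 a2
      by_cases hr : (∃ z ∈ e1, t3 z)
      · rw [hccM4 a1 hr]; omega
      · rw [hccM1 a1 hr]; omega
    · have hv1 := hccDval h1 a1
      by_cases hr : (∃ z ∈ e2, t3 z)
      · rw [hccM4 a2 hr]; omega
      · rw [hccM1 a2 hr]; omega
    · rw [hccD a1, hccD a2]
      have hd1 : e1 ∈ D''.edgeSet := hDeD'' (hDedge.mpr ⟨h1, a1⟩)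
      have hd2 : e2 ∈ D''.edgeSet := hDeD'' (hDedge.mpr ⟨h2, a2⟩)
      have := hc2prop e1 hd1 e2 hd2 hne ⟨x, hx1, hx2⟩
      omega
  refine ⟨cc, hproper, ?_, ?_⟩
  · -- colors ≥ 1
    intro e he
    by_cases a1 : c3 e = 3
    · by_cases hr : (∃ z ∈ e, t3 z)
      · rw [hccM4 a1 hr]; omega
      · rw [hccM1 a1 hr]
    · rcases hccDval he a1 with h | h <;> omega
  · -- interval property
    intro v a ha b hb k hak hkb
    have hmemc : ∀ {n}, n ∈ colorsAt P cc v ↔ ∃ e, e ∈ P.incidenceSet v ∧ cc e = n := by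
      intro n
      constructor
      · rintro ⟨e, he, hv, hn⟩; exact ⟨e, ⟨he, hv⟩, hn⟩
      · rintro ⟨e, ⟨he, hv⟩, hn⟩; exact ⟨e, he, hv, hn⟩
    have hbounds : ∀ n ∈ colorsAt P cc v, 1 ≤ n ∧ n ≤ 4 := by
      intro n hn
      obtain ⟨e, he, rfl⟩ := hmemc.mp hn
      by_cases a1 : c3 e = 3
      · by_cases hr : (∃ z ∈ e, t3 z)
        · rw [hccM4 a1 hr]; omega
        · rw [hccM1 a1 hr]; omega
      · rcases hccDval he.1 a1 with h | h <;> omega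
    have h1c : (1 : ℕ) ∈ colorsAt P cc v →
        ∃ e, e ∈ P.incidenceSet v ∧ c3 e = 3 ∧ ¬(∃ z ∈ e, t3 z) := by
      intro h
      obtain ⟨e, he, hce⟩ := hmemc.mp h
      by_cases a1 : c3 e = 3
      · by_cases hr : (∃ z ∈ e, t3 z)
        · rw [hccM4 a1 hr] at hce; omega
        · exact ⟨e, he, a1, hr⟩
      · rcases hccDval he.1 a1 with h' | h' <;> omega
    have h4c : (4 : ℕ) ∈ colorsAt P cc v →
        ∃ e, e ∈ P.incidenceSet v ∧ c3 e = 3 ∧ (∃ z ∈ e, t3 z) := by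
      intro h
      obtain ⟨e, he, hce⟩ := hmemc.mp h
      by_cases a1 : c3 e = 3
      · by_cases hr : (∃ z ∈ e, t3 z)
        · exact ⟨e, he, a1, hr⟩
        · rw [hccM1 a1 hr] at hce; omega
      · rcases hccDval he.1 a1 with h' | h' <;> omega
    have h2c : (2 : ℕ) ∈ colorsAt P cc v → ∃ e, e ∈ D.incidenceSet v ∧ c2 e = 1 := by
      intro h
      obtain ⟨e, he, hce⟩ := hmemc.mp h
      by_cases a1 : c3 e = 3
      · by_cases hr : (∃ z ∈ e, t3 z)
        · rw [hccM4 a1 hr] at hce; omega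
        · rw [hccM1 a1 hr] at hce; omega
      · rw [hccD a1] at hce
        exact ⟨e, hDincid.mpr ⟨he, a1⟩, by omega⟩
    have h3c : (3 : ℕ) ∈ colorsAt P cc v → ∃ e, e ∈ D.incidenceSet v ∧ c2 e = 2 := by
      intro h
      obtain ⟨e, he, hce⟩ := hmemc.mp h
      by_cases a1 : c3 e = 3
      · by_cases hr : (∃ z ∈ e, t3 z)
        · rw [hccM4 a1 hr] at hce; omega
        · rw [hccM1 a1 hr] at hce; omega
      · rw [hccD a1] at hce
        exact ⟨e, hDincid.mpr ⟨he, a1⟩, by omega⟩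
    have h2i : (∃ e, e ∈ D.incidenceSet v ∧ c2 e = 1) → (2 : ℕ) ∈ colorsAt P cc v := by
      rintro ⟨e, he, hc⟩
      refine hmemc.mpr ⟨e, hD_mem_P he, ?_⟩
      rw [hccD (hDincid.mp he).2, hc]
    have h3i : (∃ e, e ∈ D.incidenceSet v ∧ c2 e = 2) → (3 : ℕ) ∈ colorsAt P cc v := by
      rintro ⟨e, he, hc⟩
      refine hmemc.mpr ⟨e, hD_mem_P he, ?_⟩
      rw [hccD (hDincid.mp he).2, hc]
    have P2 : ¬((1 : ℕ) ∈ colorsAt P cc v ∧ (4 : ℕ) ∈ colorsAt P cc v) := by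
      rintro ⟨hh1, hh4⟩
      obtain ⟨e1, he1, h31, hr1⟩ := h1c hh1
      obtain ⟨e4, he4, h34, hr4⟩ := h4c hh4
      exact hr1 (hM he1 he4 h31 h34 ▸ hr4)
    have P1 : (1 : ℕ) ∈ colorsAt P cc v ∧ (3 : ℕ) ∈ colorsAt P cc v →
        (2 : ℕ) ∈ colorsAt P cc v := by
      rintro ⟨hh1, hh3⟩
      obtain ⟨e1, he1, h31, hr1⟩ := h1c hh1
      obtain ⟨e3, he3, hc3e⟩ := h3c hh3
      have hnt3v : ¬ t3 v := fun ht => hr1 ⟨v, he1.2, ht⟩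
      simp only [ht3def] at hnt3v
      push_neg at hnt3v
      obtain ⟨f, hf, hcf⟩ := hnt3v ⟨e3, he3⟩
      have : c2 f = 1 := by
        rcases hc2val (hDeD'' hf.1) with h | h
        · exact h
        · exact absurd h hcf
      exact h2i ⟨f, hf, this⟩
    have P3 : (2 : ℕ) ∈ colorsAt P cc v ∧ (4 : ℕ) ∈ colorsAt P cc v →
        (3 : ℕ) ∈ colorsAt P cc v := by
      rintro ⟨hh2, hh4⟩
      by_contra h3no
      obtain ⟨e2, he2, hc2e2⟩ := h2c hh2
      obtain ⟨e4, he4, h34, z, hze4, ht3z⟩ := h4c hh4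
      -- all D-edges at v have c2 = 1
      have hall1 : ∀ f ∈ D.incidenceSet v, c2 f = 1 := by
        intro f hf
        rcases hc2val (hDeD'' hf.1) with h | h
        · exact h
        · exact absurd (h3i ⟨f, hf, h⟩) h3no
      -- t3 witness is not v
      have hnt3v : ¬ t3 v := by
        rintro ⟨_, hallv⟩
        have := hallv e2 he2
        omega
      obtain ⟨w, hw⟩ := Sym2.mem_iff_exists.mp he4.2
      have hzw : z = w := by
        rw [hw] at hze4
        rcases Sym2.mem_iff.mp hze4 with rfl | rfl
        · exact absurd ht3z hnt3v
        · rfl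
      subst hzw
      -- degD v = 1
      have hdegv1 : degD v = 1 := by
        have : D.incidenceSet v = {e2} := by
          apply Set.eq_singleton_iff_unique_mem.mpr
          refine ⟨he2, fun f hf => ?_⟩
          by_contra hne
          exact hc2prop f (hDeD'' hf.1) e2 (hDeD'' he2.1) hne
            ⟨v, hf.2, he2.2⟩ (by rw [hall1 f hf, hc2e2])
        show (D.incidenceSet v).ncard = 1
        rw [this, Set.ncard_singleton]
      -- degD z = 1 and its D-edge has color 2
      obtain ⟨hznon, hzall⟩ := ht3z
      obtain ⟨fw, hfw⟩ := hznon
      have hfwc : c2 fw = 2 := hzall fw hfw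
      have hdegw1 : degD z = 1 := by
        have : D.incidenceSet z = {fw} := by
          apply Set.eq_singleton_iff_unique_mem.mpr
          refine ⟨hfw, fun f hf => ?_⟩
          by_contra hne
          exact hc2prop f (hDeD'' hf.1) fw (hDeD'' hfw.1) hne
            ⟨z, hf.2, hfw.2⟩ (by rw [hzall f hf, hfwc])
        show (D.incidenceSet z).ncard = 1
        rw [this, Set.ncard_singleton]
      -- e4 = s(v, z) is a D''-edge
      have hadjvz : P.Adj v z := P.mem_edgeSet.mp (hw ▸ he4.1)
      have he4D'' : e4 ∈ D''.edgeSet := by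
        rw [hw]
        exact D''.mem_edgeSet.mpr (Or.inr ⟨hadjvz, hw ▸ h34, hdegv1, hdegw1⟩)
      -- c2 e4 vs c2 e2 (share v) and c2 fw (share z)
      have hne2 : e4 ≠ e2 := by
        intro hh
        rw [hh] at h34
        exact (hDincid.mp he2).2 h34
      have hnefw : e4 ≠ fw := by
        intro hh
        rw [hh] at h34
        exact (hDincid.mp hfw).2 h34
      have hq1 : c2 e4 ≠ c2 e2 :=
        hc2prop e4 he4D'' e2 (hDeD'' he2.1) hne2 ⟨v, he4.2, he2.2⟩
      have hq2 : c2 e4 ≠ c2 fw :=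
        hc2prop e4 he4D'' fw (hDeD'' hfw.1) hnefw ⟨z, by rw [hw]; simp, hfw.2⟩
      rcases hc2val he4D'' with h | h <;> omega
    -- final case analysis
    by_cases hka : k = a
    · rwa [hka]
    by_cases hkb2 : k = b
    · rwa [hkb2]
    obtain ⟨ha1, ha4⟩ := hbounds a ha
    obtain ⟨hb1, hb4⟩ := hbounds b hb
    have hk23 : k = 2 ∨ k = 3 := by omega
    rcases hk23 with rfl | rfl
    · have haa : a = 1 := by omega
      have hbb : b = 3 ∨ b = 4 := by omega
      subst haa
      rcases hbb with rfl | rfl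
      · exact P1 ⟨ha, hb⟩
      · exact (P2 ⟨ha, hb⟩).elim
    · have hbb : b = 4 := by omega
      have haa : a = 1 ∨ a = 2 := by omega
      subst hbb
      rcases haa with rfl | rfl
      · exact (P2 ⟨ha, hb⟩).elim
      · exact P3 ⟨ha, hb⟩

theorem bipartite_intervalThickness_le_ceil_maxDegree_div_three [Fintype V] [DecidableEq V]
    (G : SimpleGraph V) [DecidableRel G.Adj]
    (hbip : G.Colorable 2) (hdelta : 4 ≤ G.maxDegree) :
    intervalThickness G ≤ (G.maxDegree + 2) / 3 ∧
      ∃ H : Fin ((G.maxDegree + 2) / 3) → SimpleGraph V,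
        (∀ i, H i ≤ G) ∧ (∀ i, IntervalColorable (H i)) ∧
        (∀ e ∈ G.edgeSet, ∃! i, e ∈ (H i).edgeSet) ∧
        ∀ v (i j : Fin ((G.maxDegree + 2) / 3)),
          ((H i).neighborSet v).ncard ≤ ((H j).neighborSet v).ncard + 1 := by
  classical
  obtain ⟨C⟩ := hbip
  set χ : V → Fin 2 := fun v => C v with hχdef
  have hχ : ∀ ⦃x y⦄, G.Adj x y → χ x ≠ χ y := fun x y h => C.valid h
  set k : ℕ := (G.maxDegree + 2) / 3 with hkdef
  have hk1 : 1 ≤ k := by omega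
  have hinc_deg : ∀ v, (G.incidenceSet v).ncard = G.degree v := by
    intro v
    calc (G.incidenceSet v).ncard = Nat.card (G.incidenceSet v) :=
          (Nat.card_coe_set_eq _).symm
      _ = Fintype.card (G.incidenceSet v) := Nat.card_eq_fintype_card
      _ = G.degree v := G.card_incidenceSet_eq_degree v
  have hdegmax : ∀ v, (G.incidenceSet v).ncard ≤ 3 * k := by
    intro v
    rw [hinc_deg v]
    have h1 := G.degree_le_maxDegree v
    have h2 : G.maxDegree ≤ 3 * k := by omega
    omega
  obtain ⟨col, hcolrange, hcolbal⟩ := balanced G χ hχ k hk1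
  set Hs : Fin k → SimpleGraph V := fun i =>
    { Adj := fun x y => G.Adj x y ∧ col s(x, y) = (i : ℕ) + 1
      symm := by
        constructor
        intro x y ⟨h1, h2⟩
        have hsw : s(y, x) = s(x, y) := Sym2.eq_swap
        exact ⟨h1.symm, by rwa [hsw]⟩
      loopless := ⟨fun x h => G.loopless.irrefl x h.1⟩ } with hHsdef
  have hHle : ∀ i, Hs i ≤ G := fun i x y h => h.1
  have hHedge : ∀ i (e : Sym2 V), e ∈ (Hs i).edgeSet ↔ e ∈ G.edgeSet ∧ col e = (i : ℕ) + 1 := by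
    intro i e
    induction e using Sym2.ind with | _ x y => ?_
    exact Iff.rfl
  have hHinc : ∀ (i) (v), (Hs i).incidenceSet v = {e ∈ G.incidenceSet v | col e = (i : ℕ) + 1} := by
    intro i v
    ext e
    constructor
    · rintro ⟨he, hv⟩
      obtain ⟨h1, h2⟩ := (hHedge i e).mp he
      exact ⟨⟨h1, hv⟩, h2⟩
    · rintro ⟨⟨h1, hv⟩, h2⟩
      exact ⟨(hHedge i e).mpr ⟨h1, h2⟩, hv⟩
  have hmemIcc : ∀ i : Fin k, (i : ℕ) + 1 ∈ Finset.Icc 1 k := by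
    intro i
    rw [Finset.mem_Icc]
    exact ⟨by omega, i.2⟩
  have hHdeg3 : ∀ (i) (v), ((Hs i).incidenceSet v).ncard ≤ 3 := by
    intro i v
    rw [hHinc i v]
    have h2 := (hcolbal v ((i : ℕ) + 1) (hmemIcc i)).2
    have h3 : ((G.incidenceSet v).ncard + k - 1) / k < 4 := by
      rw [Nat.div_lt_iff_lt_mul (by omega : 0 < k)]
      have := hdegmax v
      omega
    omega
  have hIC : ∀ i, IntervalColorable (Hs i) :=
    fun i => hansen (Hs i) χ (fun x y h => hχ (hHle i h)) (hHdeg3 i)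
  have hpart : ∀ e ∈ G.edgeSet, ∃! i, e ∈ (Hs i).edgeSet := by
    intro e he
    have hr := hcolrange e he
    rw [Finset.mem_Icc] at hr
    refine ⟨⟨col e - 1, by omega⟩, ?_, ?_⟩
    · exact (hHedge _ e).mpr ⟨he, by simp; omega⟩
    · intro j hj
      obtain ⟨_, h2⟩ := (hHedge j e).mp hj
      apply Fin.ext
      simp only []
      omega
  have hcnt : ∀ (i) (v), ((Hs i).neighborSet v).ncard =
      {e ∈ G.incidenceSet v | col e = (i : ℕ) + 1}.ncard := by
    intro i v
    rw [← hHinc i v]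
    calc ((Hs i).neighborSet v).ncard = Nat.card ((Hs i).neighborSet v) :=
          (Nat.card_coe_set_eq _).symm
      _ = Nat.card ((Hs i).incidenceSet v) :=
          (Nat.card_congr ((Hs i).incidenceSetEquivNeighborSet v)).symm
      _ = ((Hs i).incidenceSet v).ncard := Nat.card_coe_set_eq _
  have hbalfin : ∀ v (i j : Fin k),
      ((Hs i).neighborSet v).ncard ≤ ((Hs j).neighborSet v).ncard + 1 := by
    intro v i j
    rw [hcnt i v, hcnt j v]
    have hi := (hcolbal v ((i : ℕ) + 1) (hmemIcc i)).2
    have hj := (hcolbal v ((j : ℕ) + 1) (hmemIcc j)).1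
    have hceil : ((G.incidenceSet v).ncard + k - 1) / k ≤ (G.incidenceSet v).ncard / k + 1 := by
      have h1 : (G.incidenceSet v).ncard + k - 1 ≤ (G.incidenceSet v).ncard + k := by omega
      calc ((G.incidenceSet v).ncard + k - 1) / k ≤ ((G.incidenceSet v).ncard + k) / k :=
            Nat.div_le_div_right h1
        _ = (G.incidenceSet v).ncard / k + 1 := Nat.add_div_right _ (by omega)
    omega
  refine ⟨Nat.sInf_le ⟨Hs, hHle, hIC, hpart⟩, Hs, hHle, hIC, hpart, hbalfin⟩
end

section
/- Every Eulerian bipartite graph G satisfies θ_int(G) ≤ ⌈Δ(G)/4⌉. -/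
open SimpleGraph

variable {V : Type*}

open Finset

/-- Birkhoff-von Neumann style decomposition for integer doubly-K-regular matrices. -/
theorem birkhoff_perm {V : Type*} [Fintype V] [DecidableEq V] :
    ∀ (K : ℕ) (m : V → V → ℕ),
      (∀ x, ∑ y, m x y = K) → (∀ y, ∑ x, m x y = K) →
      ∃ π : Fin K → Equiv.Perm V,
        ∀ x y, m x y = #(univ.filter fun j : Fin K => π j x = y) := by
  intro K
  induction K with
  | zero =>
    intro m hrow _
    refine ⟨Fin.elim0, fun x y => ?_⟩
    have h0 : m x y = 0 := by
      have := hrow x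
      have : ∑ y, m x y = 0 := this
      exact (Finset.sum_eq_zero_iff.mp this) y (mem_univ y)
    simp [h0]
  | succ K ih =>
    intro m hrow hcol
    -- Hall's condition for the bipartite graph of nonzero entries
    have hall : ∀ s : Finset V, #s ≤ #(s.biUnion fun x => univ.filter fun y => m x y ≠ 0) := by
      intro s
      have hcount : (K + 1) * #s ≤ (K + 1) * #(s.biUnion fun x => univ.filter fun y => m x y ≠ 0) := by
        calc (K + 1) * #s = ∑ x ∈ s, (K + 1) := by rw [Finset.sum_const, smul_eq_mul, mul_comm]
        _ = ∑ x ∈ s, ∑ y, m x y := by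
            refine Finset.sum_congr rfl fun x _ => (hrow x).symm
        _ = ∑ y, ∑ x ∈ s, m x y := Finset.sum_comm
        _ = ∑ y ∈ (s.biUnion fun x => univ.filter fun y => m x y ≠ 0), ∑ x ∈ s, m x y := by
            refine (Finset.sum_subset (Finset.subset_univ _) ?_).symm
            intro y _ hy
            refine Finset.sum_eq_zero fun x hx => ?_
            by_contra hne
            exact hy (Finset.mem_biUnion.mpr ⟨x, hx, Finset.mem_filter.mpr ⟨mem_univ y, hne⟩⟩)
        _ ≤ ∑ y ∈ (s.biUnion fun x => univ.filter fun y => m x y ≠ 0), (K + 1) := by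
            refine Finset.sum_le_sum fun y _ => ?_
            calc ∑ x ∈ s, m x y ≤ ∑ x, m x y := Finset.sum_le_sum_of_subset (Finset.subset_univ s)
            _ = K + 1 := hcol y
        _ = #(s.biUnion fun x => univ.filter fun y => m x y ≠ 0) * (K + 1) := by
            rw [Finset.sum_const, smul_eq_mul]
        _ = (K + 1) * #(s.biUnion fun x => univ.filter fun y => m x y ≠ 0) := mul_comm _ _
      exact Nat.le_of_mul_le_mul_left hcount (Nat.succ_pos K)
    obtain ⟨f, hfinj, hf⟩ :=
      (Finset.all_card_le_biUnion_card_iff_exists_injective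
        (fun x : V => univ.filter fun y => m x y ≠ 0)).mp hall
    have hfbij : Function.Bijective f := Finite.injective_iff_bijective.mp hfinj
    let π0 : Equiv.Perm V := Equiv.ofBijective f hfbij
    have hπ0 : ∀ x, π0 x = f x := fun x => rfl
    have hmf : ∀ x, 1 ≤ m x (f x) := by
      intro x
      have := hf x
      rw [Finset.mem_filter] at this
      exact Nat.one_le_iff_ne_zero.mpr this.2
    -- subtract the permutation
    set m' : V → V → ℕ := fun x y => m x y - (if f x = y then 1 else 0) with hm'
    have hsplit : ∀ x y, m x y = m' x y + (if f x = y then 1 else 0) := by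
      intro x y
      by_cases h : f x = y
      · subst h
        have := hmf x
        simp [hm', if_pos rfl]
        omega
      · simp [hm', if_neg h]
    have hrow' : ∀ x, ∑ y, m' x y = K := by
      intro x
      have h1 : ∑ y, m x y = (∑ y, m' x y) + ∑ y, (if f x = y then 1 else 0) := by
        rw [← Finset.sum_add_distrib]
        exact Finset.sum_congr rfl fun y _ => hsplit x y
      have h2 : ∑ y, (if f x = y then (1:ℕ) else 0) = 1 := by
        rw [Finset.sum_ite_eq]
        simp
      rw [hrow x] at h1
      omega
    have hcol' : ∀ y, ∑ x, m' x y = K := by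
      intro y
      have h1 : ∑ x, m x y = (∑ x, m' x y) + ∑ x, (if f x = y then 1 else 0) := by
        rw [← Finset.sum_add_distrib]
        exact Finset.sum_congr rfl fun x _ => hsplit x y
      have h2 : ∑ x, (if f x = y then (1:ℕ) else 0) = 1 := by
        have : (univ.filter fun x => f x = y) = {π0.symm y} := by
          ext x
          simp only [Finset.mem_filter, Finset.mem_singleton, mem_univ, true_and]
          constructor
          · intro hx
            exact (Equiv.eq_symm_apply π0).mpr (show π0 x = y from hx)
          · intro hx
            exact (Equiv.eq_symm_apply π0).mp hx
        rw [← Finset.card_filter, this, Finset.card_singleton]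
      rw [hcol y] at h1
      omega
    obtain ⟨π', hπ'⟩ := ih m' hrow' hcol'
    refine ⟨Fin.cons π0 π', fun x y => ?_⟩
    have hcard : #(univ.filter fun j : Fin (K+1) => (Fin.cons π0 π' : Fin (K+1) → Equiv.Perm V) j x = y)
        = (if f x = y then 1 else 0) + #(univ.filter fun j : Fin K => π' j x = y) := by
      rw [Finset.card_filter, Finset.card_filter, Fin.sum_univ_succ]
      have h0 : (if (Fin.cons π0 π' : Fin (K+1) → Equiv.Perm V) 0 x = y then (1:ℕ) else 0)
          = (if f x = y then 1 else 0) := by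
        simp only [Fin.cons_zero]
        rfl
      rw [h0]
      have hsucc : ∑ j : Fin K, (if (Fin.cons π0 π' : Fin (K+1) → Equiv.Perm V) j.succ x = y then (1:ℕ) else 0)
          = ∑ j : Fin K, (if π' j x = y then 1 else 0) :=
        Finset.sum_congr rfl fun j _ => by simp [Fin.cons_succ]
      rw [hsucc]
    rw [hcard, ← hπ' x y, hsplit x y]
    omega


section OrientSec
variable [Fintype V] [DecidableEq V]

private lemma sum_eq_of_le_of_sum_eq {s : Finset V} {g h : V → ℕ}
    (hle : ∀ i ∈ s, g i ≤ h i) (hsum : ∑ i ∈ s, g i = ∑ i ∈ s, h i) :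
    ∀ i ∈ s, g i = h i := by
  intro i hi
  by_contra hne
  have hlt : g i < h i := lt_of_le_of_ne (hle i hi) hne
  have : ∑ j ∈ s, g j < ∑ j ∈ s, h j :=
    Finset.sum_lt_sum hle ⟨i, hi, hlt⟩
  omega

private lemma endpoints_card (G : SimpleGraph V) [DecidableRel G.Adj] (e : Sym2 V)
    (he : e ∈ G.edgeFinset) : #(univ.filter (· ∈ e)) = 2 := by
  induction e with
  | _ a b =>
    rw [mem_edgeFinset, mem_edgeSet] at he
    have hab : a ≠ b := he.ne
    have : (univ.filter (· ∈ s(a,b))) = {a, b} := by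
      ext v
      simp [Sym2.mem_iff]
    rw [this, card_pair hab]

theorem hall_orientation (G : SimpleGraph V) [DecidableRel G.Adj]
    (heul : ∀ v, Even (G.degree v)) :
    ∃ R : Finset (V × V),
      (∀ p ∈ R, G.Adj p.1 p.2) ∧
      (∀ x y, G.Adj x y → ((x, y) ∈ R ∨ (y, x) ∈ R)) ∧
      (∀ x y, (x, y) ∈ R → (y, x) ∉ R) ∧
      (∀ v, #(univ.filter fun w => (v, w) ∈ R) = G.degree v / 2) ∧
      (∀ v, #(univ.filter fun w => (w, v) ∈ R) = G.degree v / 2) := by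
  classical
  set ι := {e : Sym2 V // e ∈ G.edgeFinset} with hι
  set t : ι → Finset (V × ℕ) :=
    fun e => (univ.filter (· ∈ e.val)).biUnion
      (fun v => {v} ×ˢ Finset.range (G.degree v / 2)) with ht
  -- Hall's condition
  have hall : ∀ s : Finset ι, #s ≤ #(s.biUnion t) := by
    intro s
    set W : Finset V := s.biUnion (fun e => univ.filter (· ∈ e.val)) with hW
    have hbiU : s.biUnion t = W.biUnion (fun v => {v} ×ˢ Finset.range (G.degree v / 2)) := by
      ext p
      simp only [Finset.mem_biUnion, ht, hW, Finset.mem_filter, Finset.mem_product,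
        Finset.mem_singleton, Finset.mem_range, mem_univ, true_and]
      constructor
      · rintro ⟨e, hes, v, hv, hp1, hp2⟩
        exact ⟨v, ⟨e, hes, hv⟩, hp1, hp2⟩
      · rintro ⟨v, ⟨e, hes, hv⟩, hp1, hp2⟩
        exact ⟨e, hes, v, hv, hp1, hp2⟩
    have hcard : #(W.biUnion (fun v => {v} ×ˢ Finset.range (G.degree v / 2)))
        = ∑ v ∈ W, G.degree v / 2 := by
      rw [Finset.card_biUnion]
      · exact Finset.sum_congr rfl fun v _ => by
          rw [Finset.card_product, Finset.card_singleton, Finset.card_range, one_mul]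
      · intro a _ b _ hab
        simp only [Finset.disjoint_left, Finset.mem_product, Finset.mem_singleton]
        rintro ⟨p1, p2⟩ ⟨hp1, _⟩ ⟨hq1, _⟩
        exact hab (hp1 ▸ hq1 ▸ rfl)
    -- double counting
    have hdouble : 2 * #s ≤ ∑ v ∈ W, G.degree v := by
      have h1 : ∀ e ∈ s, #(W.filter (· ∈ (e : ι).val)) = 2 := by
        intro e hes
        have : W.filter (· ∈ e.val) = univ.filter (· ∈ e.val) := by
          ext v
          simp only [Finset.mem_filter, mem_univ, true_and, and_iff_right_iff_imp]
          intro hv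
          exact Finset.mem_biUnion.mpr ⟨e, hes, Finset.mem_filter.mpr ⟨mem_univ v, hv⟩⟩
        rw [this]
        exact endpoints_card G e.val e.property
      have h2 : ∑ e ∈ s, #(W.filter (· ∈ (e : ι).val)) = ∑ v ∈ W, #(s.filter fun e => v ∈ (e : ι).val) := by
        simp only [Finset.card_filter]
        exact Finset.sum_comm
      have h3 : ∀ v ∈ W, #(s.filter fun e => v ∈ (e : ι).val) ≤ G.degree v := by
        intro v _
        have hinj : Set.InjOn (fun e : ι => e.val) (s.filter fun e => v ∈ (e : ι).val) := by
          intro a _ b _ hab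
          exact Subtype.ext hab
        calc #(s.filter fun e => v ∈ (e : ι).val)
            = #((s.filter fun e => v ∈ (e : ι).val).image (fun e => e.val)) :=
              (Finset.card_image_of_injOn hinj).symm
          _ ≤ #(G.incidenceFinset v) := by
              apply Finset.card_le_card
              intro x hx
              simp only [Finset.mem_image, Finset.mem_filter] at hx
              obtain ⟨e, ⟨_, hv⟩, rfl⟩ := hx
              rw [mem_incidenceFinset]
              exact ⟨SimpleGraph.mem_edgeFinset.mp e.property, hv⟩
          _ = G.degree v := G.card_incidenceFinset_eq_degree v
      calc 2 * #s = ∑ e ∈ s, 2 := by rw [Finset.sum_const, smul_eq_mul, mul_comm]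
        _ = ∑ e ∈ s, #(W.filter (· ∈ (e : ι).val)) := (Finset.sum_congr rfl h1).symm
        _ = ∑ v ∈ W, #(s.filter fun e => v ∈ (e : ι).val) := h2
        _ ≤ ∑ v ∈ W, G.degree v := Finset.sum_le_sum h3
    have hWdeg : ∑ v ∈ W, G.degree v = 2 * ∑ v ∈ W, G.degree v / 2 := by
      rw [Finset.mul_sum]
      refine Finset.sum_congr rfl fun v _ => ?_
      obtain ⟨c, hc⟩ := heul v
      omega
    rw [hbiU, hcard]
    omega
  obtain ⟨f, hfinj, hf⟩ := (Finset.all_card_le_biUnion_card_iff_exists_injective t).mp hall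
  -- tail and slot facts
  have htail : ∀ e : ι, (f e).1 ∈ e.val ∧ (f e).2 < G.degree (f e).1 / 2 := by
    intro e
    have := hf e
    simp only [ht, Finset.mem_biUnion, Finset.mem_filter, Finset.mem_product,
      Finset.mem_singleton, Finset.mem_range, mem_univ, true_and] at this
    obtain ⟨v, hv, h1, h2⟩ := this
    subst h1
    exact ⟨hv, h2⟩
  set tl : ι → V := fun e => (f e).1 with htl
  set oth : ι → V := fun e => Sym2.Mem.other (htail e).1 with hoth
  have hspec : ∀ e : ι, s(tl e, oth e) = e.val := fun e => Sym2.other_spec (htail e).1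
  have hne : ∀ e : ι, tl e ≠ oth e := by
    intro e heq
    have hdiag : ¬ (e : ι).val.IsDiag :=
      G.not_isDiag_of_mem_edgeSet (SimpleGraph.mem_edgeFinset.mp e.property)
    have := Sym2.other_ne hdiag (htail e).1
    exact this heq.symm
  set R : Finset (V × V) := univ.image (fun e : ι => (tl e, oth e)) with hR
  have hmemR : ∀ x y, (x, y) ∈ R ↔ ∃ e : ι, tl e = x ∧ oth e = y := by
    intro x y
    simp only [hR, Finset.mem_image, mem_univ, true_and, Prod.mk.injEq]
  have hedge : ∀ (e : ι) (x y : V), tl e = x → oth e = y → e.val = s(x, y) := by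
    rintro e x y rfl rfl; exact (hspec e).symm
  have hadjR : ∀ p ∈ R, G.Adj p.1 p.2 := by
    rintro ⟨x, y⟩ hp
    obtain ⟨e, h1, h2⟩ := (hmemR x y).mp hp
    have := hedge e x y h1 h2
    have he : e.val ∈ G.edgeSet := SimpleGraph.mem_edgeFinset.mp e.property
    rw [this, SimpleGraph.mem_edgeSet] at he
    exact he
  -- injectivity of arc map
  have harcinj : ∀ e₁ e₂ : ι, tl e₁ = tl e₂ → oth e₁ = oth e₂ → e₁ = e₂ := by
    intro e₁ e₂ h1 h2
    apply Subtype.ext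
    rw [← hspec e₁, ← hspec e₂, h1, h2]
  -- out-degree counts (needed in both of the last two goals)
  have hub : ∀ u : V, #(univ.filter fun e : ι => tl e = u) ≤ G.degree u / 2 := by
    intro u
    have hinj2 : Set.InjOn (fun e : ι => (f e).2) (univ.filter fun e : ι => tl e = u) := by
      intro a ha b hb hab
      simp only [Finset.coe_filter, Set.mem_setOf_eq] at ha hb
      apply hfinj
      have h1 : (f a).1 = u := ha.2
      have h2 : (f b).1 = u := hb.2
      exact Prod.ext (h1.trans h2.symm) hab
    calc #(univ.filter fun e : ι => tl e = u)
        = #((univ.filter fun e : ι => tl e = u).image (fun e => (f e).2)) :=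
          (Finset.card_image_of_injOn hinj2).symm
      _ ≤ #(Finset.range (G.degree u / 2)) := by
          apply Finset.card_le_card
          intro i hi
          simp only [Finset.mem_image, Finset.mem_filter, mem_univ, true_and] at hi
          obtain ⟨e, he, rfl⟩ := hi
          rw [Finset.mem_range, ← he]
          exact (htail e).2
      _ = G.degree u / 2 := Finset.card_range _
  have hsum1 : ∑ u : V, #(univ.filter fun e : ι => tl e = u) = Fintype.card ι := by
    rw [← Finset.card_univ]
    exact (Finset.card_eq_sum_card_fiberwise (fun e _ => mem_univ (tl e))).symm
  have hsum2 : ∑ u : V, G.degree u / 2 = Fintype.card ι := by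
    have hhs : ∑ u : V, G.degree u = 2 * #G.edgeFinset := G.sum_degrees_eq_twice_card_edges
    have hcι : Fintype.card ι = #G.edgeFinset := Fintype.card_coe _
    have : ∑ u : V, G.degree u = 2 * ∑ u : V, G.degree u / 2 := by
      rw [Finset.mul_sum]
      refine Finset.sum_congr rfl fun u _ => ?_
      obtain ⟨c, hc⟩ := heul u
      omega
    omega
  have houtfib : ∀ u : V, #(univ.filter fun e : ι => tl e = u) = G.degree u / 2 := by
    intro u
    exact sum_eq_of_le_of_sum_eq (s := univ)
      (g := fun u => #(univ.filter fun e : ι => tl e = u)) (h := fun u => G.degree u / 2)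
      (fun u _ => hub u) (by rw [hsum1, hsum2]) u (mem_univ u)
  refine ⟨R, hadjR, ?_, ?_, ?_, ?_⟩
  · -- both directions
    intro x y hxy
    have hmem : s(x, y) ∈ G.edgeFinset := SimpleGraph.mem_edgeFinset.mpr (G.mem_edgeSet.mpr hxy)
    set e : ι := ⟨s(x, y), hmem⟩ with he
    have h1 : tl e ∈ s(x, y) := (htail e).1
    rw [Sym2.mem_iff] at h1
    rcases h1 with h1 | h1
    · left
      rw [hmemR]
      refine ⟨e, h1, ?_⟩
      have := hspec e
      rw [h1] at this
      exact (Sym2.congr_right.mp this)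
    · right
      rw [hmemR]
      refine ⟨e, h1, ?_⟩
      have := hspec e
      rw [h1] at this
      rw [Sym2.eq_swap] at this
      exact (Sym2.congr_left.mp this)
  · -- antisymmetry
    intro x y hxy hyx
    obtain ⟨e₁, h11, h12⟩ := (hmemR x y).mp hxy
    obtain ⟨e₂, h21, h22⟩ := (hmemR y x).mp hyx
    have he1 : e₁.val = s(x, y) := hedge e₁ x y h11 h12
    have he2 : e₂.val = s(y, x) := hedge e₂ y x h21 h22
    have : e₁ = e₂ := Subtype.ext (by rw [he1, he2, Sym2.eq_swap])
    rw [this] at h11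
    have : x = y := by rw [← h11, h21]
    have hadj := hadjR (x, y) hxy
    exact G.loopless.irrefl y (this ▸ hadj)
  · -- out-degrees
    intro v
    have hfib : univ.filter (fun w => (v, w) ∈ R) = (univ.filter fun e : ι => tl e = v).image oth := by
      ext w
      simp only [Finset.mem_filter, Finset.mem_image, mem_univ, true_and]
      rw [hmemR]
    have hinj : Set.InjOn oth (univ.filter fun e : ι => tl e = v) := by
      intro a ha b hb hab
      simp only [Finset.coe_filter, Set.mem_setOf_eq] at ha hb
      exact harcinj a b (ha.2.trans hb.2.symm) hab
    rw [hfib, Finset.card_image_of_injOn hinj]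
    exact houtfib v
  · -- in-degrees
    intro v
    have hfib2 : univ.filter (fun w => (w, v) ∈ R) = (univ.filter fun e : ι => oth e = v).image tl := by
      ext w
      simp only [Finset.mem_filter, Finset.mem_image, mem_univ, true_and]
      rw [hmemR]
      constructor
      · rintro ⟨e, h1, h2⟩; exact ⟨e, h2, h1⟩
      · rintro ⟨e, h1, h2⟩; exact ⟨e, h2, h1⟩
    have hinj3 : Set.InjOn tl (univ.filter fun e : ι => oth e = v) := by
      intro a ha b hb hab
      simp only [Finset.coe_filter, Set.mem_setOf_eq] at ha hb
      exact harcinj a b hab (ha.2.trans hb.2.symm)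
    have hcard2 : #(univ.filter (fun w => (w, v) ∈ R)) = #(univ.filter fun e : ι => oth e = v) := by
      rw [hfib2, Finset.card_image_of_injOn hinj3]
    have hunion : (univ.filter fun e : ι => v ∈ e.val)
        = (univ.filter fun e : ι => tl e = v) ∪ (univ.filter fun e : ι => oth e = v) := by
      ext e
      simp only [Finset.mem_filter, Finset.mem_union, mem_univ, true_and]
      rw [← hspec e, Sym2.mem_iff]
      constructor
      · rintro (h | h)
        · exact Or.inl h.symm
        · exact Or.inr h.symm
      · rintro (h | h)
        · exact Or.inl h.symm
        · exact Or.inr h.symm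
    have hdisj : Disjoint (univ.filter fun e : ι => tl e = v) (univ.filter fun e : ι => oth e = v) := by
      simp only [Finset.disjoint_left, Finset.mem_filter, mem_univ, true_and]
      intro e h1 h2
      exact hne e (h1.trans h2.symm)
    have hinc : #(univ.filter fun e : ι => v ∈ e.val) = G.degree v := by
      rw [← G.card_incidenceFinset_eq_degree v]
      apply Finset.card_bij (fun (e : ι) _ => e.val)
      · intro e he
        simp only [Finset.mem_filter, mem_univ, true_and] at he
        rw [G.incidenceFinset_eq_filter, Finset.mem_filter]
        exact ⟨e.property, he⟩
      · intro a _ b _ hab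
        exact Subtype.ext hab
      · intro e' he'
        rw [G.incidenceFinset_eq_filter, Finset.mem_filter] at he'
        exact ⟨⟨e', he'.1⟩, Finset.mem_filter.mpr ⟨mem_univ _, he'.2⟩, rfl⟩
    have hsum : #(univ.filter fun e : ι => tl e = v) + #(univ.filter fun e : ι => oth e = v)
        = G.degree v := by
      rw [← Finset.card_union_of_disjoint hdisj, ← hunion, hinc]
    have hout := houtfib v
    obtain ⟨cdeg, hcdeg⟩ := heul v
    rw [hcard2]
    omega

end OrientSec

theorem eulerian_bipartite_intervalThickness [Fintype V] [DecidableEq V]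
    (G : SimpleGraph V) [DecidableRel G.Adj]
    (hbip : G.Colorable 2) (heul : ∀ v, Even (G.degree v)) :
    intervalThickness G ≤ (G.maxDegree + 3) / 4 := by
  classical
  apply Nat.sInf_le
  show IntervalDecomposition G ((G.maxDegree + 3) / 4)
  obtain ⟨C⟩ := hbip
  obtain ⟨R, hRadj, hRex, hRanti, hRout, hRin⟩ := hall_orientation G heul
  set K : ℕ := (G.maxDegree + 1) / 2 with hK
  set t : ℕ := (G.maxDegree + 3) / 4 with htdef
  have hdeg_le : ∀ v, G.degree v / 2 ≤ K := by
    intro v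
    have := G.degree_le_maxDegree v
    omega
  -- the doubly K-regular matrix
  set m : V → V → ℕ := fun x y =>
    (if (x, y) ∈ R then 1 else 0) + (if x = y then K - G.degree x / 2 else 0) with hm
  have hrow : ∀ x, ∑ y, m x y = K := by
    intro x
    have h1 : ∑ y, (if (x, y) ∈ R then (1:ℕ) else 0) = G.degree x / 2 := by
      rw [← Finset.card_filter]
      exact hRout x
    have h2 : ∑ y, (if x = y then K - G.degree x / 2 else 0) = K - G.degree x / 2 := by
      rw [Finset.sum_ite_eq]
      simp
    rw [hm, Finset.sum_add_distrib, h1, h2]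
    have := hdeg_le x
    omega
  have hcol : ∀ y, ∑ x, m x y = K := by
    intro y
    have h1 : ∑ x, (if (x, y) ∈ R then (1:ℕ) else 0) = G.degree y / 2 := by
      rw [← Finset.card_filter]
      exact hRin y
    have h2 : ∑ x, (if x = y then K - G.degree x / 2 else 0) = K - G.degree y / 2 := by
      rw [Finset.sum_ite_eq']
      simp
    rw [hm, Finset.sum_add_distrib, h1, h2]
    have := hdeg_le y
    omega
  obtain ⟨π, hπ⟩ := birkhoff_perm K m hrow hcol
  have hRne : ∀ {x y : V}, (x, y) ∈ R → x ≠ y := fun h => (hRadj _ h).ne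
  have hm1 : ∀ {x y : V}, (x, y) ∈ R → m x y = 1 := by
    intro x y h
    rw [hm]
    simp only [if_pos h, if_neg (hRne h)]
  -- unique class for each arc
  have hclsExU : ∀ {x y : V}, (x, y) ∈ R → ∃! j : Fin K, π j x = y := by
    intro x y h
    have h1 : #(Finset.univ.filter fun j : Fin K => π j x = y) = 1 := by
      rw [← hπ x y]
      exact hm1 h
    obtain ⟨j₀, hj₀⟩ := Finset.card_eq_one.mp h1
    refine ⟨j₀, ?_, ?_⟩
    · have : j₀ ∈ Finset.univ.filter fun j : Fin K => π j x = y := by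
        rw [hj₀]; exact Finset.mem_singleton_self j₀
      exact (Finset.mem_filter.mp this).2
    · intro j hj
      have : j ∈ Finset.univ.filter fun j : Fin K => π j x = y :=
        Finset.mem_filter.mpr ⟨Finset.mem_univ j, hj⟩
      rw [hj₀, Finset.mem_singleton] at this
      exact this
  have hmoved : ∀ (j : Fin K) (x : V), π j x ≠ x → (x, π j x) ∈ R := by
    intro j x hx
    have h1 : j ∈ Finset.univ.filter fun j' : Fin K => π j' x = π j x :=
      Finset.mem_filter.mpr ⟨Finset.mem_univ j, rfl⟩
    have h2 : 1 ≤ m x (π j x) := by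
      rw [hπ x (π j x)]
      exact Finset.card_pos.mpr ⟨j, h1⟩
    simp only [hm] at h2
    by_contra hnR
    rw [if_neg hnR, if_neg (fun hh : x = π j x => hx hh.symm)] at h2
    omega
  -- the class function
  set cls : V × V → ℕ := fun p =>
    if h : ∃ j : Fin K, π j p.1 = p.2 then h.choose.val else 0 with hcls
  have hclsval : ∀ {x y : V}, (x, y) ∈ R → ∃ j : Fin K, π j x = y ∧ cls (x, y) = j.val := by
    intro x y h
    obtain ⟨j, hj, huniq⟩ := hclsExU h
    have hex : ∃ j : Fin K, π j x = y := ⟨j, hj⟩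
    have h1 : cls (x, y) = hex.choose.val := by rw [hcls]; exact dif_pos hex
    have h2 : hex.choose = j := huniq _ hex.choose_spec
    exact ⟨j, hj, by rw [h1, h2]⟩
  have hcls_lt : ∀ {x y : V}, (x, y) ∈ R → cls (x, y) < K := by
    intro x y h
    obtain ⟨j, _, hje⟩ := hclsval h
    rw [hje]
    exact j.isLt
  have hcls_spec : ∀ {x y : V} (_ : (x, y) ∈ R) (hlt : cls (x, y) < K),
      π ⟨cls (x, y), hlt⟩ x = y := by
    intro x y h hlt
    obtain ⟨j, hj, hje⟩ := hclsval h
    have hfin : (⟨cls (x, y), hlt⟩ : Fin K) = j := Fin.ext hje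
    rw [hfin]
    exact hj
  have hclsuniq : ∀ {x y : V}, (x, y) ∈ R → ∀ j : Fin K, π j x = y → (j : ℕ) = cls (x, y) := by
    intro x y h j hj
    obtain ⟨j', hj', hje⟩ := hclsval h
    obtain ⟨j'', _, huniq⟩ := hclsExU h
    rw [huniq j hj, ← huniq j' hj', hje]
  -- sides and offsets
  set ofs : V → ℕ := fun v => if C v = 0 then 2 else 1 with hofs
  have hofs_range : ∀ v, ofs v = 1 ∨ ofs v = 2 := by
    intro v
    rw [hofs]
    by_cases h : C v = 0 <;> simp [h]
  have hofs_adj : ∀ {x y : V}, G.Adj x y → ofs x + ofs y = 3 := by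
    intro x y hxy
    have hne := C.valid hxy
    have : ∀ a b : Fin 2, a ≠ b →
        ((if a = 0 then (2:ℕ) else 1) + (if b = 0 then 2 else 1) = 3) := by decide
    exact this (C x) (C y) hne
  -- the coloring
  set c : Sym2 V → ℕ := Sym2.lift ⟨fun x y =>
    if (x, y) ∈ R then 4 * (cls (x, y) / 2) + 2 * (cls (x, y) % 2) + ofs x
    else if (y, x) ∈ R then 4 * (cls (y, x) / 2) + 2 * (cls (y, x) % 2) + ofs y
    else 0, by
      intro x y
      dsimp only
      by_cases hxy : (x, y) ∈ R
      · rw [if_pos hxy, if_neg (hRanti _ _ hxy), if_pos hxy]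
      · by_cases hyx : (y, x) ∈ R
        · rw [if_neg hxy, if_pos hyx, if_pos hyx]
        · rw [if_neg hxy, if_neg hyx, if_neg hyx, if_neg hxy]⟩ with hc
  -- color computation lemmas
  have hcval_out : ∀ {x y : V}, (x, y) ∈ R →
      c s(x, y) = 4 * (cls (x, y) / 2) + 2 * (cls (x, y) % 2) + ofs x := by
    intro x y h
    rw [hc, Sym2.lift_mk]
    dsimp only
    rw [if_pos h]
  have hcval_in : ∀ {x y : V}, (x, y) ∈ R →
      c s(y, x) = 4 * (cls (x, y) / 2) + 2 * (cls (x, y) % 2) + ofs x := by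
    intro x y h
    rw [hc, Sym2.lift_mk]
    dsimp only
    rw [if_neg (hRanti _ _ h), if_pos h]
  -- the parts
  set HH : Fin t → SimpleGraph V := fun i =>
    SimpleGraph.fromRel (fun x y => (x, y) ∈ R ∧ cls (x, y) / 2 = (i : ℕ)) with hHH
  have hcls_part : ∀ {x y : V}, (x, y) ∈ R → cls (x, y) / 2 < t := by
    intro x y h
    have h1 := hcls_lt h
    omega
  -- structure of edges of a part at a vertex
  have hstruct : ∀ (i : Fin t) (v : V) (e : Sym2 V), e ∈ (HH i).edgeSet → v ∈ e →
      ∃ (w : V) (j : ℕ) (hj : j < K), e = s(v, w) ∧ j / 2 = (i : ℕ) ∧ π ⟨j, hj⟩ v ≠ v ∧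
        ((π ⟨j, hj⟩ v = w ∧ c e = 4 * (i : ℕ) + 2 * (j % 2) + ofs v) ∨
         (π ⟨j, hj⟩ w = v ∧ c e = 4 * (i : ℕ) + 2 * (j % 2) + (3 - ofs v))) := by
    intro i v e he hv
    obtain ⟨w, rfl⟩ := Sym2.mem_iff_exists.mp hv
    rw [SimpleGraph.mem_edgeSet, hHH, SimpleGraph.fromRel_adj] at he
    obtain ⟨hvw, hdisj⟩ := he
    rcases hdisj with ⟨hR, hi⟩ | ⟨hR, hi⟩
    · refine ⟨w, cls (v, w), hcls_lt hR, rfl, hi, ?_, Or.inl ⟨hcls_spec hR (hcls_lt hR), ?_⟩⟩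
      · rw [hcls_spec hR (hcls_lt hR)]
        exact fun hh => hvw hh.symm
      · rw [hcval_out hR, hi]
    · have hadj : G.Adj v w := (hRadj _ hR).symm
      have hofsw : ofs w = 3 - ofs v := by
        have h3 := hofs_adj hadj
        have h4 := hofs_range v
        omega
      refine ⟨w, cls (w, v), hcls_lt hR, rfl, hi, ?_, Or.inr ⟨hcls_spec hR (hcls_lt hR), ?_⟩⟩
      · intro hfix
        have hspec := hcls_spec hR (hcls_lt hR)
        have : w = v := (π ⟨cls (w, v), hcls_lt hR⟩).injective (by rw [hspec, hfix])
        exact hvw this.symm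
      · rw [hcval_in hR, hi, hofsw]
  -- every present class contributes both of its two colors at a vertex
  have hpresent : ∀ (i : Fin t) (v : V) (j : ℕ) (hj : j < K), j / 2 = (i : ℕ) →
      π ⟨j, hj⟩ v ≠ v → ∀ r : ℕ, (r = 1 ∨ r = 2) →
      (4 * (i : ℕ) + 2 * (j % 2) + r) ∈ colorsAt (HH i) c v := by
    intro i v j hj hji hmv r hr
    set w := π ⟨j, hj⟩ v with hw
    have hR1 : (v, w) ∈ R := hmoved ⟨j, hj⟩ v hmv
    have hcls1 : cls (v, w) = j := (hclsuniq hR1 ⟨j, hj⟩ rfl).symm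
    set u := (π ⟨j, hj⟩).symm v with hu
    have hu1 : π ⟨j, hj⟩ u = v := Equiv.apply_symm_apply _ _
    have hune : u ≠ v := by
      intro hh
      rw [hh] at hu1
      exact hmv hu1
    have hR2 : (u, v) ∈ R := by
      have := hmoved ⟨j, hj⟩ u (by rw [hu1]; exact hune.symm)
      rwa [hu1] at this
    have hcls2 : cls (u, v) = j := (hclsuniq hR2 ⟨j, hj⟩ hu1).symm
    have hofsu : ofs u = 3 - ofs v := by
      have hadj2 : G.Adj u v := hRadj _ hR2
      have h3 := hofs_adj hadj2
      have h4 := hofs_range v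
      omega
    have he1 : s(v, w) ∈ (HH i).edgeSet := by
      rw [SimpleGraph.mem_edgeSet, hHH, SimpleGraph.fromRel_adj]
      exact ⟨hRne hR1, Or.inl ⟨hR1, by rw [hcls1, hji]⟩⟩
    have he2 : s(v, u) ∈ (HH i).edgeSet := by
      rw [SimpleGraph.mem_edgeSet, hHH, SimpleGraph.fromRel_adj]
      exact ⟨hune.symm, Or.inr ⟨hR2, by rw [hcls2, hji]⟩⟩
    have hc1 : c s(v, w) = 4 * (i : ℕ) + 2 * (j % 2) + ofs v := by
      rw [hcval_out hR1, hcls1, hji]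
    have hc2 : c s(v, u) = 4 * (i : ℕ) + 2 * (j % 2) + (3 - ofs v) := by
      rw [hcval_in hR2, hcls2, hji, hofsu]
    have hrange := hofs_range v
    by_cases hvr : ofs v = r
    · exact ⟨s(v, w), he1, Sym2.mem_mk_left v w, by rw [hc1, hvr]⟩
    · have : 3 - ofs v = r := by omega
      exact ⟨s(v, u), he2, Sym2.mem_mk_left v u, by rw [hc2, this]⟩
  refine ⟨HH, ?_, ?_, ?_⟩
  · -- subgraphs
    intro i x y hxy
    rw [hHH, SimpleGraph.fromRel_adj] at hxy
    rcases hxy.2 with ⟨hR, _⟩ | ⟨hR, _⟩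
    · exact hRadj _ hR
    · exact (hRadj _ hR).symm
  · -- interval colorability
    intro i
    refine ⟨c, ?_, ?_, ?_⟩
    · -- proper
      intro e₁ he₁ e₂ he₂ hne hshare
      obtain ⟨v, hv1, hv2⟩ := hshare
      obtain ⟨w₁, j₁, hj₁, rfl, hi₁, hmv₁, hcase₁⟩ := hstruct i v e₁ he₁ hv1
      obtain ⟨w₂, j₂, hj₂, rfl, hi₂, hmv₂, hcase₂⟩ := hstruct i v e₂ he₂ hv2
      intro heq
      have hrange := hofs_range v
      have hm₁ : j₁ % 2 < 2 := Nat.mod_lt _ (by norm_num)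
      have hm₂ : j₂ % 2 < 2 := Nat.mod_lt _ (by norm_num)
      rcases hcase₁ with ⟨hs₁, hc₁⟩ | ⟨hs₁, hc₁⟩ <;>
        rcases hcase₂ with ⟨hs₂, hc₂⟩ | ⟨hs₂, hc₂⟩
      · have hjeq : j₁ = j₂ := by rw [hc₁, hc₂] at heq; omega
        have hfin : (⟨j₁, hj₁⟩ : Fin K) = ⟨j₂, hj₂⟩ := Fin.ext hjeq
        rw [hfin] at hs₁
        exact hne (by rw [← hs₁, ← hs₂])
      · rw [hc₁, hc₂] at heq; omega
      · rw [hc₁, hc₂] at heq; omega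
      · have hjeq : j₁ = j₂ := by rw [hc₁, hc₂] at heq; omega
        have hfin : (⟨j₁, hj₁⟩ : Fin K) = ⟨j₂, hj₂⟩ := Fin.ext hjeq
        rw [hfin] at hs₁
        have : w₁ = w₂ := (π ⟨j₂, hj₂⟩).injective (by rw [hs₁, hs₂])
        exact hne (by rw [this])
    · -- positivity
      intro e he
      induction e with
      | _ x y =>
        obtain ⟨w, j, hj, _, _, _, hcase⟩ := hstruct i x s(x, y) he (Sym2.mem_mk_left x y)
        have hrange := hofs_range x
        rcases hcase with ⟨_, hcv⟩ | ⟨_, hcv⟩ <;> rw [hcv] <;> omega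
    · -- intervals
      intro v a ha b hb k hak hkb
      obtain ⟨e₁, he₁, hv₁, hce₁⟩ := ha
      obtain ⟨e₂, he₂, hv₂, hce₂⟩ := hb
      obtain ⟨w₁, j₁, hj₁, rfl, hi₁, hmv₁, hcase₁⟩ := hstruct i v e₁ he₁ hv₁
      obtain ⟨w₂, j₂, hj₂, rfl, hi₂, hmv₂, hcase₂⟩ := hstruct i v e₂ he₂ hv₂
      have hrange := hofs_range v
      have hm₁ : j₁ % 2 < 2 := Nat.mod_lt _ (by norm_num)
      have hm₂ : j₂ % 2 < 2 := Nat.mod_lt _ (by norm_num)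
      have hra : ∃ r, (r = 1 ∨ r = 2) ∧ a = 4 * (i : ℕ) + 2 * (j₁ % 2) + r := by
        rcases hcase₁ with ⟨_, hcv⟩ | ⟨_, hcv⟩
        · exact ⟨ofs v, hofs_range v, by rw [← hce₁, hcv]⟩
        · exact ⟨3 - ofs v, by omega, by rw [← hce₁, hcv]⟩
      have hrb : ∃ r, (r = 1 ∨ r = 2) ∧ b = 4 * (i : ℕ) + 2 * (j₂ % 2) + r := by
        rcases hcase₂ with ⟨_, hcv⟩ | ⟨_, hcv⟩
        · exact ⟨ofs v, hofs_range v, by rw [← hce₂, hcv]⟩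
        · exact ⟨3 - ofs v, by omega, by rw [← hce₂, hcv]⟩
      obtain ⟨ra, hra1, hra2⟩ := hra
      obtain ⟨rb, hrb1, hrb2⟩ := hrb
      by_cases hpp : j₁ % 2 = j₂ % 2
      · have : k = a ∨ k = b := by omega
        rcases this with rfl | rfl
        · exact ⟨s(v, w₁), he₁, hv₁, hce₁⟩
        · exact ⟨s(v, w₂), he₂, hv₂, hce₂⟩
      · have hk : k = 4 * (i : ℕ) + 2 * (j₁ % 2) + 1 ∨ k = 4 * (i : ℕ) + 2 * (j₁ % 2) + 2 ∨
            k = 4 * (i : ℕ) + 2 * (j₂ % 2) + 1 ∨ k = 4 * (i : ℕ) + 2 * (j₂ % 2) + 2 := by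
          omega
        rcases hk with rfl | rfl | rfl | rfl
        · exact hpresent i v j₁ hj₁ hi₁ hmv₁ 1 (Or.inl rfl)
        · exact hpresent i v j₁ hj₁ hi₁ hmv₁ 2 (Or.inr rfl)
        · exact hpresent i v j₂ hj₂ hi₂ hmv₂ 1 (Or.inl rfl)
        · exact hpresent i v j₂ hj₂ hi₂ hmv₂ 2 (Or.inr rfl)
  · -- uniqueness of parts
    intro e he
    induction e with
    | _ x y =>
      rw [SimpleGraph.mem_edgeSet] at he
      have huniqpart : ∀ (z w : V) (hzw : (z, w) ∈ R) (i : Fin t),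
          s(z, w) ∈ (HH i).edgeSet → (i : ℕ) = cls (z, w) / 2 := by
        intro z w hzw i hmem
        rw [SimpleGraph.mem_edgeSet, hHH, SimpleGraph.fromRel_adj] at hmem
        rcases hmem.2 with ⟨_, hii⟩ | ⟨hR', _⟩
        · exact hii.symm
        · exact absurd hR' (hRanti _ _ hzw)
      rcases hRex x y he with hR | hR
      · refine ⟨⟨cls (x, y) / 2, hcls_part hR⟩, ?_, ?_⟩
        · simp only [SimpleGraph.mem_edgeSet, hHH, SimpleGraph.fromRel_adj]
          exact ⟨hRne hR, Or.inl ⟨hR, trivial⟩⟩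
        · intro i hi
          exact Fin.ext (huniqpart x y hR i hi)
      · refine ⟨⟨cls (y, x) / 2, hcls_part hR⟩, ?_, ?_⟩
        · simp only [SimpleGraph.mem_edgeSet, hHH, SimpleGraph.fromRel_adj]
          exact ⟨(hRne hR).symm, Or.inr ⟨hR, trivial⟩⟩
        · intro i hi
          have : s(y, x) ∈ (HH i).edgeSet := by rwa [Sym2.eq_swap] at hi
          exact Fin.ext (huniqpart y x hR i this)
end
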